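/- arXiv:1505.00232 — 4 statements merged into one kernel-verified Lean document; each statement's English description precedes it below -/
import Mathlib

section
/- Let 1 < q ≤ 2, p = q/(q−1), and γ > 0. Let X be a real Banach space whose modulus of smoothness satisfies ρ(u) ≤ γ u^q for all u ≥ 0, let D be a dictionary in X, let (t_n)_{n≥1} be a weakness sequence, (δ_n)_{n≥0} a perturbation sequence, and (η_n)_{n≥1} a bounded error sequence. Suppose there exists a strictly increasing sequence of indices (n_k)_{k≥1} such that ∑_{k=1}^∞ t_{n_k+1}^p = ∞, δ_{n_k} = o(t_{n_k+1}^p) as k → ∞, and η_{n_k} = o(t_{n_k+1}^p) as k → ∞. Then for every f ∈ X and every realization of the AWCGA of f with these sequences, ‖f_n‖ → 0. -/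
open Filter

noncomputable section

variable {X : Type} [NormedAddCommGroup X] [NormedSpace ℝ X]

/-- A dictionary: a symmetric set of unit-norm elements with dense linear span. -/
def IsDictionary (D : Set X) : Prop :=
  (∀ g ∈ D, ‖g‖ = 1) ∧ (∀ g ∈ D, -g ∈ D) ∧
    (Submodule.span ℝ D).topologicalClosure = ⊤

/-- The modulus of smoothness of `X`:
`ρ(u) = sup_{‖x‖=‖y‖=1} (‖x+uy‖+‖x-uy‖)/2 - 1`. -/
def modulusOfSmoothness (X : Type) [NormedAddCommGroup X] [NormedSpace ℝ X]
    (u : ℝ) : ℝ :=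
  sSup {r : ℝ | ∃ x y : X, ‖x‖ = 1 ∧ ‖y‖ = 1 ∧ r = (‖x + u • y‖ + ‖x - u • y‖) / 2 - 1}

/-- A weakness sequence: `0 ≤ t n ≤ 1` for `n ≥ 1`. -/
def IsWeaknessSeq (t : ℕ → ℝ) : Prop := ∀ n, 1 ≤ n → 0 ≤ t n ∧ t n ≤ 1

/-- A perturbation sequence: `0 ≤ δ n ≤ 1` for `n ≥ 0`. -/
def IsPerturbationSeq (δ : ℕ → ℝ) : Prop := ∀ n, 0 ≤ δ n ∧ δ n ≤ 1

/-- An error sequence: `η n ≥ 0` for `n ≥ 1`. -/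
def IsErrorSeq (η : ℕ → ℝ) : Prop := ∀ n, 1 ≤ n → 0 ≤ η n

/-- `a k = o(b k)` as `k → ∞`: for every `ε > 0` eventually `a k ≤ ε * b k`. -/
def IsLittleO (a b : ℕ → ℝ) : Prop := ∀ ε : ℝ, 0 < ε → ∃ N, ∀ k, N ≤ k → a k ≤ ε * b k

/-- `E_n`: the best approximation error of `f` from `Φ_n = span{φ_1, …, φ_n}`. -/
def approxError (f : X) (φ : ℕ → X) (n : ℕ) : ℝ :=
  sInf ((fun g => ‖f - g‖) '' (Submodule.span ℝ (φ '' Set.Icc 1 n) : Set X))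

/-- A realization of the AWCGA of `f` with respect to a dictionary `D`,
a weakness sequence `t`, a perturbation sequence `δ` and an error sequence `η`.
Indices are shifted so that step `n ≥ 1` of the algorithm is encoded by
the fields applied at `n - 1` (for `F`) and at `n` (for `φ`, `G`, `fs`). -/
structure AWCGARealization (D : Set X) (f : X) (t δ η : ℕ → ℝ) where
  F : ℕ → (X →L[ℝ] ℝ)
  φ : ℕ → X
  G : ℕ → X
  fs : ℕ → X
  fs_zero : fs 0 = f
  F_norm : ∀ n : ℕ, ‖F n‖ ≤ 1
  F_norming : ∀ n : ℕ, F n (fs n) ≥ (1 - δ n) * ‖fs n‖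
  φ_mem : ∀ n : ℕ, φ (n + 1) ∈ D
  φ_greedy : ∀ n : ℕ, F n (φ (n + 1)) ≥ t (n + 1) * sSup ((fun g => F n g) '' D)
  G_mem : ∀ n : ℕ, G (n + 1) ∈ Submodule.span ℝ (φ '' Set.Icc 1 (n + 1))
  G_near : ∀ n : ℕ, ‖f - G (n + 1)‖ ≤ (1 + η (n + 1)) * approxError f φ (n + 1)
  fs_succ : ∀ n : ℕ, fs (n + 1) = f - G (n + 1)

lemma clm_le_norm (F : X →L[ℝ] ℝ) (hF : ‖F‖ ≤ 1) (x : X) : F x ≤ ‖x‖ := by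
  have h := F.le_opNorm x
  have h2 : F x ≤ ‖F x‖ := le_abs_self _
  nlinarith [norm_nonneg x]

lemma modulus_bound {q γ : ℝ} (hρ : ∀ u : ℝ, 0 ≤ u → modulusOfSmoothness X u ≤ γ * u ^ q)
    {v w : X} (hv : v ≠ 0) (hw : ‖w‖ = 1) {u : ℝ} (hu : 0 ≤ u) :
    ‖v + (u * ‖v‖) • w‖ + ‖v - (u * ‖v‖) • w‖ ≤ 2 * ‖v‖ * (1 + γ * u ^ q) := by
  have ha : (0:ℝ) < ‖v‖ := norm_pos_iff.mpr hv
  set x := (‖v‖:ℝ)⁻¹ • v with hxdef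
  have hx1 : ‖x‖ = 1 := norm_smul_inv_norm hv
  have key : (‖x + u • w‖ + ‖x - u • w‖) / 2 - 1 ≤ γ * u ^ q := by
    refine le_trans ?_ (hρ u hu)
    apply le_csSup
    · refine ⟨u, ?_⟩
      rintro r ⟨x', y', hx', hy', rfl⟩
      have hn : ‖u • y'‖ = u := by rw [norm_smul, hy', Real.norm_eq_abs, abs_of_nonneg hu, mul_one]
      have h1 : ‖x' + u • y'‖ ≤ 1 + u := by
        calc ‖x' + u • y'‖ ≤ ‖x'‖ + ‖u • y'‖ := norm_add_le _ _
        _ = 1 + u := by rw [hx', hn]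
      have h2 : ‖x' - u • y'‖ ≤ 1 + u := by
        calc ‖x' - u • y'‖ ≤ ‖x'‖ + ‖u • y'‖ := norm_sub_le _ _
        _ = 1 + u := by rw [hx', hn]
      linarith
    · exact ⟨x, w, hx1, hw, rfl⟩
  have hvx : ‖v‖ • x = v := by rw [hxdef, smul_smul, mul_inv_cancel₀ ha.ne', one_smul]
  have e1v : v + (u * ‖v‖) • w = ‖v‖ • (x + u • w) := by
    rw [smul_add, hvx, smul_smul, mul_comm]
  have e2v : v - (u * ‖v‖) • w = ‖v‖ • (x - u • w) := by
    rw [smul_sub, hvx, smul_smul, mul_comm]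
  have e1 : ‖v + (u * ‖v‖) • w‖ = ‖v‖ * ‖x + u • w‖ := by
    rw [e1v, norm_smul, Real.norm_eq_abs, abs_of_pos ha]
  have e2 : ‖v - (u * ‖v‖) • w‖ = ‖v‖ * ‖x - u • w‖ := by
    rw [e2v, norm_smul, Real.norm_eq_abs, abs_of_pos ha]
  rw [e1, e2]
  have : ‖x + u • w‖ + ‖x - u • w‖ ≤ 2 * (1 + γ * u ^ q) := by linarith
  nlinarith [ha]

lemma approxError_bddBelow (f : X) (φ : ℕ → X) (n : ℕ) :
    BddBelow ((fun g => ‖f - g‖) '' (Submodule.span ℝ (φ '' Set.Icc 1 n) : Set X)) :=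
  ⟨0, by rintro r ⟨g, _, rfl⟩; positivity⟩

lemma approxError_set_nonempty (f : X) (φ : ℕ → X) (n : ℕ) :
    ((fun g => ‖f - g‖) '' (Submodule.span ℝ (φ '' Set.Icc 1 n) : Set X)).Nonempty :=
  ⟨_, Set.mem_image_of_mem _ (SetLike.mem_coe.mpr (Submodule.zero_mem _))⟩

lemma approxError_le (f : X) (φ : ℕ → X) (n : ℕ) {g : X}
    (hg : g ∈ Submodule.span ℝ (φ '' Set.Icc 1 n)) : approxError f φ n ≤ ‖f - g‖ :=
  csInf_le (approxError_bddBelow f φ n) ⟨g, hg, rfl⟩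

lemma approxError_nonneg (f : X) (φ : ℕ → X) (n : ℕ) : 0 ≤ approxError f φ n :=
  le_csInf (approxError_set_nonempty f φ n) (by rintro r ⟨g, _, rfl⟩; positivity)

lemma approxError_antitone (f : X) (φ : ℕ → X) {m n : ℕ} (h : m ≤ n) :
    approxError f φ n ≤ approxError f φ m := by
  apply le_csInf (approxError_set_nonempty f φ m)
  rintro r ⟨g, hg, rfl⟩
  exact approxError_le f φ n
    (Submodule.span_mono (Set.image_mono (Set.Icc_subset_Icc_right h)) hg)

lemma dict_bddAbove {D : Set X} (hDu : ∀ g ∈ D, ‖g‖ = 1) (F : X →L[ℝ] ℝ) (hF : ‖F‖ ≤ 1) :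
    BddAbove ((fun g => F g) '' D) := by
  refine ⟨1, ?_⟩
  rintro s ⟨g, hg, rfl⟩
  have := F.le_opNorm g
  rw [hDu g hg, mul_one] at this
  have h2 : F g ≤ ‖F g‖ := le_abs_self _
  linarith [le_trans h2 this]

lemma dict_sSup_nonneg {D : Set X} (hDu : ∀ g ∈ D, ‖g‖ = 1) (hDs : ∀ g ∈ D, -g ∈ D)
    (hDne : D.Nonempty) (F : X →L[ℝ] ℝ) (hF : ‖F‖ ≤ 1) :
    0 ≤ sSup ((fun g => F g) '' D) := by
  obtain ⟨g, hg⟩ := hDne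
  have h1 : F g ≤ sSup ((fun g => F g) '' D) :=
    le_csSup (dict_bddAbove hDu F hF) ⟨g, hg, rfl⟩
  have h2 : F (-g) ≤ sSup ((fun g => F g) '' D) :=
    le_csSup (dict_bddAbove hDu F hF) ⟨-g, hDs g hg, rfl⟩
  rw [map_neg] at h2
  linarith

lemma dict_span_bound {D : Set X} (hDu : ∀ g ∈ D, ‖g‖ = 1) (hDs : ∀ g ∈ D, -g ∈ D)
    (F : X →L[ℝ] ℝ) (hF : ‖F‖ ≤ 1) (c : X →₀ ℝ) (hc : ↑c.support ⊆ D) :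
    F (c.sum fun i r => r • i) ≤ (∑ i ∈ c.support, |c i|) * sSup ((fun g => F g) '' D) := by
  have hmap : F (c.sum fun i r => r • i) = ∑ i ∈ c.support, c i * F i := by
    rw [map_finsuppSum]
    apply Finset.sum_congr rfl
    intro i _
    simp
  rw [hmap, Finset.sum_mul]
  apply Finset.sum_le_sum
  intro i hi
  have hiD : i ∈ D := hc hi
  have h1 : F i ≤ sSup ((fun g => F g) '' D) :=
    le_csSup (dict_bddAbove hDu F hF) ⟨i, hiD, rfl⟩
  have h2 : -F i ≤ sSup ((fun g => F g) '' D) := by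
    have := le_csSup (dict_bddAbove hDu F hF) ⟨-i, hDs i hiD, rfl⟩
    simpa using this
  calc c i * F i ≤ |c i * F i| := le_abs_self _
  _ = |c i| * |F i| := abs_mul _ _
  _ ≤ |c i| * sSup ((fun g => F g) '' D) := by
      apply mul_le_mul_of_nonneg_left _ (abs_nonneg _)
      exact abs_le.mpr ⟨by linarith, h1⟩


set_option maxHeartbeats 2000000 in
lemma key_step {X : Type} [NormedAddCommGroup X] [NormedSpace ℝ X]
    {q p γ : ℝ} (hq1 : 1 < q) (hp : p = q / (q - 1)) (hγ : 0 < γ)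
    (hρ : ∀ u : ℝ, 0 ≤ u → modulusOfSmoothness X u ≤ γ * u ^ q)
    {D : Set X} (hDu : ∀ g ∈ D, ‖g‖ = 1) (hDs : ∀ g ∈ D, -g ∈ D) (hDne : D.Nonempty)
    {t δ η : ℕ → ℝ} (ht : IsWeaknessSeq t) (hδ : IsPerturbationSeq δ) (hη : IsErrorSeq η)
    {f : X} (r : AWCGARealization D f t δ η)
    {E0 B Gbar A A0 : ℝ} (hE0pos : 0 < E0) (hBpos : 0 < B) (hGbarpos : 0 < Gbar)
    (hA : 0 ≤ A) (hA0def : A0 = A + 1)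
    {v : X} (hvf' : ‖f - v‖ ≤ E0 / 8)
    {c : X →₀ ℝ} (hcsupp : ↑c.support ⊆ D) (hcsum : (c.sum fun mi r => r • mi) = v)
    (hAdef : A = ∑ i ∈ c.support, |c i|)
    (P lam0 d c0 κ εs : ℝ)
    (hPdef : P = 2 * γ * B * Gbar ^ q * (E0⁻¹) ^ q)
    (hlam0pos : 0 < lam0) (hlam0P : P * lam0 ^ (q - 1) = E0 / 16)
    (hddef : d = E0 * E0 / (8 * A0 * γ * B)) (hc0pos : 0 < c0) (hc0q : c0 ^ (q - 1) = d)
    (hκdef : κ = c0 * (E0 * E0) / (4 * A0))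
    (hεs1 : εs ≤ κ / (6 * (‖f‖ + 1))) (hεs2 : εs ≤ E0 * lam0 / (32 * B))
    (hεs3 : εs ≤ E0 / (8 * B)) (hεspos : 0 < εs)
    (m : ℕ) (hm1 : 1 ≤ m)
    (hfsm : r.fs m = f - r.G m)
    (hGm : r.G m ∈ Submodule.span ℝ (r.φ '' Set.Icc 1 m))
    (hEm0 : E0 ≤ approxError f r.φ m)
    (hEmf : approxError f r.φ m ≤ ‖f‖)
    (hEle : approxError f r.φ m ≤ ‖r.fs m‖)
    (hfsle : ‖r.fs m‖ ≤ (1 + η m) * approxError f r.φ m)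
    (hfsB : ‖r.fs m‖ ≤ B) (hGbarm : ‖r.G m‖ ≤ Gbar)
    (hδk : δ m ≤ εs * t (m + 1) ^ p) (hηk : η m ≤ εs * t (m + 1) ^ p) :
    approxError f r.φ (m + 1) ≤ approxError f r.φ m - κ / 2 * t (m + 1) ^ p := by
  have hA0pos : 0 < A0 := by rw [hA0def]; linarith
  set Em := approxError f r.φ m with hEmdef
  set a := ‖r.fs m‖ with hadef
  set Fm := r.F m with hFmdef
  set tk := t (m + 1) with htkdef
  set S := sSup ((fun g => Fm g) '' D) with hSdef
  have hq0 : (0:ℝ) < q - 1 := by linarith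
  have hq0' : (0:ℝ) < q := by linarith
  have hp0 : 0 < p := by rw [hp]; positivity
  have hpq : p / q + 1 = p := by rw [hp]; field_simp; ring
  have ht1 := ht (m + 1) (by omega)
  have htk0 : 0 ≤ tk := ht1.1
  have htk1 : tk ≤ 1 := ht1.2
  have htp0 : 0 ≤ tk ^ p := Real.rpow_nonneg htk0 p
  have htp1 : tk ^ p ≤ 1 := Real.rpow_le_one htk0 htk1 hp0.le
  have hδ0 : 0 ≤ δ m := (hδ m).1
  have hδ1 : δ m ≤ 1 := (hδ m).2
  have hη0 : 0 ≤ η m := hη m hm1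
  have haE0 : E0 ≤ a := le_trans hEm0 hEle
  have ha0 : 0 < a := lt_of_lt_of_le hE0pos haE0
  have hfsne : r.fs m ≠ 0 := by
    rw [← norm_pos_iff]; exact ha0
  have hEmnn : 0 ≤ Em := le_trans hE0pos.le hEm0
  have hFm1 : ‖Fm‖ ≤ 1 := r.F_norm m
  have hFnorm : Fm (r.fs m) ≥ (1 - δ m) * a := r.F_norming m
  have hεsB : εs * B ≤ E0 / 8 := by
    have := mul_le_mul_of_nonneg_right hεs3 hBpos.le
    calc εs * B ≤ E0 / (8 * B) * B := this
    _ = E0 / 8 := by field_simp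
  have htpes : εs * tk ^ p ≤ εs := by
    calc εs * tk ^ p ≤ εs * 1 := mul_le_mul_of_nonneg_left htp1 hεspos.le
    _ = εs := mul_one εs
  have hδsmall : δ m ≤ εs := le_trans hδk htpes
  have hηsmall : η m ≤ εs := le_trans hηk htpes
  have hδa : δ m * a ≤ E0 / 8 := by
    have h1 : δ m * a ≤ εs * B :=
      mul_le_mul hδsmall hfsB (norm_nonneg _) hεspos.le
    linarith
  -- Step A : |Fm (r.G m)| ≤ E0 / 8
  have hFG : |Fm (r.G m)| ≤ E0 / 8 := by
    by_cases hG0 : r.G m = 0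
    · rw [hG0, map_zero, abs_zero]; positivity
    · set Gn := ‖r.G m‖ with hGndef
      have hGn0 : 0 < Gn := norm_pos_iff.mpr hG0
      set u0 : ℝ := lam0 * Gn / a with hu0def
      have hu0 : 0 ≤ u0 := by positivity
      set w : X := (Gn : ℝ)⁻¹ • r.G m with hwdef
      have hw1 : ‖w‖ = 1 := norm_smul_inv_norm hG0
      have hsm := modulus_bound hρ hfsne hw1 hu0
      have hscal : (u0 * a) • w = lam0 • r.G m := by
        rw [hwdef, smul_smul, hu0def, div_mul_cancel₀ _ (ne_of_gt ha0),
          mul_assoc, mul_inv_cancel₀ (ne_of_gt hGn0), mul_one]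
      rw [hscal] at hsm
      have hmemsp : ∀ s : ℝ, s • r.G m ∈ Submodule.span ℝ (r.φ '' Set.Icc 1 m) :=
        fun s => Submodule.smul_mem _ s hGm
      have hplus : r.fs m + lam0 • r.G m = f - (1 - lam0) • r.G m := by
        rw [hfsm, sub_smul, one_smul]; abel
      have hminus : r.fs m - lam0 • r.G m = f - (1 + lam0) • r.G m := by
        rw [hfsm, add_smul, one_smul]; abel
      have hEmlow : (1 - η m) * a ≤ Em := by
        rcases le_or_gt (η m) 1 with hc | hc
        · nlinarith only [mul_le_mul_of_nonneg_left hfsle (by linarith : (0:ℝ) ≤ 1 - η m),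
            mul_nonneg (mul_nonneg hη0 hη0) hEmnn]
        · nlinarith only [mul_nonneg (by linarith : (0:ℝ) ≤ η m - 1) ha0.le, hEmnn]
      have hlb1 : (1 - η m) * a ≤ ‖r.fs m + lam0 • r.G m‖ := by
        rw [hplus]
        exact le_trans hEmlow (approxError_le f r.φ m (hmemsp (1 - lam0)))
      have hlb2 : (1 - η m) * a ≤ ‖r.fs m - lam0 • r.G m‖ := by
        rw [hminus]
        exact le_trans hEmlow (approxError_le f r.φ m (hmemsp (1 + lam0)))
      have hub1 : ‖r.fs m + lam0 • r.G m‖ ≤ 2 * a * (1 + γ * u0 ^ q) - (1 - η m) * a := by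
        linarith
      have hub2 : ‖r.fs m - lam0 • r.G m‖ ≤ 2 * a * (1 + γ * u0 ^ q) - (1 - η m) * a := by
        linarith
      have hf1 : Fm (r.fs m) + lam0 * Fm (r.G m) ≤ ‖r.fs m + lam0 • r.G m‖ := by
        have := clm_le_norm Fm hFm1 (r.fs m + lam0 • r.G m)
        rwa [map_add, map_smul, smul_eq_mul] at this
      have hf2 : Fm (r.fs m) - lam0 * Fm (r.G m) ≤ ‖r.fs m - lam0 • r.G m‖ := by
        have := clm_le_norm Fm hFm1 (r.fs m - lam0 • r.G m)
        rwa [map_sub, map_smul, smul_eq_mul] at this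
      have hR1 : lam0 * Fm (r.G m) ≤ 2 * γ * a * u0 ^ q + (η m + δ m) * a := by
        nlinarith only [hf1, hub1, hFnorm]
      have hR2 : -(lam0 * Fm (r.G m)) ≤ 2 * γ * a * u0 ^ q + (η m + δ m) * a := by
        nlinarith only [hf2, hub2, hFnorm]
      -- bound the RHS
      have hu0le : u0 ≤ lam0 * Gbar / E0 := by
        rw [hu0def]
        exact div_le_div₀ (by positivity)
          (mul_le_mul_of_nonneg_left hGbarm hlam0pos.le) hE0pos haE0
      have hu0q : u0 ^ q ≤ lam0 ^ q * (Gbar ^ q * (E0⁻¹) ^ q) := by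
        have h1 := Real.rpow_le_rpow hu0 hu0le hq0'.le
        have h2 : lam0 * Gbar / E0 = lam0 * (Gbar * E0⁻¹) := by ring
        rw [h2, Real.mul_rpow hlam0pos.le (by positivity),
          Real.mul_rpow hGbarpos.le (by positivity)] at h1
        exact h1
      have hu0q0 : 0 ≤ u0 ^ q := Real.rpow_nonneg hu0 q
      have hGq0 : 0 < Gbar ^ q := Real.rpow_pos_of_pos hGbarpos q
      have hEq0 : 0 < (E0⁻¹ : ℝ) ^ q := Real.rpow_pos_of_pos (by positivity) q
      have hlamq0 : 0 < lam0 ^ q := Real.rpow_pos_of_pos hlam0pos q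
      have hterm1 : 2 * γ * a * u0 ^ q ≤ P * lam0 ^ q := by
        rw [hPdef]
        have hmm := mul_le_mul hu0q hfsB ha0.le (by positivity)
        nlinarith only [mul_le_mul_of_nonneg_left hmm (by positivity : (0:ℝ) ≤ 2 * γ)]
      have hlamsplit : lam0 ^ q = lam0 ^ (q - 1) * lam0 := by
        rw [show q = q - 1 + 1 by ring, Real.rpow_add hlam0pos, Real.rpow_one]
        ring_nf
      have hterm1' : 2 * γ * a * u0 ^ q ≤ E0 / 16 * lam0 := by
        rw [hlamsplit] at hterm1
        calc 2 * γ * a * u0 ^ q ≤ P * (lam0 ^ (q - 1) * lam0) := hterm1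
        _ = P * lam0 ^ (q - 1) * lam0 := by ring
        _ = E0 / 16 * lam0 := by rw [hlam0P]
      have hterm2 : (η m + δ m) * a ≤ E0 / 16 * lam0 := by
        have h1 : (η m + δ m) * a ≤ 2 * εs * B := by
          have := mul_le_mul (by linarith : η m + δ m ≤ 2 * εs) hfsB (norm_nonneg _)
            (by positivity : (0:ℝ) ≤ 2 * εs)
          linarith only [this]
        have h2 : 2 * εs * B ≤ E0 * lam0 / 16 := by
          have h2a := mul_le_mul_of_nonneg_right hεs2 hBpos.le
          have h2b : E0 * lam0 / (32 * B) * B = E0 * lam0 / 32 := by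
            field_simp
          linarith only [h2a, h2b]
        linarith only [h1, h2]
      have habs : lam0 * |Fm (r.G m)| ≤ lam0 * (E0 / 8) := by
        have h1 : |lam0 * Fm (r.G m)| ≤ 2 * γ * a * u0 ^ q + (η m + δ m) * a :=
          abs_le.mpr ⟨by linarith only [hR2], hR1⟩
        have h2 : |lam0 * Fm (r.G m)| = lam0 * |Fm (r.G m)| := by
          rw [abs_mul, abs_of_pos hlam0pos]
        linarith only [h1, h2, hterm1', hterm2]
      exact le_of_mul_le_mul_left habs hlam0pos
  -- Step B : E0 / (2 * A0) ≤ S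
  have hS0 : 0 ≤ S := dict_sSup_nonneg hDu hDs hDne Fm hFm1
  have hAS : Fm v ≤ A * S := by
    rw [← hcsum, hAdef]
    exact dict_span_bound hDu hDs Fm hFm1 c hcsupp
  have hFv : (1 - δ m) * a - E0 / 8 - E0 / 8 ≤ Fm v := by
    have hveq : v = r.fs m + r.G m - (f - v) := by rw [hfsm]; abel
    have h1 : Fm v = Fm (r.fs m) + Fm (r.G m) - Fm (f - v) := by
      conv_lhs => rw [hveq]
      rw [map_sub, map_add]
    have h2 : Fm (f - v) ≤ E0 / 8 := le_trans (clm_le_norm Fm hFm1 _) hvf'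
    have h3 : -(E0 / 8) ≤ Fm (r.G m) := by
      have := neg_abs_le (Fm (r.G m))
      linarith
    linarith
  have hSge : E0 / (2 * A0) ≤ S := by
    have h1 : A * S ≤ A0 * S := by rw [hA0def]; nlinarith only [hS0]
    have h2 : a - E0 / 8 ≤ (1 - δ m) * a := by linarith only [hδa]
    have h3 : E0 / 2 ≤ A0 * S := by linarith only [hFv, hAS, h1, h2, haE0, hE0pos]
    rw [div_le_iff₀ (by positivity)]
    nlinarith only [h3]
  -- Step C : main recursion
  set u : ℝ := c0 * tk ^ (p / q) with hudef
  have htpq0 : 0 ≤ tk ^ (p / q) := Real.rpow_nonneg htk0 _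
  have hu : 0 ≤ u := mul_nonneg hc0pos.le htpq0
  have hφD : r.φ (m + 1) ∈ D := r.φ_mem m
  have hφ1 : ‖r.φ (m + 1)‖ = 1 := hDu _ hφD
  have hsm2 := modulus_bound hρ hfsne hφ1 hu
  have hgreedy : Fm (r.φ (m + 1)) ≥ tk * S := r.φ_greedy m
  have hlb : (1 - δ m) * a + u * a * (tk * S) ≤ ‖r.fs m + (u * a) • r.φ (m + 1)‖ := by
    have h1 := clm_le_norm Fm hFm1 (r.fs m + (u * a) • r.φ (m + 1))
    rw [map_add, map_smul, smul_eq_mul] at h1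
    have h2 : u * a * (tk * S) ≤ u * a * Fm (r.φ (m + 1)) :=
      mul_le_mul_of_nonneg_left hgreedy (by positivity)
    linarith only [h1, h2, hFnorm]
  have hEnext : approxError f r.φ (m + 1) ≤ ‖r.fs m - (u * a) • r.φ (m + 1)‖ := by
    have hmem : r.G m + (u * a) • r.φ (m + 1) ∈
        Submodule.span ℝ (r.φ '' Set.Icc 1 (m + 1)) := by
      apply Submodule.add_mem
      · exact Submodule.span_mono
          (Set.image_mono (Set.Icc_subset_Icc_right (by omega))) hGm
      · exact Submodule.smul_mem _ _
          (Submodule.subset_span ⟨m + 1, Set.mem_Icc.mpr ⟨by omega, le_rfl⟩, rfl⟩)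
    have heq : r.fs m - (u * a) • r.φ (m + 1) = f - (r.G m + (u * a) • r.φ (m + 1)) := by
      rw [hfsm]; abel
    rw [heq]
    exact approxError_le f r.φ (m + 1) hmem
  have hmain : approxError f r.φ (m + 1) ≤
      2 * a * (1 + γ * u ^ q) - (1 - δ m) * a - u * a * (tk * S) := by
    linarith only [hEnext, hsm2, hlb]
  have huq : u ^ q = c0 ^ q * tk ^ p := by
    rw [hudef, Real.mul_rpow hc0pos.le htpq0, ← Real.rpow_mul htk0,
      div_mul_cancel₀ p (ne_of_gt hq0')]
  have hc0qq : c0 ^ q = d * c0 := by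
    have hsplit : c0 ^ q = c0 ^ (q - 1) * c0 := by
      rw [show q = q - 1 + 1 by ring, Real.rpow_add hc0pos, Real.rpow_one]
      ring_nf
    rw [hsplit, hc0q]
  have hpen : 2 * γ * a * u ^ q ≤ κ * tk ^ p := by
    rw [huq, hc0qq, hddef, hκdef]
    have hcoef : 2 * γ * a * (E0 * E0 / (8 * A0 * γ * B) * c0) ≤
        c0 * (E0 * E0) / (4 * A0) := by
      have heq2 : 2 * γ * a * (E0 * E0 / (8 * A0 * γ * B) * c0) =
          a * (c0 * (E0 * E0) / (4 * A0)) / B := by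
        field_simp
        ring
      rw [heq2, div_le_iff₀ hBpos]
      have hX : 0 ≤ c0 * (E0 * E0) / (4 * A0) := by positivity
      nlinarith only [mul_le_mul_of_nonneg_left hfsB hX]
    calc 2 * γ * a * (E0 * E0 / (8 * A0 * γ * B) * c0 * tk ^ p)
        = 2 * γ * a * (E0 * E0 / (8 * A0 * γ * B) * c0) * tk ^ p := by ring
    _ ≤ c0 * (E0 * E0) / (4 * A0) * tk ^ p := mul_le_mul_of_nonneg_right hcoef htp0
  have hutk : u * tk = c0 * tk ^ p := by
    rw [hudef, mul_assoc]
    congr 1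
    calc tk ^ (p / q) * tk = tk ^ (p / q) * tk ^ (1 : ℝ) := by rw [Real.rpow_one]
    _ = tk ^ (p / q + 1) := (Real.rpow_add' htk0 (by rw [hpq]; exact ne_of_gt hp0)).symm
    _ = tk ^ p := by rw [hpq]
  have hgain : 2 * κ * tk ^ p ≤ u * a * (tk * S) := by
    have h1 : u * a * (tk * (E0 / (2 * A0))) ≤ u * a * (tk * S) :=
      mul_le_mul_of_nonneg_left (mul_le_mul_of_nonneg_left hSge htk0) (by positivity)
    have h2 : u * E0 * (tk * (E0 / (2 * A0))) ≤ u * a * (tk * (E0 / (2 * A0))) := by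
      apply mul_le_mul_of_nonneg_right _ (by positivity)
      exact mul_le_mul_of_nonneg_left haE0 hu
    have h3 : u * E0 * (tk * (E0 / (2 * A0))) = 2 * κ * tk ^ p := by
      rw [hκdef]
      calc u * E0 * (tk * (E0 / (2 * A0))) = u * tk * (E0 * E0) / (2 * A0) := by ring
      _ = c0 * tk ^ p * (E0 * E0) / (2 * A0) := by rw [hutk]
      _ = 2 * (c0 * (E0 * E0) / (4 * A0)) * tk ^ p := by field_simp; ring
    linarith only [h1, h2, h3]
  have hstep1 : approxError f r.φ (m + 1) ≤ (1 + δ m) * a - κ * tk ^ p := by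
    linarith only [hmain, hpen, hgain]
  have hfinal : (1 + δ m) * a ≤ Em + κ / 2 * tk ^ p := by
    have h1 : (1 + δ m) * a ≤ (1 + δ m) * ((1 + η m) * Em) :=
      mul_le_mul_of_nonneg_left hfsle (by linarith)
    have h2 : (1 + δ m) * ((1 + η m) * Em) = Em + (δ m + η m + δ m * η m) * Em := by ring
    have h3 : (δ m + η m + δ m * η m) * Em ≤ (δ m + 2 * η m) * ‖f‖ := by
      apply mul_le_mul _ hEmf hEmnn (by linarith only [hδ0, hη0])
      nlinarith only [mul_le_mul_of_nonneg_right hδ1 hη0]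
    have h4 : (δ m + 2 * η m) * ‖f‖ ≤ 3 * (εs * tk ^ p) * (‖f‖ + 1) := by
      have h5 : δ m + 2 * η m ≤ 3 * (εs * tk ^ p) := by linarith only [hδk, hηk]
      nlinarith only [mul_le_mul_of_nonneg_right h5 (norm_nonneg f),
        mul_nonneg hεspos.le htp0]
    have h6 : 3 * (εs * tk ^ p) * (‖f‖ + 1) ≤ κ / 2 * tk ^ p := by
      have h7 : εs * (6 * (‖f‖ + 1)) ≤ κ := by
        rw [← le_div_iff₀ (by positivity)]
        exact hεs1
      nlinarith only [mul_le_mul_of_nonneg_right h7 htp0]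
    linarith only [h1, h2, h3, h4, h6]
  linarith only [hstep1, hfinal]

set_option maxHeartbeats 1000000 in
/-- Sufficient conditions for convergence of the AWCGA (Theorem 1.3, sufficiency). -/
theorem stmt_0 {X : Type} [NormedAddCommGroup X] [NormedSpace ℝ X] [CompleteSpace X]
    (q p γ : ℝ) (hq1 : 1 < q) (hq2 : q ≤ 2) (hp : p = q / (q - 1)) (hγ : 0 < γ)
    (hρ : ∀ u : ℝ, 0 ≤ u → modulusOfSmoothness X u ≤ γ * u ^ q)
    (D : Set X) (hD : IsDictionary D)
    (t δ η : ℕ → ℝ) (ht : IsWeaknessSeq t) (hδ : IsPerturbationSeq δ)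
    (hη : IsErrorSeq η) (hηbdd : ∃ C : ℝ, ∀ m, 1 ≤ m → η m ≤ C)
    (n : ℕ → ℕ) (hmono : StrictMono n) (hn1 : ∀ k, 1 ≤ n k)
    (hsum : ¬ Summable (fun k => t (n k + 1) ^ p))
    (hδo : IsLittleO (fun k => δ (n k)) (fun k => t (n k + 1) ^ p))
    (hηo : IsLittleO (fun k => η (n k)) (fun k => t (n k + 1) ^ p))
    (f : X) (r : AWCGARealization D f t δ η) :
    Tendsto (fun m => ‖r.fs m‖) atTop (nhds 0) := by
  obtain ⟨hDu, hDs, hDcl⟩ := hD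
  obtain ⟨C, hC⟩ := hηbdd
  have hC0 : 0 ≤ C := le_trans (hη 1 le_rfl) (hC 1 le_rfl)
  set E : ℕ → ℝ := approxError f r.φ with hEdef
  -- exponent facts
  have hq0 : (0:ℝ) < q - 1 := by linarith
  have hq0' : (0:ℝ) < q := by linarith
  have hp1 : 1 < p := by
    rw [hp, lt_div_iff₀ hq0]; linarith
  have hp0 : 0 < p := by linarith
  have hpq : p / q + 1 = p := by
    rw [hp]; field_simp; ring
  have hpq0 : 0 < p / q := by positivity
  -- basic facts about the realization
  have hfs : ∀ m, 1 ≤ m → r.fs m = f - r.G m := by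
    intro m hm
    obtain ⟨j, rfl⟩ : ∃ j, m = j + 1 := ⟨m - 1, by omega⟩
    exact r.fs_succ j
  have hGmem : ∀ m, 1 ≤ m → r.G m ∈ Submodule.span ℝ (r.φ '' Set.Icc 1 m) := by
    intro m hm
    obtain ⟨j, rfl⟩ : ∃ j, m = j + 1 := ⟨m - 1, by omega⟩
    exact r.G_mem j
  have hEle : ∀ m, 1 ≤ m → E m ≤ ‖r.fs m‖ := by
    intro m hm
    rw [hfs m hm]
    exact approxError_le f r.φ m (hGmem m hm)
  have hfsle : ∀ m, 1 ≤ m → ‖r.fs m‖ ≤ (1 + η m) * E m := by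
    intro m hm
    obtain ⟨j, rfl⟩ : ∃ j, m = j + 1 := ⟨m - 1, by omega⟩
    rw [r.fs_succ j]
    exact r.G_near j
  have hEf : ∀ m, E m ≤ ‖f‖ := by
    intro m
    have := approxError_le f r.φ m (Submodule.zero_mem _)
    rwa [sub_zero] at this
  have hE0le : ∀ m, 0 ≤ E m := fun m => approxError_nonneg f r.φ m
  have hEanti : ∀ m m', m ≤ m' → E m' ≤ E m := fun m m' h => approxError_antitone f r.φ h
  by_cases hsmall : ∀ ε, 0 < ε → ∃ m, 1 ≤ m ∧ E m < ε
  · -- convergence case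
    rw [Metric.tendsto_atTop]
    intro ε hε
    have hε' : 0 < ε / (1 + C) := by positivity
    obtain ⟨m₀, hm₀1, hm₀⟩ := hsmall (ε / (1 + C)) hε'
    refine ⟨m₀, fun m hm => ?_⟩
    have hm1 : 1 ≤ m := le_trans hm₀1 hm
    have h1 : ‖r.fs m‖ ≤ (1 + η m) * E m := hfsle m hm1
    have h2 : (1 + η m) * E m ≤ (1 + C) * E m :=
      mul_le_mul_of_nonneg_right (by linarith [hC m hm1]) (hE0le m)
    have h3 : E m ≤ E m₀ := hEanti m₀ m hm
    have h4 : (1 + C) * E m ≤ (1 + C) * E m₀ :=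
      mul_le_mul_of_nonneg_left h3 (by linarith)
    have h5 : (1 + C) * E m₀ < ε := by
      rw [← lt_div_iff₀' (by linarith : (0:ℝ) < 1 + C)]
      exact hm₀
    rw [Real.dist_eq, sub_zero, abs_of_nonneg (norm_nonneg _)]
    linarith
  · push_neg at hsmall
    obtain ⟨E0, hE0pos, hE0⟩ := hsmall
    exfalso
    have hE0' : ∀ m, 1 ≤ m → E0 ≤ E m := hE0
    have hfE0 : E0 ≤ ‖f‖ := le_trans (hE0' 1 le_rfl) (hEf 1)
    -- bounds
    set B : ℝ := (1 + C) * ‖f‖ + 1 with hBdef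
    have hBpos : 0 < B := by positivity
    have hfsB : ∀ m, 1 ≤ m → ‖r.fs m‖ ≤ B := by
      intro m hm
      have h1 := hfsle m hm
      have h2 : (1 + η m) * E m ≤ (1 + C) * ‖f‖ := by
        apply mul_le_mul (by linarith [hC m hm]) (hEf m) (hE0le m) (by linarith)
      linarith
    have hfsE0 : ∀ m, 1 ≤ m → E0 ≤ ‖r.fs m‖ := fun m hm => le_trans (hE0' m hm) (hEle m hm)
    set Gbar : ℝ := ‖f‖ + B with hGbardef
    have hGbarpos : 0 < Gbar := by positivity
    have hGbar : ∀ m, 1 ≤ m → ‖r.G m‖ ≤ Gbar := by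
      intro m hm
      have : r.G m = f - r.fs m := by rw [hfs m hm]; abel
      rw [this]
      calc ‖f - r.fs m‖ ≤ ‖f‖ + ‖r.fs m‖ := norm_sub_le _ _
      _ ≤ Gbar := by have := hfsB m hm; rw [hGbardef]; linarith
    -- density: approximant v
    have hfcl : f ∈ closure (Submodule.span ℝ D : Set X) := by
      rw [← Submodule.topologicalClosure_coe]
      rw [hDcl]
      trivial
    obtain ⟨v, hv, hvf⟩ := Metric.mem_closure_iff.mp hfcl (E0 / 8) (by positivity)
    rw [dist_comm, dist_eq_norm] at hvf
    have hvf' : ‖f - v‖ ≤ E0 / 8 := by rw [norm_sub_rev]; exact hvf.le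
    obtain ⟨c, hcsupp, hcsum⟩ := Submodule.mem_span_set.mp hv
    set A : ℝ := ∑ i ∈ c.support, |c i| with hAdef
    have hA0 : 0 ≤ A := Finset.sum_nonneg fun i _ => abs_nonneg _
    set A0 : ℝ := A + 1 with hA0def
    have hA0pos : 0 < A0 := by linarith
    -- constants
    set P : ℝ := 2 * γ * B * Gbar ^ q * (E0⁻¹) ^ q with hPdef
    have hPpos : 0 < P := by
      have h1 : (0:ℝ) < Gbar ^ q := Real.rpow_pos_of_pos hGbarpos q
      have h2 : (0:ℝ) < (E0⁻¹) ^ q := Real.rpow_pos_of_pos (by positivity) q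
      positivity
    set lam0 : ℝ := (E0 / (16 * P)) ^ (1 / (q - 1)) with hlam0def
    have hlam0pos : 0 < lam0 := Real.rpow_pos_of_pos (by positivity) _
    have hlam0P : P * lam0 ^ (q - 1) = E0 / 16 := by
      rw [hlam0def, ← Real.rpow_mul (by positivity), one_div,
        inv_mul_cancel₀ (ne_of_gt hq0), Real.rpow_one]
      field_simp
    set d : ℝ := E0 * E0 / (8 * A0 * γ * B) with hddef
    have hdpos : 0 < d := by positivity
    set c0 : ℝ := d ^ (1 / (q - 1)) with hc0def
    have hc0pos : 0 < c0 := Real.rpow_pos_of_pos hdpos _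
    have hc0q : c0 ^ (q - 1) = d := by
      rw [hc0def, ← Real.rpow_mul hdpos.le, one_div,
        inv_mul_cancel₀ (ne_of_gt hq0), Real.rpow_one]
    set κ : ℝ := c0 * (E0 * E0) / (4 * A0) with hκdef
    have hκpos : 0 < κ := by positivity
    set εs : ℝ := min (κ / (6 * (‖f‖ + 1))) (min (E0 * lam0 / (32 * B)) (E0 / (8 * B)))
      with hεsdef
    have hεspos : 0 < εs := by
      apply lt_min (by positivity) (lt_min (by positivity) (by positivity))
    have hεs1 : εs ≤ κ / (6 * (‖f‖ + 1)) := min_le_left _ _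
    have hεs2 : εs ≤ E0 * lam0 / (32 * B) := le_trans (min_le_right _ _) (min_le_left _ _)
    have hεs3 : εs ≤ E0 / (8 * B) := le_trans (min_le_right _ _) (min_le_right _ _)
    have hDne : D.Nonempty := by
      rcases Set.eq_empty_or_nonempty D with h | h
      · exfalso
        simp only [h, Submodule.span_empty, Submodule.mem_bot, SetLike.mem_coe] at hv
        rw [hv, sub_zero] at hvf'
        linarith
      · exact h
    -- the key one-step estimate
    have key : ∀ m, 1 ≤ m → δ m ≤ εs * t (m + 1) ^ p → η m ≤ εs * t (m + 1) ^ p →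
        E (m + 1) ≤ E m - κ / 2 * t (m + 1) ^ p := by
      intro m hm1 hδk hηk
      exact key_step hq1 hp hγ hρ hDu hDs hDne ht hδ hη r hE0pos hBpos hGbarpos hA0 hA0def
        hvf' hcsupp hcsum hAdef P lam0 d c0 κ εs hPdef hlam0pos hlam0P hddef hc0pos hc0q
        hκdef hεs1 hεs2 hεs3 hεspos m hm1 (hfs m hm1) (hGmem m hm1) (hE0' m hm1) (hEf m)
        (hEle m hm1) (hfsle m hm1) (hfsB m hm1) (hGbar m hm1) hδk hηk
    -- apply along the subsequence
    obtain ⟨N1, hN1⟩ := hδo εs hεspos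
    obtain ⟨N2, hN2⟩ := hηo εs hεspos
    set K : ℕ := max N1 N2 with hKdef
    have step : ∀ k, K ≤ k → E (n k + 1) ≤ E (n k) - κ / 2 * t (n k + 1) ^ p := by
      intro k hk
      exact key (n k) (hn1 k) (hN1 k (le_trans (le_max_left _ _) hk))
        (hN2 k (le_trans (le_max_right _ _) hk))
    have hT0 : ∀ k, 0 ≤ t (n k + 1) ^ p := by
      intro k
      exact Real.rpow_nonneg (ht (n k + 1) (by omega)).1 p
    have tele : ∀ j, E (n (K + j)) ≤
        E (n K) - κ / 2 * ∑ i ∈ Finset.Ico K (K + j), t (n i + 1) ^ p := by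
      intro j
      induction j with
      | zero => simp
      | succ j ih =>
        have h1 : n (K + j) + 1 ≤ n (K + j + 1) := hmono (by omega)
        have h2 : E (n (K + j + 1)) ≤ E (n (K + j) + 1) := hEanti _ _ h1
        have h3 := step (K + j) (by omega)
        have hidx : K + (j + 1) = K + j + 1 := by omega
        rw [hidx, Finset.sum_Ico_succ_top (by omega : K ≤ K + j)]
        linarith
    have hbdd : ∀ M, ∑ i ∈ Finset.range M, t (n i + 1) ^ p ≤
        (∑ i ∈ Finset.range K, t (n i + 1) ^ p) + E (n K) * (2 / κ) := by
      intro M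
      rcases le_or_gt M K with hMK | hKM
      · have h1 : ∑ i ∈ Finset.range M, t (n i + 1) ^ p ≤
            ∑ i ∈ Finset.range K, t (n i + 1) ^ p :=
          Finset.sum_le_sum_of_subset_of_nonneg
            (Finset.range_subset_range.mpr hMK) (fun i _ _ => hT0 i)
        have h2 : 0 ≤ E (n K) * (2 / κ) := mul_nonneg (hE0le _) (by positivity)
        linarith
      · obtain ⟨j, rfl⟩ : ∃ j, M = K + j := ⟨M - K, by omega⟩
        have h1 := tele j
        have h2 : 0 ≤ E (n (K + j)) := hE0le _
        have h3 : κ / 2 * ∑ i ∈ Finset.Ico K (K + j), t (n i + 1) ^ p ≤ E (n K) := by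
          linarith
        have h4 : ∑ i ∈ Finset.Ico K (K + j), t (n i + 1) ^ p ≤ E (n K) * (2 / κ) := by
          rw [← le_div_iff₀' (by positivity : (0:ℝ) < κ / 2)] at h3
          have heq : E (n K) / (κ / 2) = E (n K) * (2 / κ) := by
            rw [div_div_eq_mul_div, mul_div_assoc]
          linarith
        have h5 := Finset.sum_range_add_sum_Ico (fun i => t (n i + 1) ^ p)
          (by omega : K ≤ K + j)
        linarith
    exact hsum (summable_of_sum_range_le hT0 hbdd)
end
end

section
/- Let (t_n)_{n≥1} be a weakness sequence, (δ_n)_{n≥0} a perturbation sequence, and (η_n)_{n≥1} a bounded error sequence, and let 1 < q ≤ 2 and p = q/(q−1). Suppose that for every strictly increasing sequence of indices (n_k)_{k≥1} at least one of the following fails: ∑_{k=1}^∞ t_{n_k+1}^p = ∞, δ_{n_k} = o(t_{n_k+1}^p), η_{n_k} = o(t_{n_k+1}^p). Then in the real Banach space ℓ_q of q-summable real sequences there exist a dictionary D, an element f ∈ ℓ_q, and a realization of the AWCGA of f with these sequences such that ‖f_n‖ does not tend to 0. -/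
open Filter

noncomputable section

variable {X : Type} [NormedAddCommGroup X] [NormedSpace ℝ X]

/-- The space `ℓ_q` of `q`-summable real sequences. -/
abbrev ellq (q : ℝ) := lp (fun _ : ℕ => ℝ) (ENNReal.ofReal q)

section AuxLemmas
set_option linter.unusedSectionVars false
set_option linter.unusedVariables false

open Filter

variable {q : ℝ} [Fact (1 ≤ ENNReal.ofReal q)]

lemma awcga_toReal (hq0 : 0 < q) : (ENNReal.ofReal q).toReal = q :=
  ENNReal.toReal_ofReal hq0.le

lemma awcga_toReal_pos (hq0 : 0 < q) : 0 < (ENNReal.ofReal q).toReal := by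
  rw [awcga_toReal hq0]; exact hq0

lemma awcga_summable_coord (hq0 : 0 < q) (x : ellq q) :
    Summable fun j => |x j| ^ q := by
  have := (lp.memℓp x).summable (awcga_toReal_pos hq0)
  simpa [awcga_toReal hq0, Real.norm_eq_abs] using this

lemma awcga_norm_eq (hq0 : 0 < q) (x : ellq q) :
    ‖x‖ = (∑' j, |x j| ^ q) ^ (1/q) := by
  have := lp.norm_eq_tsum_rpow (awcga_toReal_pos hq0) x
  simpa [awcga_toReal hq0, Real.norm_eq_abs] using this

lemma awcga_norm_rpow (hq0 : 0 < q) (x : ellq q) :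
    ‖x‖ ^ q = ∑' j, |x j| ^ q := by
  have := lp.norm_rpow_eq_tsum (awcga_toReal_pos hq0) x
  simpa [awcga_toReal hq0, Real.norm_eq_abs] using this

lemma awcga_exists_functional (hq1 : 1 < q) (a : ℕ → ℝ) (ha0 : ∀ j, 0 ≤ a j)
    (hasum : Summable (fun j => a j ^ (q / (q-1))))
    (hale : ∑' j, a j ^ (q / (q-1)) ≤ 1) :
    ∃ F : ellq q →L[ℝ] ℝ, ‖F‖ ≤ 1 ∧ ∀ x : ellq q, F x = ∑' j, a j * x j := by
  have hq0 : 0 < q := lt_trans one_pos hq1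
  have hpq : (q / (q-1)).HolderConjugate q :=
    ((Real.holderConjugate_iff_eq_conjExponent hq1).2 rfl).symm
  have habs : ∀ x : ellq q, (fun j => |a j * x j|) = fun j => a j * |x j| := by
    intro x; funext j; rw [abs_mul, abs_of_nonneg (ha0 j)]
  have hsabs : ∀ x : ellq q, Summable fun j => a j * |x j| := fun x =>
    Real.summable_mul_of_Lp_Lq_of_nonneg hpq ha0 (fun j => abs_nonneg _) hasum
      (awcga_summable_coord hq0 x)
  have hs : ∀ x : ellq q, Summable fun j => a j * x j := by
    intro x
    rw [← summable_abs_iff, habs x]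
    exact hsabs x
  have hbound : ∀ x : ellq q, |∑' j, a j * x j| ≤ ‖x‖ := by
    intro x
    have heq : (fun j => ‖a j * x j‖) = fun j => a j * |x j| := by
      funext j; rw [Real.norm_eq_abs, abs_mul, abs_of_nonneg (ha0 j)]
    have hsn : Summable fun j => ‖a j * x j‖ := by rw [heq]; exact hsabs x
    have h1 : |∑' j, a j * x j| ≤ ∑' j, a j * |x j| := by
      have h := norm_tsum_le_tsum_norm hsn
      rw [heq] at h
      rw [← Real.norm_eq_abs]
      exact h
    have h2 := Real.inner_le_Lp_mul_Lq_tsum_of_nonneg hpq ha0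
      (fun j => abs_nonneg (x j)) hasum (awcga_summable_coord hq0 x)
    have h3 : (∑' j, a j ^ (q/(q-1))) ^ (1/(q/(q-1))) ≤ 1 :=
      Real.rpow_le_one (tsum_nonneg fun j => Real.rpow_nonneg (ha0 j) _) hale
        ((one_div_nonneg).2 hpq.pos.le)
    have h4 : (∑' j, |x j| ^ q) ^ (1/q) = ‖x‖ := (awcga_norm_eq hq0 x).symm
    calc |∑' j, a j * x j| ≤ ∑' j, a j * |x j| := h1
      _ ≤ (∑' j, a j ^ (q/(q-1))) ^ (1/(q/(q-1))) * (∑' j, |x j| ^ q) ^ (1/q) := h2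
      _ ≤ 1 * ‖x‖ := by
          rw [h4]
          exact mul_le_mul_of_nonneg_right h3 (norm_nonneg x)
      _ = ‖x‖ := one_mul _
  let L : ellq q →ₗ[ℝ] ℝ :=
    { toFun := fun x => ∑' j, a j * x j
      map_add' := by
        intro x y
        show (∑' j, a j * (x + y) j) = (∑' j, a j * x j) + ∑' j, a j * y j
        have h : (fun j => a j * (x + y) j) = fun j => a j * x j + a j * y j := by
          funext j
          have hxy : (x + y) j = x j + y j := by rw [lp.coeFn_add]; rfl
          rw [hxy]; ring
        rw [h, Summable.tsum_add (hs x) (hs y)]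
      map_smul' := by
        intro c x
        show (∑' j, a j * (c • x) j) = c • ∑' j, a j * x j
        have h : (fun j => a j * (c • x) j) = fun j => c * (a j * x j) := by
          funext j
          have hcx : (c • x) j = c * x j := by rw [lp.coeFn_smul]; rfl
          rw [hcx]; ring
        rw [h, tsum_mul_left, smul_eq_mul] }
  refine ⟨L.mkContinuous 1 (fun x => by
      simpa [Real.norm_eq_abs, L] using hbound x), ?_, fun x => rfl⟩
  exact LinearMap.mkContinuous_norm_le _ zero_le_one _

/-- The `j`-th standard basis vector of `ℓ_q`. -/
def awcga_eV (q : ℝ) [Fact (1 ≤ ENNReal.ofReal q)] (j : ℕ) : ellq q :=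
  lp.single _ j (1:ℝ)

lemma awcga_eV_apply (j i : ℕ) :
    (awcga_eV q j) i = if i = j then 1 else 0 := by
  by_cases h : i = j
  · subst h; simp [awcga_eV, lp.single_apply_self]
  · simp [awcga_eV, lp.single_apply_ne _ j _ h, h]

lemma awcga_eV_norm (hq0 : 0 < q) (j : ℕ) : ‖awcga_eV q j‖ = 1 := by
  have := lp.norm_single (E := fun _ : ℕ => ℝ) (ENNReal.ofReal_pos.2 hq0)
    j (1:ℝ)
  simpa [awcga_eV] using this

lemma awcga_dense (hq0 : 0 < q) (D : Set (ellq q)) (hD : ∀ j, awcga_eV q j ∈ D) :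
    (Submodule.span ℝ D).topologicalClosure = ⊤ := by
  rw [eq_top_iff]
  intro x _
  have hx : HasSum (fun i => lp.single (ENNReal.ofReal q) i (x i)) x :=
    lp.hasSum_single ENNReal.ofReal_ne_top x
  have hmem : ∀ s : Finset ℕ,
      (∑ i ∈ s, lp.single (ENNReal.ofReal q) i (x i)) ∈ Submodule.span ℝ D := by
    intro s
    refine Submodule.sum_mem _ fun i _ => ?_
    have h1 : lp.single (ENNReal.ofReal q) i (x i) = (x i) • awcga_eV q i := by
      rw [awcga_eV, ← lp.single_smul]
      norm_num
    rw [h1]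
    exact Submodule.smul_mem _ _ (Submodule.subset_span (hD i))
  have hcl : x ∈ closure ((Submodule.span ℝ D : Submodule ℝ (ellq q)) : Set (ellq q)) :=
    mem_closure_of_tendsto hx (Filter.Eventually.of_forall hmem)
  rw [← SetLike.mem_coe, Submodule.topologicalClosure_coe]
  exact hcl

/-- The submodule of elements supported in `P`. -/
def awcga_V (q : ℝ) [Fact (1 ≤ ENNReal.ofReal q)] (P : Set ℕ) : Submodule ℝ (ellq q) where
  carrier := {x | ∀ j, j ∉ P → x j = 0}
  add_mem' := by
    intro x y hx hy j hj
    have : (x + y) j = x j + y j := by rw [lp.coeFn_add]; rfl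
    rw [this, hx j hj, hy j hj, add_zero]
  zero_mem' := by
    intro j hj
    rw [lp.coeFn_zero]; rfl
  smul_mem' := by
    intro c x hx j hj
    have : (c • x) j = c * x j := by rw [lp.coeFn_smul]; rfl
    rw [this, hx j hj, mul_zero]

lemma awcga_approxError_ge (f : ellq q) (φ : ℕ → ellq q) (n : ℕ) (P : Set ℕ)
    (hφ : ∀ k, k ∈ Set.Icc 1 n → ∀ j, j ∉ P → (φ k) j = 0)
    {e : ℝ} (hle : ∀ g : ellq q, (∀ j, j ∉ P → g j = 0) → e ≤ ‖f - g‖) :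
    e ≤ approxError f φ n := by
  refine le_csInf ⟨‖f - 0‖, ⟨0, Submodule.zero_mem _, rfl⟩⟩ ?_
  rintro b ⟨g, hg, rfl⟩
  have hsub : (Submodule.span ℝ (φ '' Set.Icc 1 n)) ≤ awcga_V q P := by
    rw [Submodule.span_le]
    rintro y ⟨k, hk, rfl⟩
    exact hφ k hk
  exact hle g (hsub hg)

lemma awcga_norm_sub_ge (hq1 : 1 < q) (f g : ellq q) (P : Set ℕ)
    (hg : ∀ j, j ∉ P → g j = 0)
    (u : ℕ → ℝ) (hu : ∀ j, 0 ≤ u j) (hus : Summable u)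
    (hule : ∀ j, j ∉ P → u j ≤ |f j| ^ q) (huP : ∀ j, j ∈ P → u j = 0) :
    (∑' j, u j) ^ (1/q) ≤ ‖f - g‖ := by
  have hq0 : 0 < q := lt_trans one_pos hq1
  have h1 : ∑' j, u j ≤ ‖f - g‖ ^ q := by
    rw [awcga_norm_rpow hq0]
    refine Summable.tsum_le_tsum ?_ hus (awcga_summable_coord hq0 _)
    intro j
    by_cases hj : j ∈ P
    · rw [huP j hj]; positivity
    · have : (f - g) j = f j := by
        rw [lp.coeFn_sub]
        simp [hg j hj]
      rw [this]
      exact hule j hj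
  have h2 : (∑' j, u j) ^ (1/q) ≤ (‖f - g‖ ^ q) ^ (1/q) :=
    Real.rpow_le_rpow (tsum_nonneg hu) h1 (by positivity)
  calc (∑' j, u j) ^ (1/q) ≤ (‖f - g‖ ^ q) ^ (1/q) := h2
    _ = ‖f - g‖ := by
        rw [← Real.rpow_mul (norm_nonneg _), mul_one_div_cancel (ne_of_gt hq0),
          Real.rpow_one]

end AuxLemmas

section Extraction
set_option linter.unusedSectionVars false
set_option linter.unusedVariables false

open Filter Classical in
lemma awcga_extraction (p : ℝ) (t δ η : ℕ → ℝ) (ht : ∀ n, 1 ≤ n → 0 ≤ t n)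
    (hfail : ∀ n : ℕ → ℕ, StrictMono n → (∀ k, 1 ≤ n k) →
      ¬ ((¬ Summable (fun k => t (n k + 1) ^ p)) ∧
        IsLittleO (fun k => δ (n k)) (fun k => t (n k + 1) ^ p) ∧
        IsLittleO (fun k => η (n k)) (fun k => t (n k + 1) ^ p))) :
    ∃ m : ℕ, 1 ≤ m ∧ Summable (fun n =>
      if 1 ≤ n ∧ δ n < (1/(m:ℝ)) * t (n+1) ^ p ∧ η n < (1/(m:ℝ)) * t (n+1) ^ p
      then t (n+1) ^ p else 0) := by
  have htp : ∀ n : ℕ, 0 ≤ t (n+1) ^ p := fun n =>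
    Real.rpow_nonneg (ht (n+1) (Nat.le_add_left 1 n)) p
  by_contra hcon
  push_neg at hcon
  set g : ℕ → ℕ → ℝ := fun m n =>
    if 1 ≤ n ∧ δ n < (1/(m:ℝ)) * t (n+1) ^ p ∧ η n < (1/(m:ℝ)) * t (n+1) ^ p
    then t (n+1) ^ p else 0 with hgdef
  have hg0 : ∀ m n, 0 ≤ g m n := by
    intro m n
    simp only [hgdef]
    split
    · exact htp n
    · exact le_rfl
  have hgle : ∀ m n, g m n ≤ t (n+1) ^ p := by
    intro m n
    simp only [hgdef]
    split
    · exact le_rfl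
    · exact htp n
  -- membership facts from nonvanishing of g
  have hgmem : ∀ m n, g m n ≠ 0 →
      1 ≤ n ∧ δ n < (1/(m:ℝ)) * t (n+1) ^ p ∧ η n < (1/(m:ℝ)) * t (n+1) ^ p := by
    intro m n hn
    by_contra hc
    simp only [hgdef, if_neg hc] at hn
    exact hn rfl
  have hdiv : ∀ m : ℕ, 1 ≤ m →
      Tendsto (fun N => ∑ i ∈ Finset.range N, g m i) atTop atTop := fun m hm =>
    (not_summable_iff_tendsto_nat_atTop_of_nonneg (hg0 m)).1 (hcon m hm)
  -- step: beyond any b there is a chunk of mass ≥ 1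
  have hstep : ∀ m b : ℕ, ∃ M, b < M ∧ 1 ≤ ∑ i ∈ Finset.Ico (b+1) M, g (m+1) i := by
    intro m b
    have h := hdiv (m+1) (Nat.le_add_left 1 m)
    have h2 := (h.eventually_ge_atTop ((∑ i ∈ Finset.range (b+1), g (m+1) i) + 1)).and
      (eventually_ge_atTop (b+1))
    obtain ⟨M, hM1, hM2⟩ := h2.exists
    refine ⟨M, by omega, ?_⟩
    have hsplit : (∑ i ∈ Finset.range (b+1), g (m+1) i)
        + ∑ i ∈ Finset.Ico (b+1) M, g (m+1) i = ∑ i ∈ Finset.range M, g (m+1) i := by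
      simp only [Finset.range_eq_Ico]
      exact Finset.sum_Ico_consecutive _ (Nat.zero_le _) hM2
    linarith
  choose Mf hMf1 hMf2 using hstep
  set B : ℕ → ℕ := fun m => Nat.rec 0 (fun k ih => Mf k ih) m with hBdef
  have hB : ∀ k, B (k+1) = Mf k (B k) := fun k => rfl
  have hBmono : StrictMono B := strictMono_nat_of_lt_succ (fun k => by
    rw [hB]; exact hMf1 k (B k))
  set U : Set ℕ := {n | ∃ k, B k < n ∧ n < B (k+1) + 1 ∧ g (k+1) n ≠ 0} with hUdef
  -- chunk sums
  have hchunk : ∀ k, 1 ≤ ∑ i ∈ Finset.Ico (B k + 1) (B (k+1)), g (k+1) i := by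
    intro k
    rw [hB]; exact hMf2 k (B k)
  have hU1 : ∀ n ∈ U, 1 ≤ n := by
    rintro n ⟨k, _, _, hgne⟩
    exact (hgmem _ _ hgne).1
  -- all elements of U beyond B k₀ satisfy the (k₀+1)-condition
  have hUS : ∀ n ∈ U, ∀ k₀ : ℕ, B k₀ < n →
      δ n < (1/((k₀:ℝ)+1)) * t (n+1) ^ p ∧ η n < (1/((k₀:ℝ)+1)) * t (n+1) ^ p := by
    rintro n ⟨k, hk1, hk2, hgne⟩ k₀ hk₀
    obtain ⟨-, hδn, hηn⟩ := hgmem _ _ hgne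
    have hkk : k₀ ≤ k := by
      by_contra hc
      push_neg at hc
      have hBB : B (k+1) ≤ B k₀ := hBmono.monotone (show k+1 ≤ k₀ by omega)
      omega
    have hmono : (1/((k:ℝ)+1)) ≤ 1/((k₀:ℝ)+1) := by
      apply one_div_le_one_div_of_le
      · positivity
      · exact_mod_cast Nat.succ_le_succ hkk
    have h1 : (1/((k:ℝ)+1)) * t (n+1) ^ p ≤ (1/((k₀:ℝ)+1)) * t (n+1) ^ p :=
      mul_le_mul_of_nonneg_right hmono (htp n)
    push_cast at hδn hηn ⊢
    constructor
    · exact lt_of_lt_of_le hδn h1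
    · exact lt_of_lt_of_le hηn h1
  -- U is infinite
  have hUinf : U.Infinite := by
    apply Set.infinite_of_not_bddAbove
    rintro ⟨b, hb⟩
    -- chunk beyond b: take k with B k ≥ b
    have hBk : b ≤ B b := hBmono.le_apply
    have h1 := hchunk b
    have hpos : ∃ i ∈ Finset.Ico (B b + 1) (B (b+1)), g (b+1) i ≠ 0 := by
      by_contra hc
      push_neg at hc
      rw [Finset.sum_congr rfl (fun i hi => hc i hi)] at h1
      norm_num at h1
    obtain ⟨i, hi, hine⟩ := hpos
    rw [Finset.mem_Ico] at hi
    have hiU : i ∈ U := ⟨b, by omega, by omega, hine⟩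
    have := hb hiU
    omega
  set P : ℕ → Prop := fun n => n ∈ U with hPdef
  have hPinf : (setOf P).Infinite := hUinf
  set seq : ℕ → ℕ := Nat.nth P with hseqdef
  have hseqmono : StrictMono seq := Nat.nth_strictMono hPinf
  have hseqmem : ∀ k, seq k ∈ U := fun k => Nat.nth_mem_of_infinite hPinf k
  have hseq1 : ∀ k, 1 ≤ seq k := fun k => hU1 _ (hseqmem k)
  have hseqge : ∀ k, k ≤ seq k := fun k => hseqmono.le_apply
  refine hfail seq hseqmono hseq1 ⟨?_, ?_, ?_⟩
  · -- not summable along seq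
    intro hsum
    set C := ∑' k, t (seq k + 1) ^ p with hCdef
    have hC0 : 0 ≤ C := tsum_nonneg (fun k => htp _)
    obtain ⟨M, hM⟩ := exists_nat_gt C
    -- chunks as finsets of indices
    set chunkF : ℕ → Finset ℕ := fun k =>
      (Finset.Ico (B k + 1) (B (k+1))).filter (fun n => g (k+1) n ≠ 0) with hchunkFdef
    have hchunkU : ∀ k, ∀ n ∈ chunkF k, n ∈ U := by
      intro k n hn
      rw [hchunkFdef, Finset.mem_filter, Finset.mem_Ico] at hn
      exact ⟨k, by omega, by omega, hn.2⟩
    have hchunksum : ∀ k, 1 ≤ ∑ n ∈ chunkF k, t (n+1) ^ p := by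
      intro k
      refine le_trans (hchunk k) ?_
      calc ∑ i ∈ Finset.Ico (B k + 1) (B (k+1)), g (k+1) i
          = ∑ n ∈ chunkF k, g (k+1) n := (Finset.sum_filter_ne_zero _).symm
        _ ≤ ∑ n ∈ chunkF k, t (n+1) ^ p := Finset.sum_le_sum (fun n _ => hgle _ n)
    set T : ℕ → Finset ℕ := fun k => (chunkF k).image (Nat.count P) with hTdef
    have hTsum : ∀ k, 1 ≤ ∑ j ∈ T k, t (seq j + 1) ^ p := by
      intro k
      rw [hTdef]
      rw [Finset.sum_image (fun x hx y hy hxy =>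
        Nat.count_injective (hchunkU k x hx) (hchunkU k y hy) hxy)]
      have : ∀ n ∈ chunkF k, t (seq (Nat.count P n) + 1) ^ p = t (n+1) ^ p := by
        intro n hn
        rw [hseqdef, Nat.nth_count (hchunkU k n hn)]
      rw [Finset.sum_congr rfl this]
      exact hchunksum k
    have hTdisj : ∀ k₁ k₂, k₁ ≠ k₂ → Disjoint (T k₁) (T k₂) := by
      intro k₁ k₂ hne
      rw [Finset.disjoint_left]
      intro j hj1 hj2
      rw [hTdef, Finset.mem_image] at hj1 hj2
      obtain ⟨n₁, hn₁, hjn₁⟩ := hj1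
      obtain ⟨n₂, hn₂, hjn₂⟩ := hj2
      have heqn : n₁ = n₂ :=
        Nat.count_injective (hchunkU _ _ hn₁) (hchunkU _ _ hn₂) (hjn₁.trans hjn₂.symm)
      rw [hchunkFdef, Finset.mem_filter, Finset.mem_Ico] at hn₁ hn₂
      rcases Nat.lt_or_ge k₁ k₂ with h | h
      · have hBB : B (k₁+1) ≤ B k₂ := hBmono.monotone (show k₁+1 ≤ k₂ by omega)
        omega
      · have hBB : B (k₂+1) ≤ B k₁ := hBmono.monotone (show k₂+1 ≤ k₁ by omega)
        omega
    have hbig : (M:ℝ) ≤ ∑ j ∈ (Finset.range M).biUnion T, t (seq j + 1) ^ p := by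
      rw [Finset.sum_biUnion (fun x _ y _ hxy => hTdisj x y hxy)]
      calc (M:ℝ) = ∑ k ∈ Finset.range M, (1:ℝ) := by simp
        _ ≤ ∑ k ∈ Finset.range M, ∑ j ∈ T k, t (seq j + 1) ^ p :=
            Finset.sum_le_sum (fun k _ => hTsum k)
    have hsmall : ∑ j ∈ (Finset.range M).biUnion T, t (seq j + 1) ^ p ≤ C :=
      Summable.sum_le_tsum _ (fun j _ => htp _) hsum
    linarith
  · -- littleO for δ
    intro ε hε
    obtain ⟨m₀, hm₀⟩ := exists_nat_gt (1/ε)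
    refine ⟨B m₀ + 1, fun k hk => ?_⟩
    have hgt : B m₀ < seq k := lt_of_lt_of_le (by omega : B m₀ < B m₀ + 1)
      (le_trans hk (hseqge k))
    have h := (hUS _ (hseqmem k) m₀ hgt).1
    have hm₀' : 1/((m₀:ℝ)+1) ≤ ε := by
      rw [div_le_iff₀ (by positivity)]
      rw [div_lt_iff₀ hε] at hm₀
      nlinarith [hε.le]
    calc δ (seq k) ≤ (1/((m₀:ℝ)+1)) * t (seq k + 1) ^ p := h.le
      _ ≤ ε * t (seq k + 1) ^ p := mul_le_mul_of_nonneg_right hm₀' (htp _)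
  · -- littleO for η
    intro ε hε
    obtain ⟨m₀, hm₀⟩ := exists_nat_gt (1/ε)
    refine ⟨B m₀ + 1, fun k hk => ?_⟩
    have hgt : B m₀ < seq k := lt_of_lt_of_le (by omega : B m₀ < B m₀ + 1)
      (le_trans hk (hseqge k))
    have h := (hUS _ (hseqmem k) m₀ hgt).2
    have hm₀' : 1/((m₀:ℝ)+1) ≤ ε := by
      rw [div_le_iff₀ (by positivity)]
      rw [div_lt_iff₀ hε] at hm₀
      nlinarith [hε.le]
    calc η (seq k) ≤ (1/((m₀:ℝ)+1)) * t (seq k + 1) ^ p := h.le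
      _ ≤ ε * t (seq k + 1) ^ p := mul_le_mul_of_nonneg_right hm₀' (htp _)

end Extraction

section MainConstruction
set_option linter.unusedSectionVars false
set_option linter.unusedVariables false
open Classical Filter

variable (q : ℝ) [Fact (1 ≤ ENNReal.ofReal q)] (t δ η : ℕ → ℝ) (m : ℕ)

/-- Steps where both slack conditions fail: "forced" steps. -/
def awS : Set ℕ :=
  {n | 1 ≤ n ∧ δ n < (1/(m:ℝ)) * t (n+1) ^ (q/(q-1)) ∧
    η n < (1/(m:ℝ)) * t (n+1) ^ (q/(q-1))}

def awForced (n : ℕ) : Prop := n = 0 ∨ n ∈ awS q t δ η m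

def awSd (n : ℕ) : Prop :=
  ¬ awForced q t δ η m n ∧ (1/(m:ℝ)) * t (n+1) ^ (q/(q-1)) ≤ δ n

def awSe (n : ℕ) : Prop :=
  ¬ awForced q t δ η m n ∧ ¬ ((1/(m:ℝ)) * t (n+1) ^ (q/(q-1)) ≤ δ n)

lemma awCases (n : ℕ) : awForced q t δ η m n ∨ awSd q t δ η m n ∨ awSe q t δ η m n := by
  by_cases h1 : awForced q t δ η m n
  · exact Or.inl h1
  · by_cases h2 : (1/(m:ℝ)) * t (n+1) ^ (q/(q-1)) ≤ δ n
    · exact Or.inr (Or.inl ⟨h1, h2⟩)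
    · exact Or.inr (Or.inr ⟨h1, h2⟩)

lemma awSe_eta (n : ℕ) (h : awSe q t δ η m n) :
    1 ≤ n ∧ (1/(m:ℝ)) * t (n+1) ^ (q/(q-1)) ≤ η n := by
  obtain ⟨h1, h2⟩ := h
  have hn1 : 1 ≤ n := by
    by_contra hc
    exact h1 (Or.inl (by omega))
  refine ⟨hn1, ?_⟩
  by_contra hc
  push_neg at hc
  push_neg at h2
  exact h1 (Or.inr ⟨hn1, h2, hc⟩)

def aww : ℝ := (m:ℝ) ^ (-(1/q))

def awγ (n : ℕ) : ℝ :=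
  if awForced q t δ η m n then t (n+1) ^ (1/(q-1)) * aww q m else 0

def awc (n : ℕ) : ℝ :=
  if n = 0 then awγ q t δ η m 0
  else if awSe q t δ η m n then t (n+1) ^ (1/(q-1)) * aww q m else 0

def awFS (n : ℕ) : ℕ → ℝ := fun j =>
  if j < m then aww q m
  else if j = m + 1 then awc q t δ η m n
  else if (j - m) % 2 = 1 ∧ n ≤ (j - m)/2 then awγ q t δ η m ((j - m)/2) else 0

variable {q t δ η m}

section BasicFacts

lemma awq0 (hq1 : 1 < q) : 0 < q := lt_trans one_pos hq1

lemma awt0 (ht : IsWeaknessSeq t) (n : ℕ) : 0 ≤ t (n+1) := (ht (n+1) (Nat.le_add_left 1 n)).1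

lemma awt1 (ht : IsWeaknessSeq t) (n : ℕ) : t (n+1) ≤ 1 := (ht (n+1) (Nat.le_add_left 1 n)).2

lemma awm0 (hm : 1 ≤ m) : (0:ℝ) < (m:ℝ) := by exact_mod_cast hm

lemma aww_pos (hm : 1 ≤ m) : 0 < aww q m := Real.rpow_pos_of_pos (awm0 hm) _

lemma aww_le_one (hq1 : 1 < q) (hm : 1 ≤ m) : aww q m ≤ 1 :=
  Real.rpow_le_one_of_one_le_of_nonpos (by exact_mod_cast hm)
    (by rw [neg_nonpos]; have := awq0 (q := q) hq1; positivity)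

lemma aww_q (hq1 : 1 < q) (hm : 1 ≤ m) : (aww q m) ^ q = 1/(m:ℝ) := by
  have hq0 : q ≠ 0 := ne_of_gt (awq0 hq1)
  rw [aww, ← Real.rpow_mul (awm0 hm).le]
  rw [show -(1/q) * q = -1 by field_simp]
  rw [show (-1 : ℝ) = -(1:ℝ) from rfl, Real.rpow_neg (awm0 hm).le, Real.rpow_one]
  exact (one_div _).symm

lemma awγ_nonneg (hm : 1 ≤ m) (ht : IsWeaknessSeq t) (n : ℕ) : 0 ≤ awγ q t δ η m n := by
  rw [awγ]
  split
  · have := awt0 ht n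
    have := (aww_pos (q := q) hm).le
    positivity
  · exact le_rfl

lemma awγ_le_w (hq1 : 1 < q) (hm : 1 ≤ m) (ht : IsWeaknessSeq t) (n : ℕ) : awγ q t δ η m n ≤ aww q m := by
  rw [awγ]
  split
  · calc t (n+1) ^ (1/(q-1)) * aww q m
        ≤ 1 * aww q m := by
          refine mul_le_mul_of_nonneg_right ?_ (aww_pos hm).le
          exact Real.rpow_le_one (awt0 ht n) (awt1 ht n)
            (one_div_nonneg.2 (by linarith))
      _ = aww q m := one_mul _
  · exact (aww_pos hm).le

lemma awγ_q (hq1 : 1 < q) (hm : 1 ≤ m) (ht : IsWeaknessSeq t) (n : ℕ) : (awγ q t δ η m n) ^ q =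
    if awForced q t δ η m n then (1/(m:ℝ)) * t (n+1) ^ (q/(q-1)) else 0 := by
  rw [awγ]
  split
  · rw [Real.mul_rpow (Real.rpow_nonneg (awt0 ht n) _) (aww_pos hm).le,
      ← Real.rpow_mul (awt0 ht n), aww_q hq1 hm]
    rw [show (1/(q-1)) * q = q/(q-1) by ring]
    ring
  · exact Real.zero_rpow (ne_of_gt (awq0 hq1))

lemma awc_nonneg (hm : 1 ≤ m) (ht : IsWeaknessSeq t) (n : ℕ) : 0 ≤ awc q t δ η m n := by
  rw [awc]
  split
  · exact awγ_nonneg hm ht 0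
  split
  · have := awt0 ht n
    have := (aww_pos (q := q) hm).le
    positivity
  · exact le_rfl

lemma awc_le_w (hq1 : 1 < q) (hm : 1 ≤ m) (ht : IsWeaknessSeq t) (n : ℕ) : awc q t δ η m n ≤ aww q m := by
  rw [awc]
  split
  · exact awγ_le_w hq1 hm ht 0
  split
  · calc t (n+1) ^ (1/(q-1)) * aww q m
        ≤ 1 * aww q m := by
          refine mul_le_mul_of_nonneg_right ?_ (aww_pos hm).le
          exact Real.rpow_le_one (awt0 ht n) (awt1 ht n)
            (one_div_nonneg.2 (by linarith))
      _ = aww q m := one_mul _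
  · exact (aww_pos hm).le

lemma awc_q_of_ne (hq1 : 1 < q) (hm : 1 ≤ m) (ht : IsWeaknessSeq t) (n : ℕ) (hn : n ≠ 0) : (awc q t δ η m n) ^ q =
    if awSe q t δ η m n then (1/(m:ℝ)) * t (n+1) ^ (q/(q-1)) else 0 := by
  rw [awc, if_neg hn]
  split
  · rw [Real.mul_rpow (Real.rpow_nonneg (awt0 ht n) _) (aww_pos hm).le,
      ← Real.rpow_mul (awt0 ht n), aww_q hq1 hm]
    rw [show (1/(q-1)) * q = q/(q-1) by ring]
    ring
  · exact Real.zero_rpow (ne_of_gt (awq0 hq1))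

-- decode lemmas
lemma awFS_lt {n j : ℕ} (hj : j < m) : awFS q t δ η m n j = aww q m := by
  rw [awFS]; rw [if_pos hj]

lemma awFS_m1 (n : ℕ) : awFS q t δ η m n (m+1) = awc q t δ η m n := by
  rw [awFS, if_neg (by omega), if_pos rfl]

lemma awFS_pay {n k : ℕ} (hk : 1 ≤ k) :
    awFS q t δ η m n (m+2*k+1) = if n ≤ k then awγ q t δ η m k else 0 := by
  rw [awFS, if_neg (by omega), if_neg (by omega)]
  have h1 : (m+2*k+1) - m = 2*k+1 := by omega
  rw [h1]
  have h2 : (2*k+1) % 2 = 1 := by omega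
  have h3 : (2*k+1) / 2 = k := by omega
  rw [h2, h3]
  simp

lemma awFS_dis (n k : ℕ) : awFS q t δ η m n (m+2*k) = 0 := by
  rw [awFS, if_neg (by omega), if_neg (by omega)]
  have h1 : (m+2*k) - m = 2*k := by omega
  rw [h1]
  have h2 : ¬((2*k) % 2 = 1 ∧ n ≤ (2*k)/2) := by omega
  rw [if_neg h2]

lemma awFS_nonneg (hm : 1 ≤ m) (ht : IsWeaknessSeq t) (n j : ℕ) : 0 ≤ awFS q t δ η m n j := by
  rw [awFS]
  split
  · exact (aww_pos hm).le
  split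
  · exact awc_nonneg hm ht n
  split
  · exact awγ_nonneg hm ht _
  · exact le_rfl

lemma awFS_le_w (hq1 : 1 < q) (hm : 1 ≤ m) (ht : IsWeaknessSeq t) (n j : ℕ) : awFS q t δ η m n j ≤ aww q m := by
  rw [awFS]
  split
  · exact le_rfl
  split
  · exact awc_le_w hq1 hm ht n
  split
  · exact awγ_le_w hq1 hm ht _
  · exact (aww_pos hm).le

end BasicFacts
end MainConstruction

section MainSummation
set_option linter.unusedSectionVars false
set_option linter.unusedVariables false
open Classical Filter

variable {q : ℝ} [Fact (1 ≤ ENNReal.ofReal q)] {t δ η : ℕ → ℝ} {m : ℕ}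

/-- summability hypothesis delivered by the extraction lemma -/
def awHsum (q : ℝ) (t δ η : ℕ → ℝ) (m : ℕ) : Prop :=
  Summable (fun n => if n ∈ awS q t δ η m then t (n+1) ^ (q/(q-1)) else 0)

def awpay (m k : ℕ) : ℕ := m + 2*k + 1

def awu (q : ℝ) (t δ η : ℕ → ℝ) (m : ℕ) (n k : ℕ) : ℝ :=
  if 1 ≤ k ∧ n ≤ k then (awγ q t δ η m k) ^ q else 0

def awf1 (q : ℝ) (m : ℕ) : ℕ → ℝ := fun j => if j < m then (aww q m) ^ q else 0

def awf3 (q : ℝ) (t δ η : ℕ → ℝ) (m : ℕ) (n : ℕ) : ℕ → ℝ := fun j =>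
  if m < j ∧ (j - m) % 2 = 1 ∧ j ≠ m + 1 ∧ n ≤ (j - m)/2
  then (awγ q t δ η m ((j-m)/2)) ^ q else 0

def awT (q : ℝ) (t δ η : ℕ → ℝ) (m : ℕ) (n : ℕ) : ℝ := ∑' k, awu q t δ η m n k

lemma awu_nonneg (hm : 1 ≤ m) (ht : IsWeaknessSeq t) (n k : ℕ) :
    0 ≤ awu q t δ η m n k := by
  rw [awu]
  split
  · exact Real.rpow_nonneg (awγ_nonneg hm ht k) q
  · exact le_rfl

lemma awu_summable (hq1 : 1 < q) (hm : 1 ≤ m) (ht : IsWeaknessSeq t)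
    (hsum : awHsum q t δ η m) (n : ℕ) : Summable (awu q t δ η m n) := by
  refine Summable.of_nonneg_of_le (fun k => ?_) (fun k => ?_)
    ((hsum.mul_left (1/(m:ℝ))))
  · rw [awu]
    split
    · exact Real.rpow_nonneg (awγ_nonneg hm ht k) q
    · exact le_rfl
  · rw [awu]
    split
    · rename_i hk
      rw [awγ_q hq1 hm ht k]
      split
      · rename_i hf
        have hkS : k ∈ awS q t δ η m := by
          rcases hf with h0 | hS
          · omega
          · exact hS
        rw [if_pos hkS]
      · have h1 : (0:ℝ) ≤ t (k+1) ^ (q/(q-1)) := Real.rpow_nonneg (awt0 ht k) _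
        have h2 : (0:ℝ) < 1/(m:ℝ) := by
          have := awm0 (m := m) hm
          positivity
        split
        · positivity
        · simp
    · have h1 : (0:ℝ) ≤ t (k+1) ^ (q/(q-1)) := Real.rpow_nonneg (awt0 ht k) _
      have h2 : (0:ℝ) < 1/(m:ℝ) := by
        have := awm0 (m := m) hm
        positivity
      split
      · positivity
      · simp

lemma awT_nonneg (hm : 1 ≤ m) (ht : IsWeaknessSeq t) (n : ℕ) :
    0 ≤ awT q t δ η m n := by
  refine tsum_nonneg (fun k => ?_)
  rw [awu]
  split
  · exact Real.rpow_nonneg (awγ_nonneg hm ht k) q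
  · exact le_rfl

lemma hasSum_awf1 (hq1 : 1 < q) (hm : 1 ≤ m) : HasSum (awf1 q m) 1 := by
  have h0 : ∀ j ∉ Finset.range m, awf1 q m j = 0 := by
    intro j hj
    rw [Finset.mem_range] at hj
    rw [awf1]
    exact if_neg (by omega)
  have h : HasSum (awf1 q m) (∑ j ∈ Finset.range m, awf1 q m j) :=
    hasSum_sum_of_ne_finset_zero h0
  have hsum : ∑ j ∈ Finset.range m, awf1 q m j = 1 := by
    have : ∀ j ∈ Finset.range m, awf1 q m j = (aww q m) ^ q := by
      intro j hj
      rw [Finset.mem_range] at hj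
      rw [awf1]
      exact if_pos hj
    rw [Finset.sum_congr rfl this, Finset.sum_const, Finset.card_range,
      aww_q hq1 hm, nsmul_eq_mul]
    field_simp
  rwa [hsum] at h

lemma awpay_inj : Function.Injective (awpay m) := by
  intro a b hab
  rw [awpay, awpay] at hab
  omega

lemma hasSum_awf3 (hq1 : 1 < q) (hm : 1 ≤ m) (ht : IsWeaknessSeq t)
    (hsum : awHsum q t δ η m) (n : ℕ) :
    HasSum (awf3 q t δ η m n) (awT q t δ η m n) := by
  have hoff : ∀ j ∉ Set.range (awpay m), awf3 q t δ η m n j = 0 := by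
    intro j hj
    rw [awf3]
    split
    · rename_i h
      exact absurd ⟨(j-m)/2, by rw [awpay]; omega⟩ hj
    · rfl
  have hcomp : (awf3 q t δ η m n) ∘ (awpay m) = awu q t δ η m n := by
    funext k
    simp only [Function.comp_apply, awf3, awpay, awu]
    have h1 : (m + 2*k+1) - m = 2*k+1 := by omega
    simp only [h1]
    have h3 : (2*k+1)/2 = k := by omega
    simp only [h3]
    by_cases hk : 1 ≤ k ∧ n ≤ k
    · rw [if_pos ⟨by omega, by omega, by omega, hk.2⟩, if_pos hk]
    · rw [if_neg (fun hc => hk ⟨by omega, hc.2.2.2⟩), if_neg hk]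
  have := (Function.Injective.hasSum_iff (f := awf3 q t δ η m n)
    (a := awT q t δ η m n) awpay_inj hoff)
  rw [← this, hcomp]
  exact (awu_summable hq1 hm ht hsum n).hasSum

lemma awFS_pointwise (hq1 : 1 < q) (hm : 1 ≤ m) (ht : IsWeaknessSeq t) (n j : ℕ) :
    |awFS q t δ η m n j| ^ q =
      awf1 q m j + ((if j = m+1 then (awc q t δ η m n)^q else 0) + awf3 q t δ η m n j) := by
  have hq0 : (0:ℝ) < q := awq0 hq1
  rw [abs_of_nonneg (awFS_nonneg hm ht n j)]
  rcases lt_or_ge j m with hj | hj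
  · rw [awFS_lt hj, awf1, if_pos hj, if_neg (by omega), awf3, if_neg (by omega)]
    ring
  · by_cases hj1 : j = m+1
    · subst hj1
      rw [awFS_m1, awf1, if_neg (by omega), if_pos rfl, awf3, if_neg (by simp)]
      ring
    · -- j ≥ m, j ≠ m+1
      rw [awf1, if_neg (by omega), if_neg hj1]
      by_cases hodd : (j - m) % 2 = 1
      · -- payload coordinate, k = (j-m)/2 ≥ 1
        have hk1 : 1 ≤ (j - m)/2 := by omega
        have hdec : awFS q t δ η m n j =
            if n ≤ (j-m)/2 then awγ q t δ η m ((j-m)/2) else 0 := by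
          rw [awFS, if_neg (by omega), if_neg hj1]
          by_cases hn : n ≤ (j-m)/2
          · rw [if_pos ⟨hodd, hn⟩, if_pos hn]
          · rw [if_neg (fun hc => hn hc.2), if_neg hn]
        rw [hdec, awf3]
        by_cases hn : n ≤ (j-m)/2
        · rw [if_pos hn, if_pos ⟨by omega, hodd, hj1, hn⟩]
          ring
        · rw [if_neg hn, if_neg (fun hc => hn hc.2.2.2), Real.zero_rpow (ne_of_gt hq0)]
          ring
      · -- even offset: distractor or j = m
        have hdec : awFS q t δ η m n j = 0 := by
          rw [awFS, if_neg (by omega), if_neg hj1, if_neg (fun hc => hodd hc.1)]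
        rw [hdec, awf3, if_neg (fun hc => hodd hc.2.1), Real.zero_rpow (ne_of_gt hq0)]
        ring

lemma hasSum_awFS (hq1 : 1 < q) (hm : 1 ≤ m) (ht : IsWeaknessSeq t)
    (hsum : awHsum q t δ η m) (n : ℕ) :
    HasSum (fun j => |awFS q t δ η m n j| ^ q)
      (1 + ((awc q t δ η m n)^q + awT q t δ η m n)) := by
  have h := (hasSum_awf1 hq1 hm).add
    ((hasSum_ite_eq (m+1) ((awc q t δ η m n)^q)).add (hasSum_awf3 hq1 hm ht hsum n))
  have heq : (fun j => |awFS q t δ η m n j| ^ q)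
      = fun j => awf1 q m j +
        ((if j = m+1 then (awc q t δ η m n)^q else 0) + awf3 q t δ η m n j) :=
    funext (awFS_pointwise hq1 hm ht n)
  rw [heq]
  exact h

lemma awFS_memℓp (hq1 : 1 < q) (hm : 1 ≤ m) (ht : IsWeaknessSeq t)
    (hsum : awHsum q t δ η m) (n : ℕ) :
    Memℓp (awFS q t δ η m n) (ENNReal.ofReal q) := by
  apply memℓp_gen
  have heq : (fun j => ‖awFS q t δ η m n j‖ ^ (ENNReal.ofReal q).toReal)
      = fun j => |awFS q t δ η m n j| ^ q := by
    funext j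
    rw [Real.norm_eq_abs, awcga_toReal (awq0 hq1)]
  rw [heq]
  exact (hasSum_awFS hq1 hm ht hsum n).summable

def awfs (q : ℝ) [Fact (1 ≤ ENNReal.ofReal q)] (t δ η : ℕ → ℝ) (m : ℕ)
    (hq1 : 1 < q) (hm : 1 ≤ m) (ht : IsWeaknessSeq t) (hsum : awHsum q t δ η m)
    (n : ℕ) : ellq q :=
  ⟨awFS q t δ η m n, awFS_memℓp hq1 hm ht hsum n⟩

lemma awfs_apply (hq1 : 1 < q) (hm : 1 ≤ m) (ht : IsWeaknessSeq t)
    (hsum : awHsum q t δ η m) (n j : ℕ) :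
    (awfs q t δ η m hq1 hm ht hsum n) j = awFS q t δ η m n j := rfl

lemma awR_pow (hq1 : 1 < q) (hm : 1 ≤ m) (ht : IsWeaknessSeq t)
    (hsum : awHsum q t δ η m) (n : ℕ) :
    ‖awfs q t δ η m hq1 hm ht hsum n‖ ^ q
      = 1 + ((awc q t δ η m n)^q + awT q t δ η m n) := by
  rw [awcga_norm_rpow (awq0 hq1)]
  exact (hasSum_awFS hq1 hm ht hsum n).tsum_eq

lemma awR_ge_one (hq1 : 1 < q) (hm : 1 ≤ m) (ht : IsWeaknessSeq t)
    (hsum : awHsum q t δ η m) (n : ℕ) :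
    1 ≤ ‖awfs q t δ η m hq1 hm ht hsum n‖ := by
  by_contra hc
  push_neg at hc
  have h1 : ‖awfs q t δ η m hq1 hm ht hsum n‖ ^ q < 1 :=
    Real.rpow_lt_one (norm_nonneg _) hc (awq0 hq1)
  rw [awR_pow hq1 hm ht hsum n] at h1
  have h2 : 0 ≤ (awc q t δ η m n)^q := Real.rpow_nonneg (awc_nonneg hm ht n) q
  have h3 := awT_nonneg (q := q) (δ := δ) (η := η) hm ht n
  linarith

end MainSummation

section MainFunctional
set_option linter.unusedSectionVars false
set_option linter.unusedVariables false
open Classical Filter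

variable {q : ℝ} [Fact (1 ≤ ENNReal.ofReal q)] {t δ η : ℕ → ℝ} {m : ℕ}

def awdd (q : ℝ) (t δ η : ℕ → ℝ) (m : ℕ) (n : ℕ) : ℝ :=
  if awSd q t δ η m n then δ n else 0

def awbb (q : ℝ) (t : ℕ → ℝ) (m : ℕ) (n : ℕ) : ℝ := (aww q m) ^ (q-1) * t (n+1)

def awc1 (q : ℝ) [Fact (1 ≤ ENNReal.ofReal q)] (t δ η : ℕ → ℝ) (m : ℕ)
    (hq1 : 1 < q) (hm : 1 ≤ m) (ht : IsWeaknessSeq t) (hsum : awHsum q t δ η m)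
    (n : ℕ) : ℝ :=
  (1 - awdd q t δ η m n) / ‖awfs q t δ η m hq1 hm ht hsum n‖ ^ (q-1)

def awA (q : ℝ) [Fact (1 ≤ ENNReal.ofReal q)] (t δ η : ℕ → ℝ) (m : ℕ)
    (hq1 : 1 < q) (hm : 1 ≤ m) (ht : IsWeaknessSeq t) (hsum : awHsum q t δ η m)
    (n : ℕ) : ℕ → ℝ := fun j =>
  awc1 q t δ η m hq1 hm ht hsum n * (awFS q t δ η m n j) ^ (q-1)
  + (if awSd q t δ η m n ∧ j = m + 2*n then awbb q t m n else 0)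

section FunctionalFacts

variable (hq1 : 1 < q) (hm : 1 ≤ m) (ht : IsWeaknessSeq t)
  (hδ : IsPerturbationSeq δ) (hsum : awHsum q t δ η m) (n : ℕ)

include hδ in
lemma awdd_nonneg : 0 ≤ awdd q t δ η m n := by
  rw [awdd]; split
  · exact (hδ n).1
  · exact le_rfl

include hδ in
lemma awdd_le_one : awdd q t δ η m n ≤ 1 := by
  rw [awdd]; split
  · exact (hδ n).2
  · exact zero_le_one

include hδ in
lemma awdd_le_delta : awdd q t δ η m n ≤ δ n := by
  rw [awdd]; split
  · exact le_rfl
  · exact (hδ n).1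

include hm ht in
lemma awbb_nonneg : 0 ≤ awbb q t m n :=
  mul_nonneg (Real.rpow_nonneg (aww_pos hm).le _) (awt0 ht n)

lemma awRq1 : 1 ≤ ‖awfs q t δ η m hq1 hm ht hsum n‖ ^ (q-1) := by
  have h := awR_ge_one hq1 hm ht hsum n
  calc (1:ℝ) = 1 ^ (q-1) := (Real.one_rpow _).symm
    _ ≤ ‖awfs q t δ η m hq1 hm ht hsum n‖ ^ (q-1) :=
        Real.rpow_le_rpow zero_le_one h (by linarith)

lemma awRq_pos : 0 < ‖awfs q t δ η m hq1 hm ht hsum n‖ ^ (q-1) :=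
  lt_of_lt_of_le one_pos (awRq1 hq1 hm ht hsum n)

include hδ in
lemma awc1_nonneg : 0 ≤ awc1 q t δ η m hq1 hm ht hsum n := by
  rw [awc1]
  apply div_nonneg
  · have := awdd_le_one (q := q) (t := t) (η := η) (m := m) hδ n
    linarith
  · exact (awRq_pos hq1 hm ht hsum n).le

include hδ in
lemma awc1_le_one : awc1 q t δ η m hq1 hm ht hsum n ≤ 1 := by
  rw [awc1, div_le_one (awRq_pos hq1 hm ht hsum n)]
  have h1 := awdd_nonneg (q := q) (t := t) (η := η) (m := m) hδ n
  have h2 := awRq1 hq1 hm ht hsum n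
  linarith

include hδ in
lemma awA_nonneg (j : ℕ) : 0 ≤ awA q t δ η m hq1 hm ht hsum n j := by
  rw [awA]
  have h1 := awc1_nonneg hq1 hm ht hδ hsum n
  have h2 : (0:ℝ) ≤ (awFS q t δ η m n j) ^ (q-1) :=
    Real.rpow_nonneg (awFS_nonneg hm ht n j) _
  have h3 : (0:ℝ) ≤ (if awSd q t δ η m n ∧ j = m + 2*n then awbb q t m n else 0) := by
    split
    · exact awbb_nonneg hm ht n
    · exact le_rfl
  exact add_nonneg (mul_nonneg h1 h2) h3

include hq1 in
lemma awqq1 : 1 ≤ q/(q-1) := by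
  rw [le_div_iff₀ (by linarith : (0:ℝ) < q - 1)]
  linarith

include hδ in
lemma awA_pow_eq (j : ℕ) :
    (awA q t δ η m hq1 hm ht hsum n j) ^ (q/(q-1)) =
      (awc1 q t δ η m hq1 hm ht hsum n) ^ (q/(q-1)) * |awFS q t δ η m n j| ^ q
      + (if awSd q t δ η m n ∧ j = m + 2*n then (awbb q t m n) ^ (q/(q-1)) else 0) := by
  have hq0 : (0:ℝ) < q := awq0 hq1
  have hFS0 : 0 ≤ awFS q t δ η m n j := awFS_nonneg hm ht n j
  have hc1 : 0 ≤ awc1 q t δ η m hq1 hm ht hsum n := awc1_nonneg hq1 hm ht hδ hsum n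
  rw [awA]
  by_cases h : awSd q t δ η m n ∧ j = m + 2*n
  · rw [if_pos h, if_pos h]
    have hdis : awFS q t δ η m n j = 0 := by
      rw [h.2]
      exact awFS_dis n n
    rw [hdis, Real.zero_rpow (by linarith : q - 1 ≠ 0), mul_zero, zero_add,
      abs_zero, Real.zero_rpow (ne_of_gt hq0), mul_zero, zero_add]
  · rw [if_neg h, if_neg h, add_zero, add_zero]
    rw [Real.mul_rpow hc1 (Real.rpow_nonneg hFS0 _)]
    congr 1
    rw [← Real.rpow_mul hFS0, abs_of_nonneg hFS0]
    congr 1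
    have h' : q - 1 ≠ 0 := by linarith
    field_simp

include hδ in
lemma awA_pow_hasSum :
    HasSum (fun j => (awA q t δ η m hq1 hm ht hsum n j) ^ (q/(q-1)))
      ((awc1 q t δ η m hq1 hm ht hsum n) ^ (q/(q-1)) * ‖awfs q t δ η m hq1 hm ht hsum n‖ ^ q
        + (if awSd q t δ η m n then (awbb q t m n) ^ (q/(q-1)) else 0)) := by
  have h1 := (hasSum_awFS hq1 hm ht hsum n).mul_left
    ((awc1 q t δ η m hq1 hm ht hsum n) ^ (q/(q-1)))
  rw [← awR_pow hq1 hm ht hsum n] at h1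
  have h2 : HasSum (fun j => if awSd q t δ η m n ∧ j = m + 2*n
      then (awbb q t m n) ^ (q/(q-1)) else 0)
      (if awSd q t δ η m n then (awbb q t m n) ^ (q/(q-1)) else 0) := by
    by_cases hsd : awSd q t δ η m n
    · rw [if_pos hsd]
      have : (fun j => if awSd q t δ η m n ∧ j = m + 2*n
          then (awbb q t m n) ^ (q/(q-1)) else 0)
          = fun j => if j = m + 2*n then (awbb q t m n) ^ (q/(q-1)) else 0 := by
        funext j
        by_cases hj : j = m + 2*n
        · rw [if_pos ⟨hsd, hj⟩, if_pos hj]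
        · rw [if_neg (fun hc => hj hc.2), if_neg hj]
      rw [this]
      exact hasSum_ite_eq _ _
    · rw [if_neg hsd]
      have : (fun j => if awSd q t δ η m n ∧ j = m + 2*n
          then (awbb q t m n) ^ (q/(q-1)) else 0) = fun _ => (0:ℝ) := by
        funext j
        rw [if_neg (fun hc => hsd hc.1)]
      rw [this]
      exact hasSum_zero
  have h := h1.add h2
  have heq : (fun j => (awA q t δ η m hq1 hm ht hsum n j) ^ (q/(q-1)))
      = fun j => (awc1 q t δ η m hq1 hm ht hsum n) ^ (q/(q-1)) * |awFS q t δ η m n j| ^ q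
        + (if awSd q t δ η m n ∧ j = m + 2*n then (awbb q t m n) ^ (q/(q-1)) else 0) :=
    funext (awA_pow_eq hq1 hm ht hδ hsum n)
  rw [heq]
  exact h

include hq1 hm ht in
lemma awbb_pow : (awbb q t m n) ^ (q/(q-1)) = (1/(m:ℝ)) * t (n+1) ^ (q/(q-1)) := by
  rw [awbb, Real.mul_rpow (Real.rpow_nonneg (aww_pos hm).le _) (awt0 ht n)]
  congr 1
  rw [← Real.rpow_mul (aww_pos hm).le]
  rw [show (q-1) * (q/(q-1)) = q by
    have h' : q - 1 ≠ 0 := by linarith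
    field_simp]
  exact aww_q hq1 hm

include hδ in
lemma awc1_pow_mul :
    (awc1 q t δ η m hq1 hm ht hsum n) ^ (q/(q-1)) * ‖awfs q t δ η m hq1 hm ht hsum n‖ ^ q
      = (1 - awdd q t δ η m n) ^ (q/(q-1)) := by
  have hR : (0:ℝ) < ‖awfs q t δ η m hq1 hm ht hsum n‖ :=
    lt_of_lt_of_le one_pos (awR_ge_one hq1 hm ht hsum n)
  have hdd1 : 0 ≤ 1 - awdd q t δ η m n := by
    have := awdd_le_one (q := q) (t := t) (η := η) (m := m) hδ n
    linarith
  rw [awc1, Real.div_rpow hdd1 (awRq_pos hq1 hm ht hsum n).le,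
    ← Real.rpow_mul hR.le]
  rw [show (q-1) * (q/(q-1)) = q by
    have h' : q - 1 ≠ 0 := by linarith
    field_simp]
  rw [div_mul_cancel₀]
  exact ne_of_gt (Real.rpow_pos_of_pos hR q)

include hδ in
lemma awA_sum_value_le_one :
    (awc1 q t δ η m hq1 hm ht hsum n) ^ (q/(q-1)) * ‖awfs q t δ η m hq1 hm ht hsum n‖ ^ q
      + (if awSd q t δ η m n then (awbb q t m n) ^ (q/(q-1)) else 0) ≤ 1 := by
  rw [awc1_pow_mul hq1 hm ht hδ hsum n, awbb_pow hq1 hm ht n]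
  by_cases hsd : awSd q t δ η m n
  · rw [if_pos hsd, awdd, if_pos hsd]
    have h1 : (1 - δ n) ^ (q/(q-1)) ≤ 1 - δ n := by
      have hppne : q/(q-1) ≠ 0 := by
        have h2 := awqq1 (q := q) hq1
        intro hc
        rw [hc] at h2
        linarith
      rcases eq_or_lt_of_le (hδ n).2 with h | h
      · rw [h, sub_self, Real.zero_rpow hppne]
      · calc (1 - δ n) ^ (q/(q-1)) ≤ (1 - δ n) ^ (1:ℝ) :=
            Real.rpow_le_rpow_of_exponent_ge (by linarith) (by
              have := (hδ n).1; linarith) (awqq1 hq1)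
          _ = 1 - δ n := Real.rpow_one _
    have h2 : (1/(m:ℝ)) * t (n+1) ^ (q/(q-1)) ≤ δ n := hsd.2
    linarith
  · rw [if_neg hsd, awdd, if_neg hsd, sub_zero, Real.one_rpow]
    norm_num

include hδ in
lemma awF_exists : ∃ F : ellq q →L[ℝ] ℝ, ‖F‖ ≤ 1 ∧
    ∀ x : ellq q, F x = ∑' j, awA q t δ η m hq1 hm ht hsum n j * x j := by
  refine awcga_exists_functional hq1 _ (awA_nonneg hq1 hm ht hδ hsum n)
    (awA_pow_hasSum hq1 hm ht hδ hsum n).summable ?_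
  rw [(awA_pow_hasSum hq1 hm ht hδ hsum n).tsum_eq]
  exact awA_sum_value_le_one hq1 hm ht hδ hsum n

lemma awA_mul_FS_eq (j : ℕ) :
    awA q t δ η m hq1 hm ht hsum n j * awFS q t δ η m n j
      = awc1 q t δ η m hq1 hm ht hsum n * |awFS q t δ η m n j| ^ q := by
  have hq0 : (0:ℝ) < q := awq0 hq1
  have hFS0 : 0 ≤ awFS q t δ η m n j := awFS_nonneg hm ht n j
  rw [awA]
  by_cases h : awSd q t δ η m n ∧ j = m + 2*n
  · have hdis : awFS q t δ η m n j = 0 := by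
      rw [h.2]; exact awFS_dis n n
    rw [hdis, mul_zero, abs_zero, Real.zero_rpow (ne_of_gt hq0), mul_zero]
  · rw [if_neg h, add_zero, mul_assoc]
    congr 1
    rw [abs_of_nonneg hFS0]
    rcases eq_or_lt_of_le hFS0 with h0 | h0
    · rw [← h0, Real.zero_rpow (by linarith : q - 1 ≠ 0), zero_mul,
        Real.zero_rpow (ne_of_gt hq0)]
    · calc awFS q t δ η m n j ^ (q-1) * awFS q t δ η m n j
          = awFS q t δ η m n j ^ (q-1) * awFS q t δ η m n j ^ (1:ℝ) := by
            rw [Real.rpow_one]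
        _ = awFS q t δ η m n j ^ (q-1+1) := (Real.rpow_add h0 _ _).symm
        _ = awFS q t δ η m n j ^ q := by norm_num

include hδ in
lemma awtsum_A_FS :
    ∑' j, awA q t δ η m hq1 hm ht hsum n j * awFS q t δ η m n j
      = (1 - awdd q t δ η m n) * ‖awfs q t δ η m hq1 hm ht hsum n‖ := by
  have hR : (0:ℝ) < ‖awfs q t δ η m hq1 hm ht hsum n‖ :=
    lt_of_lt_of_le one_pos (awR_ge_one hq1 hm ht hsum n)
  have heq : (fun j => awA q t δ η m hq1 hm ht hsum n j * awFS q t δ η m n j)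
      = fun j => awc1 q t δ η m hq1 hm ht hsum n * |awFS q t δ η m n j| ^ q :=
    funext (awA_mul_FS_eq hq1 hm ht hsum n)
  rw [heq]
  have h := (hasSum_awFS hq1 hm ht hsum n).mul_left
    (awc1 q t δ η m hq1 hm ht hsum n)
  rw [← awR_pow hq1 hm ht hsum n] at h
  rw [h.tsum_eq, awc1, div_mul_eq_mul_div, mul_div_assoc]
  congr 1
  rw [← Real.rpow_sub hR]
  have h1 : q - (q-1) = 1 := by ring
  rw [h1, Real.rpow_one]

end FunctionalFacts
end MainFunctional

section MainGreedy
set_option linter.unusedSectionVars false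
set_option linter.unusedVariables false
open Classical Filter

variable {q : ℝ} [Fact (1 ≤ ENNReal.ofReal q)] {t δ η : ℕ → ℝ} {m : ℕ}

def awD (q : ℝ) [Fact (1 ≤ ENNReal.ofReal q)] : Set (ellq q) :=
  {g | ∃ j : ℕ, g = awcga_eV q j ∨ g = - awcga_eV q j}

lemma awD_dict (hq1 : 1 < q) : IsDictionary (awD q) := by
  refine ⟨?_, ?_, ?_⟩
  · rintro g ⟨j, rfl | rfl⟩
    · exact awcga_eV_norm (awq0 hq1) j
    · rw [norm_neg]
      exact awcga_eV_norm (awq0 hq1) j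
  · rintro g ⟨j, rfl | rfl⟩
    · exact ⟨j, Or.inr rfl⟩
    · exact ⟨j, Or.inl (neg_neg _)⟩
  · exact awcga_dense (awq0 hq1) _ (fun j => ⟨j, Or.inl rfl⟩)

def awpick (q : ℝ) (t δ η : ℕ → ℝ) (m : ℕ) (n : ℕ) : ℕ :=
  if awForced q t δ η m n then m + 2*n + 1
  else if awSd q t δ η m n then m + 2*n else m + 1

def awφ (q : ℝ) [Fact (1 ≤ ENNReal.ofReal q)] (t δ η : ℕ → ℝ) (m : ℕ) :
    ℕ → ellq q := fun k =>
  if k = 0 then awcga_eV q 0 else awcga_eV q (awpick q t δ η m (k-1))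

lemma awφ_succ (k : ℕ) : awφ q t δ η m (k+1) = awcga_eV q (awpick q t δ η m k) := by
  rw [awφ]
  norm_num

lemma awpick_zero : awpick q t δ η m 0 = m + 1 := by
  rw [awpick, if_pos (show awForced q t δ η m 0 from Or.inl rfl)]

lemma awφ_one : awφ q t δ η m 1 = awcga_eV q (m+1) := by
  rw [awφ_succ, awpick_zero]

section GreedyFacts

variable (hq1 : 1 < q) (hm : 1 ≤ m) (ht : IsWeaknessSeq t)
  (hδ : IsPerturbationSeq δ) (hsum : awHsum q t δ η m) (n : ℕ)

include hq1 hm ht in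
lemma awpow_tq (n : ℕ) : (t (n+1) ^ (1/(q-1)) * aww q m) ^ (q-1)
    = t (n+1) * (aww q m) ^ (q-1) := by
  rw [Real.mul_rpow (Real.rpow_nonneg (awt0 ht n) _) (aww_pos hm).le]
  congr 1
  rw [← Real.rpow_mul (awt0 ht n)]
  rw [show (1/(q-1)) * (q-1) = 1 by
    have h' : q - 1 ≠ 0 := by linarith
    field_simp]
  exact Real.rpow_one _

include hq1 hm ht in
lemma awFS_pick_forced (hf : awForced q t δ η m n) :
    awFS q t δ η m n (m + 2*n + 1) = t (n+1) ^ (1/(q-1)) * aww q m := by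
  rcases Nat.eq_zero_or_pos n with h0 | h0
  · subst h0
    rw [show m + 2*0 + 1 = m + 1 by ring, awFS_m1, awc, if_pos rfl, awγ, if_pos hf]
  · rw [awFS_pay (by omega : 1 ≤ n), if_pos le_rfl, awγ, if_pos hf]

lemma awSd_not_of_forced (hf : awForced q t δ η m n) : ¬ awSd q t δ η m n :=
  fun hsd => hsd.1 hf

lemma awSd_not_of_se (hse : awSe q t δ η m n) : ¬ awSd q t δ η m n :=
  fun hsd => hse.2 hsd.2

include hq1 hm ht in
lemma awA_pick_forced (hf : awForced q t δ η m n) :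
    awA q t δ η m hq1 hm ht hsum n (m + 2*n + 1)
      = awc1 q t δ η m hq1 hm ht hsum n * (t (n+1) * (aww q m) ^ (q-1)) := by
  rw [awA, if_neg (fun hc => awSd_not_of_forced n hf hc.1), add_zero,
    awFS_pick_forced hq1 hm ht n hf, awpow_tq hq1 hm ht n]

include hq1 hm ht in
lemma awA_pick_se (hse : awSe q t δ η m n) :
    awA q t δ η m hq1 hm ht hsum n (m + 1)
      = awc1 q t δ η m hq1 hm ht hsum n * (t (n+1) * (aww q m) ^ (q-1)) := by
  have hn1 : 1 ≤ n := (awSe_eta q t δ η m n hse).1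
  rw [awA, if_neg (fun hc => awSd_not_of_se n hse hc.1), add_zero,
    awFS_m1, awc, if_neg (by omega), if_pos hse, awpow_tq hq1 hm ht n]

include hq1 hm ht in
lemma awA_pick_sd (hsd : awSd q t δ η m n) :
    awA q t δ η m hq1 hm ht hsum n (m + 2*n) = awbb q t m n := by
  rw [awA, if_pos ⟨hsd, rfl⟩, awFS_dis,
    Real.zero_rpow (by linarith : q - 1 ≠ 0), mul_zero, zero_add]

include hδ in
lemma awA_le_max (j : ℕ) : awA q t δ η m hq1 hm ht hsum n j
    ≤ max (awc1 q t δ η m hq1 hm ht hsum n * (aww q m) ^ (q-1))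
        (if awSd q t δ η m n then awbb q t m n else 0) := by
  rw [awA]
  by_cases h : awSd q t δ η m n ∧ j = m + 2*n
  · rw [if_pos h]
    have hdis : awFS q t δ η m n j = 0 := by rw [h.2]; exact awFS_dis n n
    rw [hdis, Real.zero_rpow (by linarith : q - 1 ≠ 0), mul_zero, zero_add]
    rw [if_pos h.1] at *
    exact le_max_right _ _
  · rw [if_neg h, add_zero]
    refine le_trans ?_ (le_max_left _ _)
    refine mul_le_mul_of_nonneg_left ?_ (awc1_nonneg hq1 hm ht hδ hsum n)
    exact Real.rpow_le_rpow (awFS_nonneg hm ht n j) (awFS_le_w hq1 hm ht n j)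
      (by linarith)

include hδ in
lemma awmax_nonneg : 0 ≤ max (awc1 q t δ η m hq1 hm ht hsum n * (aww q m) ^ (q-1))
    (if awSd q t δ η m n then awbb q t m n else 0) :=
  le_trans (mul_nonneg (awc1_nonneg hq1 hm ht hδ hsum n)
    (Real.rpow_nonneg (aww_pos hm).le _)) (le_max_left _ _)

include hδ in
lemma awF_apply_eV (F : ellq q →L[ℝ] ℝ)
    (hF : ∀ x : ellq q, F x = ∑' j, awA q t δ η m hq1 hm ht hsum n j * x j) (i : ℕ) :
    F (awcga_eV q i) = awA q t δ η m hq1 hm ht hsum n i := by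
  rw [hF]
  have heq : (fun j => awA q t δ η m hq1 hm ht hsum n j * (awcga_eV q i) j)
      = fun j => if j = i then awA q t δ η m hq1 hm ht hsum n i else 0 := by
    funext j
    rw [awcga_eV_apply]
    by_cases hj : j = i
    · subst hj
      rw [if_pos rfl, if_pos rfl, mul_one]
    · rw [if_neg hj, if_neg hj, mul_zero]
  rw [heq]
  exact (hasSum_ite_eq i _).tsum_eq

include hδ in
lemma awsSup_le (F : ellq q →L[ℝ] ℝ)
    (hF : ∀ x : ellq q, F x = ∑' j, awA q t δ η m hq1 hm ht hsum n j * x j) :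
    sSup ((fun g => F g) '' awD q)
      ≤ max (awc1 q t δ η m hq1 hm ht hsum n * (aww q m) ^ (q-1))
          (if awSd q t δ η m n then awbb q t m n else 0) := by
  refine Real.sSup_le ?_ (awmax_nonneg hq1 hm ht hδ hsum n)
  rintro y ⟨g, ⟨j, rfl | rfl⟩, rfl⟩
  · show F (awcga_eV q j) ≤ _
    rw [awF_apply_eV hq1 hm ht hδ hsum n F hF j]
    exact awA_le_max hq1 hm ht hδ hsum n j
  · show F (- awcga_eV q j) ≤ _
    simp only [map_neg]
    rw [awF_apply_eV hq1 hm ht hδ hsum n F hF j]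
    refine le_trans (neg_nonpos_of_nonneg (awA_nonneg hq1 hm ht hδ hsum n j)) ?_
    exact awmax_nonneg hq1 hm ht hδ hsum n

include hδ in
lemma awgreedy (F : ellq q →L[ℝ] ℝ)
    (hF : ∀ x : ellq q, F x = ∑' j, awA q t δ η m hq1 hm ht hsum n j * x j) :
    F (awφ q t δ η m (n+1)) ≥ t (n+1) * sSup ((fun g => F g) '' awD q) := by
  have hsup := awsSup_le hq1 hm ht hδ hsum n F hF
  have ht0 := awt0 ht n
  have hub := mul_le_mul_of_nonneg_left hsup ht0
  refine le_trans hub ?_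
  rw [awφ_succ]
  rcases awCases q t δ η m n with hf | hsd | hse
  · have hpick : awpick q t δ η m n = m + 2*n + 1 := by
      rw [awpick, if_pos hf]
    rw [hpick, awF_apply_eV hq1 hm ht hδ hsum n F hF,
      awA_pick_forced hq1 hm ht hsum n hf]
    rw [if_neg (awSd_not_of_forced n hf)]
    rw [max_eq_left (mul_nonneg (awc1_nonneg hq1 hm ht hδ hsum n)
      (Real.rpow_nonneg (aww_pos hm).le _))]
    ring_nf
    exact le_rfl
  · have hpick : awpick q t δ η m n = m + 2*n := by
      rw [awpick, if_neg hsd.1, if_pos hsd]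
    rw [hpick, awF_apply_eV hq1 hm ht hδ hsum n F hF,
      awA_pick_sd hq1 hm ht hsum n hsd, if_pos hsd]
    rw [mul_max_of_nonneg _ _ ht0]
    refine max_le ?_ ?_
    · rw [awbb]
      calc t (n+1) * (awc1 q t δ η m hq1 hm ht hsum n * (aww q m) ^ (q-1))
          ≤ t (n+1) * (1 * (aww q m) ^ (q-1)) := by
            refine mul_le_mul_of_nonneg_left ?_ ht0
            exact mul_le_mul_of_nonneg_right (awc1_le_one hq1 hm ht hδ hsum n)
              (Real.rpow_nonneg (aww_pos hm).le _)
        _ = (aww q m) ^ (q-1) * t (n+1) := by ring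
    · exact mul_le_of_le_one_left (awbb_nonneg hm ht n) (awt1 ht n)
  · have hn1 : 1 ≤ n := (awSe_eta q t δ η m n hse).1
    have hpick : awpick q t δ η m n = m + 1 := by
      rw [awpick, if_neg hse.1, if_neg (awSd_not_of_se n hse)]
    rw [hpick, awF_apply_eV hq1 hm ht hδ hsum n F hF,
      awA_pick_se hq1 hm ht hsum n hse]
    rw [if_neg (awSd_not_of_se n hse)]
    rw [max_eq_left (mul_nonneg (awc1_nonneg hq1 hm ht hδ hsum n)
      (Real.rpow_nonneg (aww_pos hm).le _))]
    ring_nf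
    exact le_rfl

end GreedyFacts
end MainGreedy

section MainG
set_option linter.unusedSectionVars false
set_option linter.unusedVariables false
open Classical Filter

variable {q : ℝ} [Fact (1 ≤ ENNReal.ofReal q)] {t δ η : ℕ → ℝ} {m : ℕ}

lemma awroot_le (hq1 : 1 < q) {a b : ℝ} (ha : 0 ≤ a) (hb : 0 ≤ b)
    (h : a ^ q ≤ b ^ q) : a ≤ b := by
  have hq0 : (0:ℝ) < q := awq0 hq1
  have h1 := Real.rpow_le_rpow (Real.rpow_nonneg ha q) h (by positivity : (0:ℝ) ≤ 1/q)
  rwa [← Real.rpow_mul ha, ← Real.rpow_mul hb, mul_one_div_cancel (ne_of_gt hq0),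
    Real.rpow_one, Real.rpow_one] at h1

lemma awone_le_rpow {x z : ℝ} (hx : 1 ≤ x) (hz : 0 ≤ z) : 1 ≤ x ^ z := by
  calc (1:ℝ) = 1 ^ z := (Real.one_rpow z).symm
    _ ≤ x ^ z := Real.rpow_le_rpow zero_le_one hx hz

def awG (q : ℝ) [Fact (1 ≤ ENNReal.ofReal q)] (t δ η : ℕ → ℝ) (m : ℕ)
    (hq1 : 1 < q) (hm : 1 ≤ m) (ht : IsWeaknessSeq t) (hsum : awHsum q t δ η m)
    (n : ℕ) : ellq q :=
  awfs q t δ η m hq1 hm ht hsum 0 - awfs q t δ η m hq1 hm ht hsum n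

section GFacts

variable (hq1 : 1 < q) (hm : 1 ≤ m) (ht : IsWeaknessSeq t)
  (hη : IsErrorSeq η) (hsum : awHsum q t δ η m)

include hq1 hm ht hsum in
lemma awG_eq (n : ℕ) (hn : 1 ≤ n) :
    awG q t δ η m hq1 hm ht hsum n
      = (awγ q t δ η m 0 - awc q t δ η m n) • awφ q t δ η m 1
        + ∑ k ∈ Finset.Ico 1 n, awγ q t δ η m k • awcga_eV q (m+2*k+1) := by
  apply lp.ext
  funext j
  simp only [awG, lp.coeFn_sub, Pi.sub_apply, lp.coeFn_add, Pi.add_apply,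
    lp.coeFn_smul, Pi.smul_apply, lp.coeFn_sum, Finset.sum_apply, smul_eq_mul,
    awφ_one, awcga_eV_apply, awfs_apply]
  rcases lt_or_ge j m with hj | hj
  · rw [awFS_lt hj, awFS_lt hj, if_neg (by omega), sub_self, mul_zero, zero_add]
    refine (Finset.sum_eq_zero ?_).symm
    intro k hk
    rw [Finset.mem_Ico] at hk
    rw [if_neg (by omega), mul_zero]
  · by_cases hj1 : j = m + 1
    · subst hj1
      rw [awFS_m1, awFS_m1, if_pos rfl, mul_one]
      have h0 : awc q t δ η m 0 = awγ q t δ η m 0 := by rw [awc, if_pos rfl]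
      rw [h0]
      have hsum0 : ∑ k ∈ Finset.Ico 1 n,
          awγ q t δ η m k * (if (m+1 : ℕ) = m+2*k+1 then (1:ℝ) else 0) = 0 := by
        refine Finset.sum_eq_zero fun k hk => ?_
        rw [Finset.mem_Ico] at hk
        rw [if_neg (by omega), mul_zero]
      rw [hsum0, add_zero]
    · by_cases hodd : (j - m) % 2 = 1
      · have hk01 : 1 ≤ (j - m)/2 := by omega
        have hjk0 : j = m + 2*((j - m)/2) + 1 := by omega
        have hFS0 : awFS q t δ η m 0 j = awγ q t δ η m ((j - m)/2) := by
          conv_lhs => rw [hjk0]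
          rw [awFS_pay hk01, if_pos (Nat.zero_le _)]
        have hFSn : awFS q t δ η m n j
            = if n ≤ (j - m)/2 then awγ q t δ η m ((j - m)/2) else 0 := by
          conv_lhs => rw [hjk0]
          rw [awFS_pay hk01]
        rw [hFS0, hFSn, if_neg hj1, mul_zero, zero_add]
        by_cases hkn : (j - m)/2 < n
        · rw [if_neg (by omega), sub_zero]
          rw [Finset.sum_eq_single ((j - m)/2)]
          · rw [if_pos hjk0, mul_one]
          · intro b hb hbne
            rw [Finset.mem_Ico] at hb
            rw [if_neg (by omega), mul_zero]
          · intro habs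
            exact ((habs (Finset.mem_Ico.mpr ⟨hk01, hkn⟩)).elim)
        · rw [if_pos (by omega), sub_self]
          refine (Finset.sum_eq_zero fun b hb => ?_).symm
          rw [Finset.mem_Ico] at hb
          rw [if_neg (by omega), mul_zero]
      · have hz : ∀ n', awFS q t δ η m n' j = 0 := by
          intro n'
          rw [awFS, if_neg (by omega), if_neg hj1]
          exact if_neg (fun hc => hodd hc.1)
        rw [hz 0, hz n, sub_self, if_neg hj1, mul_zero, zero_add]
        refine (Finset.sum_eq_zero fun b hb => ?_).symm
        rw [Finset.mem_Ico] at hb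
        rw [if_neg (by omega), mul_zero]

include hq1 hm ht hsum in
lemma awG_mem (n : ℕ) (hn : 1 ≤ n) :
    awG q t δ η m hq1 hm ht hsum n
      ∈ Submodule.span ℝ (awφ q t δ η m '' Set.Icc 1 n) := by
  rw [awG_eq hq1 hm ht hsum n hn]
  refine Submodule.add_mem _ ?_ ?_
  · refine Submodule.smul_mem _ _ (Submodule.subset_span ?_)
    exact ⟨1, Set.mem_Icc.mpr ⟨le_refl 1, hn⟩, rfl⟩
  · refine Submodule.sum_mem _ fun k hk => ?_
    rw [Finset.mem_Ico] at hk
    by_cases hf : awForced q t δ η m k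
    · have heq : awcga_eV q (m+2*k+1) = awφ q t δ η m (k+1) := by
        rw [awφ_succ, awpick, if_pos hf]
      rw [heq]
      refine Submodule.smul_mem _ _ (Submodule.subset_span ?_)
      exact ⟨k+1, Set.mem_Icc.mpr ⟨by omega, by omega⟩, rfl⟩
    · rw [awγ, if_neg hf, zero_smul]
      exact Submodule.zero_mem _

end GFacts

def awe (q : ℝ) (t δ η : ℕ → ℝ) (m : ℕ) (n : ℕ) : ℝ :=
  (1 + awT q t δ η m n) ^ (1/q)

section EFacts

variable (hq1 : 1 < q) (hm : 1 ≤ m) (ht : IsWeaknessSeq t)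
  (hη : IsErrorSeq η) (hsum : awHsum q t δ η m)

include hq1 hm ht in
lemma awe_pow (n : ℕ) : (awe q t δ η m n) ^ q = 1 + awT q t δ η m n := by
  have hT := awT_nonneg (q := q) (δ := δ) (η := η) hm ht n
  rw [awe, ← Real.rpow_mul (by linarith)]
  rw [show 1/q * q = 1 by field_simp]
  exact Real.rpow_one _

include hq1 hm ht in
lemma awe_ge_one (n : ℕ) : 1 ≤ awe q t δ η m n := by
  have hT := awT_nonneg (q := q) (δ := δ) (η := η) hm ht n
  have hq0 := awq0 hq1
  exact awone_le_rpow (by linarith) (by positivity)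

lemma awpick_mem_P (n k : ℕ) (hk : k < n) :
    awpick q t δ η m k ∈ {j | ∃ k', k' < n ∧ (j = m + 2*k' ∨ j = m + 2*k' + 1)} := by
  rw [awpick]
  split
  · exact ⟨k, hk, Or.inr rfl⟩
  split
  · exact ⟨k, hk, Or.inl rfl⟩
  · have hn : 0 < n := by omega
    exact ⟨0, hn, Or.inr (by omega)⟩

include hq1 hm ht hsum in
lemma awapprox_ge (n : ℕ) (hn : 1 ≤ n) :
    awe q t δ η m n
      ≤ approxError (awfs q t δ η m hq1 hm ht hsum 0) (awφ q t δ η m) n := by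
  refine awcga_approxError_ge _ _ _
    {j | ∃ k', k' < n ∧ (j = m + 2*k' ∨ j = m + 2*k' + 1)} ?_ ?_
  · intro k hk j hj
    rw [Set.mem_Icc] at hk
    have hk0 : k ≠ 0 := by omega
    have hφ : awφ q t δ η m k = awcga_eV q (awpick q t δ η m (k-1)) := by
      rw [awφ, if_neg hk0]
    rw [hφ, awcga_eV_apply]
    refine if_neg (fun hjp => hj ?_)
    rw [hjp]
    exact awpick_mem_P n (k-1) (by omega)
  · intro g hg
    have hnn : ∀ j, 0 ≤ awf1 q m j + awf3 q t δ η m n j := by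
      intro j
      refine add_nonneg ?_ ?_
      · rw [awf1]; split
        · exact Real.rpow_nonneg (aww_pos hm).le q
        · exact le_rfl
      · rw [awf3]; split
        · exact Real.rpow_nonneg (awγ_nonneg hm ht _) q
        · exact le_rfl
    have hhs := (hasSum_awf1 hq1 hm).add (hasSum_awf3 hq1 hm ht hsum n)
    have h := awcga_norm_sub_ge hq1 (awfs q t δ η m hq1 hm ht hsum 0) g _ hg
      (fun j => awf1 q m j + awf3 q t δ η m n j) hnn hhs.summable ?_ ?_
    · rw [hhs.tsum_eq] at h
      exact h
    · -- pointwise ≤ |f j|^q  (true for all j)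
      intro j _
      show awf1 q m j + awf3 q t δ η m n j ≤ _
      have hpw := awFS_pointwise (δ := δ) (η := η) hq1 hm ht 0 j
      rw [awfs_apply]
      rw [hpw]
      have h1 : awf3 q t δ η m n j ≤ awf3 q t δ η m 0 j := by
        rw [awf3, awf3]
        split
        · rename_i hc
          rw [if_pos ⟨hc.1, hc.2.1, hc.2.2.1, Nat.zero_le _⟩]
        · split
          · rename_i h2
            exact Real.rpow_nonneg (awγ_nonneg hm ht _) q
          · exact le_rfl
      have h2 : (0:ℝ) ≤ (if j = m+1 then (awc q t δ η m 0)^q else 0) := by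
        split
        · exact Real.rpow_nonneg (awc_nonneg hm ht _) q
        · exact le_rfl
      linarith
    · -- vanishing on P
      rintro j ⟨k', hk', hjk⟩
      have h1 : awf1 q m j = 0 := by
        rw [awf1]
        exact if_neg (by omega)
      have h2 : awf3 q t δ η m n j = 0 := by
        rw [awf3]
        refine if_neg (fun hc => ?_)
        rcases hjk with h | h <;> omega
      show awf1 q m j + awf3 q t δ η m n j = 0
      rw [h1, h2, add_zero]

include hq1 hm ht hη hsum in
lemma awR_le (n : ℕ) (hn : 1 ≤ n) :
    ‖awfs q t δ η m hq1 hm ht hsum n‖ ≤ (1 + η n) * awe q t δ η m n := by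
  have hη0 : 0 ≤ η n := hη n hn
  have he1 : 1 ≤ awe q t δ η m n := awe_ge_one hq1 hm ht n
  have hq0 := awq0 hq1
  have heq : 1 ≤ (awe q t δ η m n) ^ q := awone_le_rpow he1 hq0.le
  have hRq : ‖awfs q t δ η m hq1 hm ht hsum n‖ ^ q
      = (awe q t δ η m n)^q + (awc q t δ η m n)^q := by
    rw [awR_pow hq1 hm ht hsum n, awe_pow hq1 hm ht n]
    ring
  have h1η : (1:ℝ) + η n ≤ (1 + η n) ^ q := by
    have := Real.rpow_le_rpow_of_exponent_le (by linarith : (1:ℝ) ≤ 1 + η n)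
      (by linarith : (1:ℝ) ≤ q)
    rwa [Real.rpow_one] at this
  have h1η' : (1:ℝ) ≤ (1 + η n) ^ q := by linarith
  by_cases hse : awSe q t δ η m n
  · have hc : (awc q t δ η m n)^q ≤ η n := by
      rw [awc_q_of_ne hq1 hm ht n (by omega), if_pos hse]
      exact le_trans (le_rfl) (awSe_eta q t δ η m n hse).2
    have h2 : ‖awfs q t δ η m hq1 hm ht hsum n‖ ^ q
        ≤ ((1 + η n) * awe q t δ η m n)^q := by
      rw [Real.mul_rpow (by linarith) (by linarith)]
      calc ‖awfs q t δ η m hq1 hm ht hsum n‖ ^ q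
          = (awe q t δ η m n)^q + (awc q t δ η m n)^q := hRq
        _ ≤ (awe q t δ η m n)^q + η n := by linarith
        _ ≤ (awe q t δ η m n)^q * (1 + η n) := by nlinarith
        _ ≤ (awe q t δ η m n)^q * (1 + η n)^q :=
            mul_le_mul_of_nonneg_left h1η (by linarith)
        _ = (1 + η n)^q * (awe q t δ η m n)^q := by ring
    exact awroot_le hq1 (norm_nonneg _) (mul_nonneg (by linarith) (by linarith)) h2
  · have hc : awc q t δ η m n = 0 := by
      rw [awc, if_neg (by omega)]
      exact if_neg hse
    have h2 : ‖awfs q t δ η m hq1 hm ht hsum n‖ ^ q ≤ ((1 + η n) * awe q t δ η m n)^q := by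
      rw [hRq, hc, Real.zero_rpow (ne_of_gt hq0), add_zero,
        Real.mul_rpow (by linarith) (by linarith)]
      calc (awe q t δ η m n)^q = 1 * (awe q t δ η m n)^q := (one_mul _).symm
        _ ≤ (1 + η n)^q * (awe q t δ η m n)^q :=
            mul_le_mul_of_nonneg_right h1η' (by linarith)
    exact awroot_le hq1 (norm_nonneg _) (mul_nonneg (by linarith) (by linarith)) h2

end EFacts
end MainG

/-- Necessity of the conditions for convergence of the AWCGA (Theorem 1.3, necessity). -/
theorem stmt_1 (q p : ℝ) [Fact (1 ≤ ENNReal.ofReal q)] (hq1 : 1 < q) (hq2 : q ≤ 2)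
    (hp : p = q / (q - 1))
    (t δ η : ℕ → ℝ) (ht : IsWeaknessSeq t) (hδ : IsPerturbationSeq δ)
    (hη : IsErrorSeq η) (hηbdd : ∃ C : ℝ, ∀ m, 1 ≤ m → η m ≤ C)
    (hfail : ∀ n : ℕ → ℕ, StrictMono n → (∀ k, 1 ≤ n k) →
      ¬ ((¬ Summable (fun k => t (n k + 1) ^ p)) ∧
        IsLittleO (fun k => δ (n k)) (fun k => t (n k + 1) ^ p) ∧
        IsLittleO (fun k => η (n k)) (fun k => t (n k + 1) ^ p))) :
    ∃ D : Set (ellq q), IsDictionary D ∧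
      ∃ (f : ellq q) (r : AWCGARealization D f t δ η),
        ¬ Tendsto (fun m => ‖r.fs m‖) atTop (nhds 0) := by
  
  classical
  subst hp
  have hq0 : 0 < q := lt_trans one_pos hq1
  obtain ⟨m, hm, hsum'⟩ :=
    awcga_extraction (q/(q-1)) t δ η (fun n hn => (ht n hn).1) hfail
  have hsum : awHsum q t δ η m := by
    have hEq : (fun n => if n ∈ awS q t δ η m then t (n+1) ^ (q/(q-1)) else 0)
        = (fun n => if 1 ≤ n ∧ δ n < 1/(m:ℝ) * t (n+1) ^ (q/(q-1))
            ∧ η n < 1/(m:ℝ) * t (n+1) ^ (q/(q-1))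
          then t (n+1) ^ (q/(q-1)) else 0) := by
      funext n
      exact if_congr Iff.rfl rfl rfl
    rw [awHsum, hEq]
    exact hsum'
  choose Fn hFn1 hFn2 using fun n => awF_exists hq1 hm ht hδ hsum n
  refine ⟨awD q, awD_dict hq1, awfs q t δ η m hq1 hm ht hsum 0,
    ⟨Fn, awφ q t δ η m, fun n => awG q t δ η m hq1 hm ht hsum n,
      awfs q t δ η m hq1 hm ht hsum, rfl, hFn1, ?_, ?_, ?_, ?_, ?_, ?_⟩, ?_⟩
  · -- F_norming
    intro n
    have hval : Fn n (awfs q t δ η m hq1 hm ht hsum n)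
        = (1 - awdd q t δ η m n) * ‖awfs q t δ η m hq1 hm ht hsum n‖ := by
      rw [hFn2 n]
      exact awtsum_A_FS hq1 hm ht hδ hsum n
    rw [hval]
    have hdd := awdd_le_delta (q := q) (t := t) (η := η) (m := m) hδ n
    exact mul_le_mul_of_nonneg_right (by linarith) (norm_nonneg _)
  · -- φ_mem
    intro n
    rw [awφ_succ]
    exact ⟨awpick q t δ η m n, Or.inl rfl⟩
  · -- φ_greedy
    intro n
    exact awgreedy hq1 hm ht hδ hsum n (Fn n) (hFn2 n)
  · -- G_mem
    intro n
    exact awG_mem hq1 hm ht hsum (n+1) (by omega)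
  · -- G_near
    intro n
    have hfG : awfs q t δ η m hq1 hm ht hsum 0 - awG q t δ η m hq1 hm ht hsum (n+1)
        = awfs q t δ η m hq1 hm ht hsum (n+1) := sub_sub_cancel _ _
    rw [hfG]
    have hη0 : 0 ≤ η (n+1) := hη (n+1) (by omega)
    calc ‖awfs q t δ η m hq1 hm ht hsum (n+1)‖
        ≤ (1 + η (n+1)) * awe q t δ η m (n+1) :=
          awR_le hq1 hm ht hη hsum (n+1) (by omega)
      _ ≤ (1 + η (n+1)) * approxError (awfs q t δ η m hq1 hm ht hsum 0)
            (awφ q t δ η m) (n+1) :=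
          mul_le_mul_of_nonneg_left
            (awapprox_ge hq1 hm ht hsum (n+1) (by omega)) (by linarith)
  · -- fs_succ
    intro n
    exact (sub_sub_cancel _ _).symm
  · -- divergence
    intro hT
    have h2 : ∀ᶠ k in atTop, ‖awfs q t δ η m hq1 hm ht hsum k‖ < 1 :=
      hT.eventually (eventually_lt_nhds one_pos)
    obtain ⟨k, hk⟩ := h2.exists
    exact absurd hk (not_lt.mpr (awR_ge_one hq1 hm ht hsum k))
end
end

section
/- Let 1 < q ≤ 2 and γ > 0, and let X be a real Banach space whose modulus of smoothness satisfies ρ(u) ≤ γ u^q for all u ≥ 0. Let (t_n)_{n≥1} be a weakness sequence with liminf_{n→∞} t_n > 0, let (δ_n)_{n≥0} be a perturbation sequence and (η_n)_{n≥1} a bounded error sequence with liminf_{n→∞} (δ_n + η_n) = 0. Then for every dictionary D in X, every f ∈ X, and every realization of the AWCGA of f with these sequences, ‖f_n‖ → 0. -/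
open Filter

noncomputable section

variable {X : Type} [NormedAddCommGroup X] [NormedSpace ℝ X]

set_option maxHeartbeats 1000000

private lemma aux_rpow_choice (q K c : ℝ) (hq : 1 < q) (hK : 0 < K) (hc : 0 < c) :
    ∃ lam : ℝ, 0 < lam ∧ K * lam ^ (q - 1) ≤ c := by
  have hq1 : (0:ℝ) < q - 1 := by linarith
  set x := min 1 (c / K) with hx
  have hx0 : 0 < x := lt_min one_pos (div_pos hc hK)
  refine ⟨x ^ (1 / (q - 1)), Real.rpow_pos_of_pos hx0 _, ?_⟩
  have : (x ^ (1 / (q - 1))) ^ (q - 1) = x := by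
    rw [← Real.rpow_mul hx0.le, one_div, inv_mul_cancel₀ (ne_of_gt hq1), Real.rpow_one]
  rw [this]
  calc K * x ≤ K * (c / K) := by
        exact mul_le_mul_of_nonneg_left (min_le_right _ _) hK.le
    _ = c := by field_simp

private lemma aux_smooth {X : Type} [NormedAddCommGroup X] [NormedSpace ℝ X]
    (q γ : ℝ)
    (hρ : ∀ u : ℝ, 0 ≤ u → modulusOfSmoothness X u ≤ γ * u ^ q)
    (x y : X) (lam : ℝ) (hlam : 0 ≤ lam) (hx : 0 < ‖x‖) (hy : ‖y‖ = 1) :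
    ‖x + lam • y‖ + ‖x - lam • y‖ ≤ 2 * ‖x‖ + 2 * γ * (lam / ‖x‖) ^ q * ‖x‖ := by
  set aX := ‖x‖ with haX
  set u := lam / aX with hu
  have hu0 : 0 ≤ u := div_nonneg hlam hx.le
  set x' := aX⁻¹ • x with hx'
  have hx'1 : ‖x'‖ = 1 := by
    rw [hx', norm_smul, norm_inv, Real.norm_eq_abs, abs_of_pos hx, ← haX,
      inv_mul_cancel₀ (ne_of_gt hx)]
  have hbdd : BddAbove {r : ℝ | ∃ p z : X, ‖p‖ = 1 ∧ ‖z‖ = 1 ∧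
      r = (‖p + u • z‖ + ‖p - u • z‖) / 2 - 1} := by
    refine ⟨|u|, fun s hs => ?_⟩
    obtain ⟨p, z, hp, hz, rfl⟩ := hs
    have h1 : ‖p + u • z‖ ≤ 1 + |u| := by
      calc ‖p + u • z‖ ≤ ‖p‖ + ‖u • z‖ := norm_add_le _ _
        _ = 1 + |u| := by rw [hp, norm_smul, Real.norm_eq_abs, hz, mul_one]
    have h2 : ‖p - u • z‖ ≤ 1 + |u| := by
      calc ‖p - u • z‖ ≤ ‖p‖ + ‖u • z‖ := norm_sub_le _ _
        _ = 1 + |u| := by rw [hp, norm_smul, Real.norm_eq_abs, hz, mul_one]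
    linarith
  have hmem : ((‖x' + u • y‖ + ‖x' - u • y‖) / 2 - 1) ∈ {r : ℝ | ∃ p z : X, ‖p‖ = 1 ∧ ‖z‖ = 1 ∧
      r = (‖p + u • z‖ + ‖p - u • z‖) / 2 - 1} := ⟨x', y, hx'1, hy, rfl⟩
  have key : (‖x' + u • y‖ + ‖x' - u • y‖) / 2 - 1 ≤ γ * u ^ q :=
    (le_csSup hbdd hmem).trans (hρ u hu0)
  have hxx : x + lam • y = aX • (x' + u • y) := by
    rw [smul_add, hx', smul_smul, mul_inv_cancel₀ (ne_of_gt hx), one_smul, smul_smul, hu,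
      mul_div_cancel₀ _ (ne_of_gt hx)]
  have hxx' : x - lam • y = aX • (x' - u • y) := by
    rw [smul_sub, hx', smul_smul, mul_inv_cancel₀ (ne_of_gt hx), one_smul, smul_smul, hu,
      mul_div_cancel₀ _ (ne_of_gt hx)]
  have hn1 : ‖x + lam • y‖ = aX * ‖x' + u • y‖ := by
    rw [hxx, norm_smul, Real.norm_eq_abs, abs_of_pos hx]
  have hn2 : ‖x - lam • y‖ = aX * ‖x' - u • y‖ := by
    rw [hxx', norm_smul, Real.norm_eq_abs, abs_of_pos hx]
  rw [hn1, hn2]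
  nlinarith [hx, key]
/-- Convergence of the AWCGA when `liminf t_n > 0` and `liminf (δ_n + η_n) = 0`. -/
theorem stmt_2 {X : Type} [NormedAddCommGroup X] [NormedSpace ℝ X] [CompleteSpace X]
    (q γ : ℝ) (hq1 : 1 < q) (hq2 : q ≤ 2) (hγ : 0 < γ)
    (hρ : ∀ u : ℝ, 0 ≤ u → modulusOfSmoothness X u ≤ γ * u ^ q)
    (t δ η : ℕ → ℝ) (ht : IsWeaknessSeq t) (htpos : 0 < atTop.liminf t)
    (hδ : IsPerturbationSeq δ)
    (hη : IsErrorSeq η) (hηbdd : ∃ C : ℝ, ∀ m, 1 ≤ m → η m ≤ C)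
    (hliminf : atTop.liminf (fun m => δ m + η m) = 0)
    (D : Set X) (hD : IsDictionary D)
    (f : X) (r : AWCGARealization D f t δ η) :
    Tendsto (fun m => ‖r.fs m‖) atTop (nhds 0) := by
  classical
  obtain ⟨C, hC⟩ := hηbdd
  set C' := max C 0 with hC'def
  have hC'0 : 0 ≤ C' := le_max_right _ _
  have hηC' : ∀ m, 1 ≤ m → η m ≤ C' := fun m hm => (hC m hm).trans (le_max_left _ _)
  set E := approxError f r.φ with hEdef
  have hsetne : ∀ n : ℕ,
      ((fun g => ‖f - g‖) '' (Submodule.span ℝ (r.φ '' Set.Icc 1 n) : Set X)).Nonempty :=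
    fun n => ⟨‖f - 0‖, 0, Submodule.zero_mem _, rfl⟩
  have hsetbdd : ∀ n : ℕ,
      BddBelow ((fun g => ‖f - g‖) '' (Submodule.span ℝ (r.φ '' Set.Icc 1 n) : Set X)) := by
    intro n
    refine ⟨0, fun s hs => ?_⟩
    obtain ⟨g, _, rfl⟩ := hs
    positivity
  have hE_le : ∀ n : ℕ, ∀ g ∈ Submodule.span ℝ (r.φ '' Set.Icc 1 n), E n ≤ ‖f - g‖ :=
    fun n g hg => csInf_le (hsetbdd n) ⟨g, hg, rfl⟩
  have hE_nonneg : ∀ n, 0 ≤ E n := by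
    intro n
    refine le_csInf (hsetne n) ?_
    rintro s ⟨g, _, rfl⟩
    positivity
  have hE_le_norm : ∀ n, E n ≤ ‖f‖ := by
    intro n
    have := hE_le n 0 (Submodule.zero_mem _)
    simpa using this
  have hE_mono : ∀ m n : ℕ, m ≤ n → E n ≤ E m := by
    intro m n hmn
    refine csInf_le_csInf (hsetbdd n) (hsetne m) (Set.image_mono ?_)
    exact_mod_cast SetLike.coe_subset_coe.mpr
      (Submodule.span_mono (Set.image_mono (Set.Icc_subset_Icc_right hmn)))
  have ha_le : ∀ k : ℕ, ‖r.fs (k + 1)‖ ≤ (1 + η (k + 1)) * E (k + 1) := by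
    intro k
    rw [r.fs_succ k]
    exact r.G_near k
  have hE_le_a : ∀ k : ℕ, E (k + 1) ≤ ‖r.fs (k + 1)‖ := by
    intro k
    rw [r.fs_succ k]
    exact hE_le (k + 1) _ (r.G_mem k)
  by_cases hinf : ∀ ε : ℝ, 0 < ε → ∃ n, 1 ≤ n ∧ E n < ε
  · -- the easy case : inf E = 0
    rw [Metric.tendsto_atTop]
    intro ε hε
    have hden : (0:ℝ) < 1 + C' := by linarith
    obtain ⟨n₀, hn₀1, hn₀⟩ := hinf (ε / (1 + C')) (by positivity)
    refine ⟨n₀, fun m hm => ?_⟩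
    have hm1 : 1 ≤ m := le_trans hn₀1 hm
    obtain ⟨k, rfl⟩ : ∃ k, m = k + 1 := ⟨m - 1, by omega⟩
    have h1 : ‖r.fs (k + 1)‖ ≤ (1 + C') * E (k + 1) := by
      refine (ha_le k).trans (mul_le_mul_of_nonneg_right ?_ (hE_nonneg _))
      have := hηC' (k + 1) (by omega)
      linarith
    have h2 : E (k + 1) ≤ E n₀ := hE_mono n₀ (k + 1) hm
    have : ‖r.fs (k + 1)‖ < ε := by
      calc ‖r.fs (k + 1)‖ ≤ (1 + C') * E (k + 1) := h1
        _ ≤ (1 + C') * E n₀ := mul_le_mul_of_nonneg_left h2 (by linarith)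
        _ < (1 + C') * (ε / (1 + C')) := by
            exact mul_lt_mul_of_pos_left hn₀ hden
        _ = ε := by field_simp
    simpa [Real.dist_eq, abs_of_nonneg (norm_nonneg _)] using this
  · exfalso
    push_neg at hinf
    obtain ⟨β, hβpos, hβE⟩ := hinf
    have hβE' : ∀ n, 1 ≤ n → β ≤ E n := fun n hn => (hβE n hn)
    have hfβ : β ≤ ‖f‖ := (hβE' 1 le_rfl).trans (hE_le_norm 1)
    have hfpos : 0 < ‖f‖ := lt_of_lt_of_le hβpos hfβ
    set A := (1 + C') * ‖f‖ with hAdef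
    have hfA : ‖f‖ ≤ A := by nlinarith
    have hApos : 0 < A := by positivity
    have ha_ge : ∀ k : ℕ, β ≤ ‖r.fs (k + 1)‖ :=
      fun k => (hβE' (k + 1) (by omega)).trans (hE_le_a k)
    have ha_le_A : ∀ k : ℕ, ‖r.fs (k + 1)‖ ≤ A := by
      intro k
      refine (ha_le k).trans ?_
      have h1 : 1 + η (k + 1) ≤ 1 + C' := by have := hηC' (k + 1) (by omega); linarith
      have h2 : 0 ≤ 1 + η (k + 1) := by have := (hη (k + 1) (by omega)); linarith
      exact mul_le_mul h1 (hE_le_norm _) (hE_nonneg _) (by linarith)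
    set B := ‖f‖ + A with hBdef
    have hBpos : 0 < B := by positivity
    have hG_norm : ∀ k : ℕ, ‖r.G (k + 1)‖ ≤ B := by
      intro k
      have : r.G (k + 1) = f - r.fs (k + 1) := by
        rw [r.fs_succ k]; abel
      rw [this]
      calc ‖f - r.fs (k + 1)‖ ≤ ‖f‖ + ‖r.fs (k + 1)‖ := norm_sub_le _ _
        _ ≤ ‖f‖ + A := by linarith [ha_le_A k]
    -- weakness sequence bound
    set τ := atTop.liminf t / 2 with hτdef
    have hτpos : 0 < τ := by positivity
    have hτev : ∀ᶠ n in atTop, τ < t n := by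
      refine Filter.eventually_lt_of_lt_liminf (by rw [hτdef]; linarith) ?_
      exact ⟨0, Filter.eventually_atTop.2 ⟨1, fun n hn => (ht n hn).1⟩⟩
    obtain ⟨N₁, hN₁⟩ := Filter.eventually_atTop.1 hτev
    -- density of the dictionary span
    have hcl : f ∈ closure (Submodule.span ℝ D : Set X) := by
      have h1 : f ∈ (Submodule.span ℝ D).topologicalClosure := by
        rw [hD.2.2]; exact Submodule.mem_top
      exact h1
    obtain ⟨h, hhmem, hfh⟩ := Metric.mem_closure_iff.1 hcl (β / 8) (by positivity)
    rw [dist_eq_norm] at hfh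
    obtain ⟨c, hcsupp, hcsum⟩ := Submodule.mem_span_set.mp hhmem
    set M := ∑ i ∈ c.support, |c i| with hMdef
    have hM0 : 0 ≤ M := Finset.sum_nonneg fun i _ => abs_nonneg _
    have hhne : h ≠ 0 := by
      intro h0
      rw [h0, sub_zero] at hfh
      linarith
    have hMpos : 0 < M := by
      rcases hM0.lt_or_eq with h' | h'
      · exact h'
      · exfalso
        apply hhne
        rw [← hcsum]
        rw [Finsupp.sum]
        refine Finset.sum_eq_zero fun i hi => ?_
        have : |c i| = 0 := by
          have := (Finset.sum_eq_zero_iff_of_nonneg (fun j _ => abs_nonneg (c j))).1 h'.symm i hi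
          exact this
        rw [abs_eq_zero.1 this, zero_smul]
    have hDne : D.Nonempty := by
      have hne : c.support.Nonempty := by
        by_contra hempty
        rw [Finset.not_nonempty_iff_eq_empty] at hempty
        apply hhne
        rw [← hcsum, Finsupp.sum, hempty, Finset.sum_empty]
      obtain ⟨g₀, hg₀⟩ := hne
      exact ⟨g₀, hcsupp hg₀⟩
    -- the sup functional bounds
    set S := fun m => sSup ((fun g => r.F m g) '' D) with hSdef
    have hSbdd : ∀ m, BddAbove ((fun g => r.F m g) '' D) := by
      intro m
      refine ⟨1, fun s hs => ?_⟩
      obtain ⟨g, hg, rfl⟩ := hs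
      calc r.F m g ≤ |r.F m g| := le_abs_self _
        _ = ‖r.F m g‖ := (Real.norm_eq_abs _).symm
        _ ≤ ‖r.F m‖ * ‖g‖ := ContinuousLinearMap.le_opNorm _ _
        _ ≤ 1 * 1 := mul_le_mul (r.F_norm m) (le_of_eq (hD.1 g hg)) (norm_nonneg _) (by linarith [r.F_norm m, norm_nonneg (r.F m)])
        _ = 1 := one_mul 1
    have hSle : ∀ m, ∀ g ∈ D, r.F m g ≤ S m := fun m g hg => le_csSup (hSbdd m) ⟨g, hg, rfl⟩
    have habsS : ∀ m, ∀ g ∈ D, |r.F m g| ≤ S m := by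
      intro m g hg
      refine abs_le.2 ⟨?_, hSle m g hg⟩
      have := hSle m (-g) (hD.2.1 g hg)
      rw [map_neg] at this
      linarith
    have hS0 : ∀ m, 0 ≤ S m := by
      intro m
      obtain ⟨g₀, hg₀⟩ := hDne
      exact (abs_nonneg _).trans (habsS m g₀ hg₀)
    have hFh : ∀ m, r.F m h ≤ M * S m := by
      intro m
      rw [← hcsum, Finsupp.sum, map_sum]
      calc (∑ i ∈ c.support, r.F m (c i • i))
          ≤ ∑ i ∈ c.support, |c i| * S m := by
            refine Finset.sum_le_sum fun i hi => ?_
            rw [map_smul, smul_eq_mul]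
            calc c i * r.F m i ≤ |c i * r.F m i| := le_abs_self _
              _ = |c i| * |r.F m i| := abs_mul _ _
              _ ≤ |c i| * S m := mul_le_mul_of_nonneg_left (habsS m i (hcsupp hi)) (abs_nonneg _)
        _ = M * S m := by rw [← Finset.sum_mul]
    -- F m v ≤ ‖v‖
    have hFle : ∀ m : ℕ, ∀ v : X, r.F m v ≤ ‖v‖ := by
      intro m v
      calc r.F m v ≤ |r.F m v| := le_abs_self _
        _ = ‖r.F m v‖ := (Real.norm_eq_abs _).symm
        _ ≤ ‖r.F m‖ * ‖v‖ := ContinuousLinearMap.le_opNorm _ _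
        _ ≤ 1 * ‖v‖ := mul_le_mul_of_nonneg_right (r.F_norm m) (norm_nonneg _)
        _ = ‖v‖ := one_mul _
    -- monotonicity of the smoothness bound
    have hmonoq : ∀ lam aX : ℝ, 0 ≤ lam → β ≤ aX → aX ≤ A →
        2 * γ * (lam / aX) ^ q * aX ≤ 2 * γ * (lam / β) ^ q * A := by
      intro lam aX hlam hβa haA
      have h0aX : 0 ≤ aX := le_trans hβpos.le hβa
      have h1 : (lam / aX) ^ q ≤ (lam / β) ^ q := by
        refine Real.rpow_le_rpow (div_nonneg hlam h0aX) ?_ (by linarith)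
        gcongr
      have h2 : (0:ℝ) ≤ (lam / β) ^ q := by positivity
      have key : (2 * γ) * ((lam / aX) ^ q * aX) ≤ (2 * γ) * ((lam / β) ^ q * A) :=
        mul_le_mul_of_nonneg_left (mul_le_mul h1 haA h0aX h2) (by positivity)
      linarith [key]
    -- the two step sizes
    obtain ⟨lam', hlam'pos, hlam'⟩ := aux_rpow_choice q (2 * γ * A * B / β ^ q) (β / 8) hq1
      (by positivity) (by positivity)
    set σ := β / (4 * M) with hσdef
    have hσpos : 0 < σ := by positivity
    obtain ⟨lam, hlampos, hlam⟩ := aux_rpow_choice q (2 * γ * A / β ^ q) (τ * σ / 4) hq1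
      (by positivity) (by positivity)
    set ε₀ := min (min (β / (4 * A)) (β * lam' / (8 * A * B))) (lam * τ * σ / (4 * A)) with hε₀def
    have hε₀pos : 0 < ε₀ := by
      refine lt_min (lt_min (by positivity) (by positivity)) (by positivity)
    have hε₀1 : ε₀ ≤ β / (4 * A) := le_trans (min_le_left _ _) (min_le_left _ _)
    have hε₀2 : ε₀ ≤ β * lam' / (8 * A * B) := le_trans (min_le_left _ _) (min_le_right _ _)
    have hε₀3 : ε₀ ≤ lam * τ * σ / (4 * A) := min_le_right _ _
    -- rpow algebra
    have halg : ∀ l : ℝ, 0 < l → (l / β) ^ q = l ^ (q - 1) * l / β ^ q := by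
      intro l hl
      rw [Real.div_rpow hl.le hβpos.le]
      congr 1
      have : l ^ q = l ^ (q - 1 + 1) := by norm_num
      rw [this, Real.rpow_add hl, Real.rpow_one]
    -- the key decay step
    have hkey : ∀ k : ℕ, N₁ ≤ k + 2 → δ (k + 1) + η (k + 1) < ε₀ →
        E (k + 2) ≤ E (k + 1) - lam * τ * σ / 2 := by
      intro k hN hδη
      have hδm := hδ (k + 1)
      have hηm0 : 0 ≤ η (k + 1) := hη (k + 1) (by omega)
      have hamβ : β ≤ ‖r.fs (k + 1)‖ := ha_ge k
      have hamA : ‖r.fs (k + 1)‖ ≤ A := ha_le_A k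
      have ham0 : 0 < ‖r.fs (k + 1)‖ := lt_of_lt_of_le hβpos hamβ
      have hδε : δ (k + 1) ≤ ε₀ := by linarith
      have hAδβ : A * δ (k + 1) ≤ β / 4 := by
        calc A * δ (k + 1) ≤ A * (β / (4 * A)) :=
              mul_le_mul_of_nonneg_left (hδε.trans hε₀1) hApos.le
          _ = β / 4 := by field_simp
      have haE : ‖r.fs (k + 1)‖ ≤ E (k + 1) + ‖f‖ * η (k + 1) := by
        have h1 := ha_le k
        have h2 := hE_le_norm (k + 1)
        have h3 : η (k + 1) * E (k + 1) ≤ η (k + 1) * ‖f‖ :=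
          mul_le_mul_of_nonneg_left h2 hηm0
        linarith [h1, h3]
      have hFnorm : ‖r.fs (k + 1)‖ - A * δ (k + 1) ≤ r.F (k + 1) (r.fs (k + 1)) := by
        have h1 := r.F_norming (k + 1)
        have h2 : δ (k + 1) * ‖r.fs (k + 1)‖ ≤ δ (k + 1) * A :=
          mul_le_mul_of_nonneg_left hamA hδm.1
        have h3 : (1 - δ (k + 1)) * ‖r.fs (k + 1)‖ =
            ‖r.fs (k + 1)‖ - δ (k + 1) * ‖r.fs (k + 1)‖ := by ring
        linarith [h1, h2]
      -- Step 1 : F (G) is not too negative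
      have hFG : -(β / 4) ≤ r.F (k + 1) (r.G (k + 1)) := by
        by_cases hG0 : r.G (k + 1) = 0
        · rw [hG0, map_zero]; linarith
        · have hb : 0 < ‖r.G (k + 1)‖ := norm_pos_iff.2 hG0
          set b := ‖r.G (k + 1)‖ with hbdef
          set y := -((b⁻¹ : ℝ) • r.G (k + 1)) with hydef
          have hy1 : ‖y‖ = 1 := by
            rw [hydef, norm_neg, norm_smul, norm_inv, Real.norm_eq_abs, abs_of_pos hb]
            field_simp
            exact hbdef.symm
          have hsm := aux_smooth q γ hρ (r.fs (k + 1)) y lam' hlam'pos.le ham0 hy1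
          have hsm2 : ‖r.fs (k + 1) + lam' • y‖ + ‖r.fs (k + 1) - lam' • y‖ ≤
              2 * ‖r.fs (k + 1)‖ + 2 * γ * (lam' / β) ^ q * A := by
            have := hmonoq lam' ‖r.fs (k + 1)‖ hlam'pos.le hamβ hamA
            linarith
          have hid : r.fs (k + 1) - lam' • y = f - ((1 - lam' / b) • r.G (k + 1)) := by
            rw [r.fs_succ k, hydef, smul_neg, sub_neg_eq_add, smul_smul, sub_smul, one_smul,
              div_eq_mul_inv]
            abel
          have hEm : E (k + 1) ≤ ‖r.fs (k + 1) - lam' • y‖ := by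
            rw [hid]
            exact hE_le (k + 1) _ (Submodule.smul_mem _ _ (r.G_mem k))
          have hEm' : ‖r.fs (k + 1)‖ - ‖f‖ * η (k + 1) ≤ ‖r.fs (k + 1) - lam' • y‖ := by
            linarith
          have hlin : r.F (k + 1) (r.fs (k + 1) + lam' • y) =
              r.F (k + 1) (r.fs (k + 1)) + lam' * r.F (k + 1) y := by
            rw [map_add, map_smul, smul_eq_mul]
          have hFsm := hFle (k + 1) (r.fs (k + 1) + lam' • y)
          have hfηA : ‖f‖ * η (k + 1) ≤ A * η (k + 1) :=
            mul_le_mul_of_nonneg_right hfA hηm0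
          have h1 : lam' * r.F (k + 1) y ≤
              A * (δ (k + 1) + η (k + 1)) + 2 * γ * (lam' / β) ^ q * A := by
            rw [hlin] at hFsm
            linarith [hFsm, hsm2, hEm', hFnorm, hfηA]
          have hGy : r.F (k + 1) (r.G (k + 1)) = -(b * r.F (k + 1) y) := by
            rw [hydef, map_neg, map_smul, smul_eq_mul]
            field_simp
          have hQ0 : 0 ≤ A * (δ (k + 1) + η (k + 1)) + 2 * γ * (lam' / β) ^ q * A := by
            have w1 : 0 ≤ A * (δ (k + 1) + η (k + 1)) :=
              mul_nonneg hApos.le (add_nonneg hδm.1 hηm0)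
            have w2 : 0 ≤ 2 * γ * (lam' / β) ^ q * A := by positivity
            linarith [w1, w2]
          have hbB : b ≤ B := hG_norm k
          have hbound : b * r.F (k + 1) y ≤
              (B / lam') * (A * (δ (k + 1) + η (k + 1)) + 2 * γ * (lam' / β) ^ q * A) := by
            have hFy : r.F (k + 1) y ≤
                (A * (δ (k + 1) + η (k + 1)) + 2 * γ * (lam' / β) ^ q * A) / lam' :=
              (le_div_iff₀ hlam'pos).2 (by linarith [h1])
            calc b * r.F (k + 1) y
                ≤ b * ((A * (δ (k + 1) + η (k + 1)) + 2 * γ * (lam' / β) ^ q * A) / lam') :=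
                  mul_le_mul_of_nonneg_left hFy hb.le
              _ ≤ B * ((A * (δ (k + 1) + η (k + 1)) + 2 * γ * (lam' / β) ^ q * A) / lam') := by
                  refine mul_le_mul_of_nonneg_right hbB (by positivity)
              _ = (B / lam') * (A * (δ (k + 1) + η (k + 1)) + 2 * γ * (lam' / β) ^ q * A) := by
                  ring
          have hq1' : (B / lam') * (2 * γ * (lam' / β) ^ q * A) ≤ β / 8 := by
            rw [halg lam' hlam'pos]
            have heq : (B / lam') * (2 * γ * (lam' ^ (q - 1) * lam' / β ^ q) * A) =
                (2 * γ * A * B / β ^ q) * lam' ^ (q - 1) := by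
              field_simp
            rw [heq]
            exact hlam'
          have hq2' : (B / lam') * (A * (δ (k + 1) + η (k + 1))) ≤ β / 8 := by
            have hx : δ (k + 1) + η (k + 1) ≤ β * lam' / (8 * A * B) := hδη.le.trans hε₀2
            calc (B / lam') * (A * (δ (k + 1) + η (k + 1)))
                ≤ (B / lam') * (A * (β * lam' / (8 * A * B))) := by
                  refine mul_le_mul_of_nonneg_left ?_ (by positivity)
                  exact mul_le_mul_of_nonneg_left hx hApos.le
              _ = β / 8 := by field_simp
          rw [hGy]
          have : b * r.F (k + 1) y ≤ β / 4 := by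
            calc b * r.F (k + 1) y
                ≤ (B / lam') * (A * (δ (k + 1) + η (k + 1)) + 2 * γ * (lam' / β) ^ q * A) :=
                  hbound
              _ = (B / lam') * (A * (δ (k + 1) + η (k + 1))) +
                  (B / lam') * (2 * γ * (lam' / β) ^ q * A) := by ring
              _ ≤ β / 8 + β / 8 := add_le_add hq2' hq1'
              _ = β / 4 := by ring
          linarith
      -- Step 2 : the sup over the dictionary is bounded below
      have hS : σ ≤ S (k + 1) := by
        have hFfh : r.F (k + 1) (f - h) ≤ β / 8 := (hFle _ _).trans hfh.le
        have hFf : r.F (k + 1) f =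
            r.F (k + 1) (r.fs (k + 1)) + r.F (k + 1) (r.G (k + 1)) := by
          rw [← map_add]
          congr 1
          rw [r.fs_succ k]
          abel
        have hFhval : r.F (k + 1) h = r.F (k + 1) f - r.F (k + 1) (f - h) := by
          rw [map_sub]; ring
        have hFhlow : β / 4 ≤ r.F (k + 1) h := by
          rw [hFhval, hFf]
          have := hβE' (k + 1) (by omega)
          linarith [hE_le_a k]
        have := hFh (k + 1)
        rw [hσdef, div_le_iff₀ (by positivity : (0:ℝ) < 4 * M)]
        linarith [hFh (k + 1), hFhlow]
      -- Step 3 : the decay estimate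
      have hφD : r.φ (k + 2) ∈ D := r.φ_mem (k + 1)
      have hφ1 : ‖r.φ (k + 2)‖ = 1 := hD.1 _ hφD
      have hgr := r.φ_greedy (k + 1)
      have htk : τ < t (k + 2) := hN₁ (k + 2) hN
      have hτσ : τ * σ ≤ t (k + 2) * S (k + 1) :=
        mul_le_mul htk.le hS hσpos.le (ht (k + 2) (by omega)).1
      have hsm := aux_smooth q γ hρ (r.fs (k + 1)) (r.φ (k + 2)) lam hlampos.le ham0 hφ1
      have hsm2 : ‖r.fs (k + 1) + lam • r.φ (k + 2)‖ + ‖r.fs (k + 1) - lam • r.φ (k + 2)‖ ≤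
          2 * ‖r.fs (k + 1)‖ + 2 * γ * (lam / β) ^ q * A := by
        have := hmonoq lam ‖r.fs (k + 1)‖ hlampos.le hamβ hamA
        linarith
      have hlow : ‖r.fs (k + 1)‖ - A * δ (k + 1) + lam * (τ * σ) ≤
          ‖r.fs (k + 1) + lam • r.φ (k + 2)‖ := by
        have h1 : r.F (k + 1) (r.fs (k + 1) + lam • r.φ (k + 2)) =
            r.F (k + 1) (r.fs (k + 1)) + lam * r.F (k + 1) (r.φ (k + 2)) := by
          rw [map_add, map_smul, smul_eq_mul]
        have h2 := hFle (k + 1) (r.fs (k + 1) + lam • r.φ (k + 2))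
        have h3 : lam * (τ * σ) ≤ lam * r.F (k + 1) (r.φ (k + 2)) := by
          refine mul_le_mul_of_nonneg_left (hτσ.trans hgr) hlampos.le
        linarith
      have hEnext : E (k + 2) ≤ ‖r.fs (k + 1) - lam • r.φ (k + 2)‖ := by
        have hid : r.fs (k + 1) - lam • r.φ (k + 2) =
            f - (r.G (k + 1) + lam • r.φ (k + 2)) := by
          rw [r.fs_succ k]
          abel
        rw [hid]
        refine hE_le (k + 2) _ (Submodule.add_mem _ ?_ ?_)
        · exact Submodule.span_mono
            (Set.image_mono (Set.Icc_subset_Icc_right (by omega))) (r.G_mem k)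
        · exact Submodule.smul_mem _ _
            (Submodule.subset_span ⟨k + 2, ⟨by omega, le_rfl⟩, rfl⟩)
      have hX : 2 * γ * (lam / β) ^ q * A ≤ lam * (τ * σ) / 4 := by
        rw [halg lam hlampos]
        have heq : 2 * γ * (lam ^ (q - 1) * lam / β ^ q) * A =
            ((2 * γ * A / β ^ q) * lam ^ (q - 1)) * lam := by
          field_simp
        rw [heq]
        calc (2 * γ * A / β ^ q) * lam ^ (q - 1) * lam ≤ (τ * σ / 4) * lam :=
              mul_le_mul_of_nonneg_right hlam hlampos.le
          _ = lam * (τ * σ) / 4 := by ring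
      have hAδη : A * (δ (k + 1) + η (k + 1)) ≤ lam * (τ * σ) / 4 := by
        calc A * (δ (k + 1) + η (k + 1)) ≤ A * (lam * τ * σ / (4 * A)) :=
              mul_le_mul_of_nonneg_left (hδη.le.trans hε₀3) hApos.le
          _ = lam * (τ * σ) / 4 := by field_simp
      have hfηA : ‖f‖ * η (k + 1) ≤ A * η (k + 1) :=
        mul_le_mul_of_nonneg_right hfA hηm0
      linarith [hsm2, hlow, hEnext, hX, hAδη, haE, hfηA]
    -- extraction of good indices, and the contradiction
    have hcobdd : Filter.IsCoboundedUnder (· ≥ ·) atTop (fun m => δ m + η m) :=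
      Filter.isCoboundedUnder_ge_of_eventually_le atTop (x := 1 + C')
        (Filter.eventually_atTop.2 ⟨1, fun m hm => add_le_add (hδ m).2 (hηC' m hm)⟩)
    have hfreq : ∃ᶠ m in atTop, δ m + η m < ε₀ :=
      Filter.frequently_lt_of_liminf_lt hcobdd (by rw [hliminf]; exact hε₀pos)
    set c₀ := lam * τ * σ / 2 with hc₀def
    have hc₀pos : 0 < c₀ := by positivity
    have claim : ∀ K : ℕ, ∃ n : ℕ, 1 ≤ n ∧ E n ≤ ‖f‖ - K * c₀ := by
      intro K
      induction K with
      | zero => exact ⟨1, le_rfl, by simpa using hE_le_norm 1⟩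
      | succ K ih =>
        obtain ⟨n, hn1, hnE⟩ := ih
        obtain ⟨m, hm, hmδ⟩ := Filter.frequently_atTop.1 hfreq (max n N₁ + 1)
        have hmn : n ≤ m := by
          have := le_max_left n N₁
          omega
        have hm1 : 1 ≤ m := by
          have := le_max_left n N₁
          omega
        have hmN : N₁ ≤ m + 1 := by
          have := le_max_right n N₁
          omega
        obtain ⟨k, rfl⟩ : ∃ k, m = k + 1 := ⟨m - 1, by omega⟩
        have hstep := hkey k (by omega) hmδ
        have hEm : E (k + 1) ≤ E n := hE_mono n (k + 1) (by omega)
        refine ⟨k + 2, by omega, ?_⟩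
        push_cast
        have hc : c₀ = lam * τ * σ / 2 := hc₀def
        linarith [hstep, hEm, hnE, hc]
    obtain ⟨K, hK⟩ := exists_nat_gt ((‖f‖ - β) / c₀)
    obtain ⟨n, hn1, hnE⟩ := claim K
    have hβn : β ≤ E n := hβE' n hn1
    have : ‖f‖ - β < K * c₀ := by
      have := (div_lt_iff₀ hc₀pos).1 hK
      linarith
    linarith
end
end

section
/- Let 1 < q ≤ 2, p = q/(q−1), and γ > 0. Let X be a real Banach space whose modulus of smoothness satisfies ρ(u) ≤ γ u^q for all u ≥ 0. Let (t_n)_{n≥1} be a weakness sequence with ∑_{n=1}^∞ t_n^p = ∞, let (δ_n)_{n≥0} be a perturbation sequence with ∑_{n=0}^∞ δ_n < ∞, and let (η_n)_{n≥1} be an error sequence with ∑_{n=1}^∞ η_n < ∞. Then for every dictionary D in X, every f ∈ X, and every realization of the AWCGA of f with these sequences, ‖f_n‖ → 0. -/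
open Filter

noncomputable section

variable {X : Type} [NormedAddCommGroup X] [NormedSpace ℝ X]

lemma smooth_bound (q γ : ℝ) (hq0 : 0 < q) (hγ : 0 < γ)
    (hρ : ∀ u : ℝ, 0 ≤ u → modulusOfSmoothness X u ≤ γ * u ^ q)
    (x y : X) (hx : 0 < ‖x‖) :
    ‖x + y‖ + ‖x - y‖ ≤ 2 * ‖x‖ + 2 * γ * ‖y‖ ^ q * ‖x‖ ^ (1 - q) := by
  by_cases hy : y = 0
  · subst hy
    simp only [norm_zero, Real.zero_rpow (ne_of_gt hq0), add_zero, sub_zero, mul_zero,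
      zero_mul]
    nlinarith [norm_nonneg x]
  have hyn : 0 < ‖y‖ := norm_pos_iff.2 hy
  set u : ℝ := ‖y‖ / ‖x‖ with hu_def
  have hu : 0 < u := div_pos hyn hx
  -- bddAbove of the defining set
  have hbdd : BddAbove {r : ℝ | ∃ a b : X, ‖a‖ = 1 ∧ ‖b‖ = 1 ∧
      r = (‖a + u • b‖ + ‖a - u • b‖) / 2 - 1} := by
    refine ⟨u, ?_⟩
    rintro r ⟨a, b, ha, hb, rfl⟩
    have h1 : ‖a + u • b‖ ≤ 1 + u := by
      calc ‖a + u • b‖ ≤ ‖a‖ + ‖u • b‖ := norm_add_le _ _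
        _ = 1 + u := by rw [ha, norm_smul, hb, Real.norm_eq_abs, abs_of_pos hu, mul_one]
    have h2 : ‖a - u • b‖ ≤ 1 + u := by
      calc ‖a - u • b‖ ≤ ‖a‖ + ‖u • b‖ := norm_sub_le _ _
        _ = 1 + u := by rw [ha, norm_smul, hb, Real.norm_eq_abs, abs_of_pos hu, mul_one]
    linarith
  -- membership
  set x' : X := ‖x‖⁻¹ • x with hx'
  set y' : X := ‖y‖⁻¹ • y with hy'
  have hxn' : ‖x'‖ = 1 := by
    rw [hx', norm_smul, Real.norm_eq_abs, abs_of_pos (inv_pos.2 hx), inv_mul_cancel₀ hx.ne']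
  have hyn' : ‖y'‖ = 1 := by
    rw [hy', norm_smul, Real.norm_eq_abs, abs_of_pos (inv_pos.2 hyn), inv_mul_cancel₀ hyn.ne']
  have huy : u • y' = ‖x‖⁻¹ • y := by
    rw [hy', smul_smul, hu_def]
    congr 1
    field_simp
  have hplus : ‖x' + u • y'‖ = ‖x‖⁻¹ * ‖x + y‖ := by
    rw [huy, hx', ← smul_add, norm_smul, Real.norm_eq_abs, abs_of_pos (inv_pos.2 hx)]
  have hminus : ‖x' - u • y'‖ = ‖x‖⁻¹ * ‖x - y‖ := by
    rw [huy, hx', ← smul_sub, norm_smul, Real.norm_eq_abs, abs_of_pos (inv_pos.2 hx)]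
  have hmem : (‖x‖⁻¹ * ‖x + y‖ + ‖x‖⁻¹ * ‖x - y‖) / 2 - 1 ∈ {r : ℝ | ∃ a b : X, ‖a‖ = 1 ∧ ‖b‖ = 1 ∧
      r = (‖a + u • b‖ + ‖a - u • b‖) / 2 - 1} :=
    ⟨x', y', hxn', hyn', by rw [hplus, hminus]⟩
  have hle : (‖x‖⁻¹ * ‖x + y‖ + ‖x‖⁻¹ * ‖x - y‖) / 2 - 1 ≤ γ * u ^ q :=
    le_trans (le_csSup hbdd hmem) (hρ u hu.le)
  have huq : u ^ q = ‖y‖ ^ q * (‖x‖ ^ q)⁻¹ := by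
    rw [hu_def, Real.div_rpow hyn.le hx.le, div_eq_mul_inv]
  have hxq : ‖x‖ * (‖x‖ ^ q)⁻¹ = ‖x‖ ^ (1 - q) := by
    rw [sub_eq_add_neg, Real.rpow_add hx, Real.rpow_one, Real.rpow_neg hx.le]
  have h2 : ‖x + y‖ + ‖x - y‖ ≤ 2 * ‖x‖ + 2 * γ * ‖x‖ * u ^ q := by
    have := mul_le_mul_of_nonneg_left hle (le_of_lt (mul_pos two_pos hx))
    have hxi : ‖x‖ * ‖x‖⁻¹ = 1 := mul_inv_cancel₀ hx.ne'
    nlinarith [norm_nonneg (x+y), norm_nonneg (x-y)]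
  calc ‖x + y‖ + ‖x - y‖ ≤ 2 * ‖x‖ + 2 * γ * ‖x‖ * u ^ q := h2
    _ = 2 * ‖x‖ + 2 * γ * ‖y‖ ^ q * ‖x‖ ^ (1 - q) := by
        rw [huq, ← hxq]; ring


lemma approxError_le_norm (f : X) (φ : ℕ → X) (n : ℕ) : approxError f φ n ≤ ‖f‖ := by
  have := approxError_le f φ n (Submodule.zero_mem _)
  simpa using this

set_option maxHeartbeats 1000000 in
/-- Convergence of the AWCGA when `∑ t_n^p = ∞` and `(δ_n), (η_n) ∈ ℓ₁`. -/
theorem stmt_4 {X : Type} [NormedAddCommGroup X] [NormedSpace ℝ X] [CompleteSpace X]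
    (q p γ : ℝ) (hq1 : 1 < q) (hq2 : q ≤ 2) (hp : p = q / (q - 1)) (hγ : 0 < γ)
    (hρ : ∀ u : ℝ, 0 ≤ u → modulusOfSmoothness X u ≤ γ * u ^ q)
    (t δ η : ℕ → ℝ) (ht : IsWeaknessSeq t) (hδ : IsPerturbationSeq δ)
    (hη : IsErrorSeq η)
    (htsum : ¬ Summable (fun m => t (m + 1) ^ p))
    (hδsum : Summable δ)
    (hηsum : Summable (fun m => η (m + 1)))
    (D : Set X) (hD : IsDictionary D)
    (f : X) (r : AWCGARealization D f t δ η) :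
    Tendsto (fun m => ‖r.fs m‖) atTop (nhds 0) := by
  classical
  obtain ⟨hDnorm, hDsymm, hDdense⟩ := hD
  have hq0 : (0:ℝ) < q := by linarith
  have hq1' : (0:ℝ) < q - 1 := by linarith
  -- basic structural facts
  have hfs : ∀ n, 1 ≤ n → r.fs n = f - r.G n := by
    intro n hn
    cases n with
    | zero => omega
    | succ k => exact r.fs_succ k
  have hGmem : ∀ n, 1 ≤ n → r.G n ∈ Submodule.span ℝ (r.φ '' Set.Icc 1 n) := by
    intro n hn
    cases n with
    | zero => omega
    | succ k => exact r.G_mem k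
  have hEa : ∀ n, 1 ≤ n → approxError f r.φ n ≤ ‖r.fs n‖ := by
    intro n hn
    rw [hfs n hn]
    exact approxError_le f r.φ n (hGmem n hn)
  have haE : ∀ n, 1 ≤ n → ‖r.fs n‖ ≤ (1 + η n) * approxError f r.φ n := by
    intro n hn
    cases n with
    | zero => omega
    | succ k => rw [hfs _ hn]; exact r.G_near k
  have hEanti : Antitone (fun n => approxError f r.φ n) :=
    fun m n h => approxError_antitone f r.φ h
  have hE0 : ∀ n, 0 ≤ approxError f r.φ n := approxError_nonneg f r.φ
  -- convergence of E to its infimum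
  set α : ℝ := ⨅ n, approxError f r.φ n with hα_def
  have hbdd : BddBelow (Set.range fun n => approxError f r.φ n) :=
    ⟨0, by rintro x ⟨n, rfl⟩; exact hE0 n⟩
  have hEtend : Tendsto (fun n => approxError f r.φ n) atTop (nhds α) :=
    tendsto_atTop_ciInf hEanti hbdd
  have hαE : ∀ n, α ≤ approxError f r.φ n := fun n => ciInf_le hbdd n
  have hα0 : 0 ≤ α := le_ciInf hE0
  -- η, δ tend to zero
  have hηt : Tendsto η atTop (nhds 0) :=
    (tendsto_add_atTop_iff_nat 1).1 hηsum.tendsto_atTop_zero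
  have hδt : Tendsto δ atTop (nhds 0) := hδsum.tendsto_atTop_zero
  -- the residuals converge to α as well
  have hat : Tendsto (fun n => ‖r.fs n‖) atTop (nhds α) := by
    have hupper : Tendsto (fun n => (1 + η n) * approxError f r.φ n) atTop (nhds α) := by
      have h1 : Tendsto (fun n => ((1:ℝ) + η n)) atTop (nhds (1 + 0)) :=
        (tendsto_const_nhds : Tendsto (fun _ : ℕ => (1:ℝ)) atTop (nhds 1)).add hηt
      have h2 := h1.mul hEtend
      simpa using h2
    refine tendsto_of_tendsto_of_tendsto_of_le_of_le' hEtend hupper ?_ ?_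
    · filter_upwards [eventually_ge_atTop 1] with n hn using hEa n hn
    · filter_upwards [eventually_ge_atTop 1] with n hn using haE n hn
  -- reduce to showing α = 0
  suffices hαz : α = 0 by rwa [hαz] at hat
  by_contra hαne
  have hαpos : 0 < α := lt_of_le_of_ne hα0 (Ne.symm hαne)
  -- a uniform bound on the residuals
  obtain ⟨B0, hB0⟩ := hat.bddAbove_range
  set B : ℝ := max B0 1 with hB_def
  have hB1 : (1:ℝ) ≤ B := le_max_right _ _
  have hBpos : (0:ℝ) < B := lt_of_lt_of_le one_pos hB1
  have haB : ∀ n, ‖r.fs n‖ ≤ B := fun n =>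
    le_trans (hB0 ⟨n, rfl⟩) (le_max_left _ _)
  set M : ℝ := ‖f‖ + B with hM_def
  have hMpos : 0 < M := by positivity
  have hGM : ∀ n, 1 ≤ n → ‖r.G n‖ ≤ M := by
    intro n hn
    have : r.G n = f - r.fs n := by rw [hfs n hn]; abel
    rw [this]
    calc ‖f - r.fs n‖ ≤ ‖f‖ + ‖r.fs n‖ := norm_sub_le _ _
      _ ≤ M := by rw [hM_def]; linarith [haB n]
  -- the ε-approximant from the dictionary
  have hαf : α ≤ ‖f‖ := le_trans (hαE 0) (approxError_le_norm f r.φ 0)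
  have hfc : f ∈ closure (Submodule.span ℝ D : Set X) := by
    have : f ∈ (Submodule.span ℝ D).topologicalClosure := hDdense ▸ Submodule.mem_top
    exact this
  obtain ⟨v, hvmem, hvdist⟩ := Metric.mem_closure_iff.1 hfc (α/8) (by positivity)
  have hfv : ‖f - v‖ < α/8 := by rwa [dist_eq_norm] at hvdist
  obtain ⟨cf, hcsupp, hcsum⟩ := Submodule.mem_span_set.1 hvmem
  set A : ℝ := ∑ g ∈ cf.support, |cf g| with hA_def
  have hvA : ‖v‖ ≤ A := by
    rw [← hcsum, Finsupp.sum]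
    refine le_trans (norm_sum_le _ _) ?_
    apply Finset.sum_le_sum
    intro g hg
    rw [norm_smul, hDnorm g (hcsupp hg), mul_one, Real.norm_eq_abs]
  have hApos : 0 < A := by
    have h1 : ‖f‖ - ‖v‖ ≤ ‖f - v‖ := norm_sub_norm_le _ _
    linarith
  -- bound on F_n applied to the approximant via the dictionary supremum
  have hFle : ∀ n (z : X), |r.F n z| ≤ ‖z‖ := by
    intro n z
    calc |r.F n z| = ‖r.F n z‖ := rfl
      _ ≤ ‖r.F n‖ * ‖z‖ := ContinuousLinearMap.le_opNorm _ _
      _ ≤ 1 * ‖z‖ := mul_le_mul_of_nonneg_right (r.F_norm n) (norm_nonneg _)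
      _ = ‖z‖ := one_mul _
  have hsup_bdd : ∀ n, BddAbove ((fun g => r.F n g) '' D) := by
    intro n
    refine ⟨1, ?_⟩
    rintro s ⟨g, hg, rfl⟩
    have h1 := hFle n g
    have h2 := hDnorm g hg
    have := abs_le.1 h1
    simp only
    linarith [this.2]
  have hsupv : ∀ n, r.F n v ≤ A * sSup ((fun g => r.F n g) '' D) := by
    intro n
    set s : ℝ := sSup ((fun g => r.F n g) '' D) with hs_def
    have habs : ∀ g ∈ cf.support, |r.F n g| ≤ s := by
      intro g hg
      have hgD : g ∈ D := hcsupp hg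
      have h1 : r.F n g ≤ s := le_csSup (hsup_bdd n) ⟨g, hgD, rfl⟩
      have h2 : r.F n (-g) ≤ s := le_csSup (hsup_bdd n) ⟨-g, hDsymm g hgD, rfl⟩
      rw [map_neg] at h2
      exact abs_le.2 ⟨by linarith, h1⟩
    calc r.F n v = r.F n (cf.sum fun g c => c • g) := by rw [hcsum]
      _ = ∑ g ∈ cf.support, cf g * r.F n g := by
          rw [Finsupp.sum, map_sum]
          refine Finset.sum_congr rfl ?_
          intro g _
          rw [map_smul]
          rfl
      _ ≤ ∑ g ∈ cf.support, |cf g| * s := by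
          apply Finset.sum_le_sum
          intro g hg
          calc cf g * r.F n g ≤ |cf g * r.F n g| := le_abs_self _
            _ = |cf g| * |r.F n g| := abs_mul _ _
            _ ≤ |cf g| * s := mul_le_mul_of_nonneg_left (habs g hg) (abs_nonneg _)
      _ = A * s := by rw [hA_def, Finset.sum_mul]
  -- constants
  set K : ℝ := (3*α/4) ^ ((1:ℝ) - q) with hK_def
  have hKpos : 0 < K := Real.rpow_pos_of_pos (by positivity) _
  have hMq : (0:ℝ) ≤ M ^ q := Real.rpow_nonneg hMpos.le q
  set c1 : ℝ := 2*γ*(M^q)*K + 1 with hc1_def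
  have hc1pos : 0 < c1 := by positivity
  set lam : ℝ := (α/(16*c1)) ^ ((1:ℝ)/(q-1)) with hlam_def
  have hlampos : 0 < lam := Real.rpow_pos_of_pos (by positivity) _
  have hlamq : lam ^ (q - 1) = α/(16*c1) := by
    rw [hlam_def, ← Real.rpow_mul (by positivity), one_div,
      inv_mul_cancel₀ (ne_of_gt hq1'), Real.rpow_one]
  set cA : ℝ := α/(4*A) with hcA_def
  have hcApos : 0 < cA := by positivity
  set μ : ℝ := (cA/(4*γ*K+1)) ^ ((1:ℝ)/(q-1)) with hμ_def
  have hμpos : 0 < μ := Real.rpow_pos_of_pos (by positivity) _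
  have hμq : μ ^ (q - 1) = cA/(4*γ*K+1) := by
    rw [hμ_def, ← Real.rpow_mul (by positivity), one_div,
      inv_mul_cancel₀ (ne_of_gt hq1'), Real.rpow_one]
  -- choice of the threshold N
  have hev1 : ∀ᶠ n in atTop, 3*α/4 < ‖r.fs n‖ := hat.eventually_const_lt (by linarith)
  have hev2 : ∀ᶠ n in atTop, η n + δ n < α/16*lam/B := by
    have h0 : Tendsto (fun n => η n + δ n) atTop (nhds 0) := by simpa using hηt.add hδt
    exact h0.eventually_lt_const (by positivity)
  have hev3 : ∀ᶠ n in atTop, δ n < α/(16*B) := hδt.eventually_lt_const (by positivity)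
  obtain ⟨N0, hN0⟩ := eventually_atTop.1 ((hev1.and (hev2.and hev3)).and (eventually_ge_atTop 1))
  set N : ℕ := max N0 1 with hN_def
  have hN1 : 1 ≤ N := le_max_right _ _
  have hNfacts : ∀ n, N ≤ n → (3*α/4 < ‖r.fs n‖ ∧ (η n + δ n < α/16*lam/B ∧ δ n < α/(16*B))) ∧ 1 ≤ n :=
    fun n hn => hN0 n (le_trans (le_max_left _ _) hn)
  -- Claim 1: near-annihilation of F_n on Φ_n
  have claim1 : ∀ n, N ≤ n → ∀ w : X, ‖w‖ ≤ M →
      (r.G n + lam • w) ∈ Submodule.span ℝ (r.φ '' Set.Icc 1 n) →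
      r.F n w ≤ α/8 := by
    intro n hn w hwM hwmem
    obtain ⟨⟨han, hδηn, hδn⟩, hn1⟩ := hNfacts n hn
    have hηn0 : 0 ≤ η n := hη n hn1
    have hδn0 : 0 ≤ δ n := (hδ n).1
    have hapos : 0 < ‖r.fs n‖ := by linarith
    have hsmooth := smooth_bound q γ hq0 hγ hρ (r.fs n) (lam • w) hapos
    have hEle : approxError f r.φ n ≤ ‖r.fs n - lam • w‖ := by
      have heq : r.fs n - lam • w = f - (r.G n + lam • w) := by
        rw [hfs n hn1, sub_sub]
      rw [heq]
      exact approxError_le f r.φ n hwmem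
    have hFn : (1 - δ n) * ‖r.fs n‖ ≤ r.F n (r.fs n) := r.F_norming n
    have hFsum : r.F n (r.fs n) + lam * r.F n w ≤ ‖r.fs n + lam • w‖ := by
      have h1 := (abs_le.1 (hFle n (r.fs n + lam • w))).2
      rw [map_add, map_smul] at h1
      simpa using h1
    have haEn : ‖r.fs n‖ - approxError f r.φ n ≤ η n * ‖r.fs n‖ := by
      have h1 := haE n hn1
      have h2 := hEa n hn1
      nlinarith [mul_nonneg hηn0 (sub_nonneg.2 h2)]
    have hnormy : ‖lam • w‖ = lam * ‖w‖ := by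
      rw [norm_smul, Real.norm_eq_abs, abs_of_pos hlampos]
    have hy_q : ‖lam • w‖ ^ q ≤ lam ^ q * M ^ q := by
      rw [hnormy, Real.mul_rpow hlampos.le (norm_nonneg w)]
      exact mul_le_mul_of_nonneg_left
        (Real.rpow_le_rpow (norm_nonneg w) hwM hq0.le)
        (Real.rpow_nonneg hlampos.le q)
    have hx_q : ‖r.fs n‖ ^ ((1:ℝ) - q) ≤ K := by
      rw [hK_def]
      exact Real.rpow_le_rpow_of_nonpos (by positivity) han.le (by linarith)
    have hprod : ‖lam • w‖ ^ q * ‖r.fs n‖ ^ ((1:ℝ) - q) ≤ (lam ^ q * M ^ q) * K :=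
      mul_le_mul hy_q hx_q (Real.rpow_nonneg (norm_nonneg _) _)
        (mul_nonneg (Real.rpow_nonneg hlampos.le q) hMq)
    -- combine
    have hmain : lam * r.F n w ≤ (η n + δ n) * ‖r.fs n‖ + 2*γ*((lam^q * M^q)*K) := by
      have hγP : 2*γ*‖lam • w‖^q*‖r.fs n‖^((1:ℝ)-q) ≤ 2*γ*((lam^q * M^q)*K) := by
        have h := mul_le_mul_of_nonneg_left hprod (show (0:ℝ) ≤ 2*γ by linarith)
        linarith [h]
      have hexp : (1 - δ n) * ‖r.fs n‖ = ‖r.fs n‖ - δ n * ‖r.fs n‖ := by ring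
      rw [hexp] at hFn
      linarith [hsmooth, hEle, hFn, hFsum, haEn, hγP]
    -- bound the two error terms by (α/16) * lam each
    have hterm1 : (η n + δ n) * ‖r.fs n‖ ≤ α/16 * lam := by
      have h1 : (η n + δ n) * ‖r.fs n‖ ≤ (α/16*lam/B) * B := by
        apply mul_le_mul hδηn.le (haB n) (norm_nonneg _)
        positivity
      calc (η n + δ n) * ‖r.fs n‖ ≤ (α/16*lam/B) * B := h1
        _ = α/16 * lam := by field_simp
    have hterm2 : 2*γ*((lam^q * M^q)*K) ≤ α/16 * lam := by
      have hsplit : lam ^ q = lam * lam ^ (q-1) := by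
        rw [show q = 1 + (q-1) by ring, Real.rpow_add hlampos, Real.rpow_one]
        ring_nf
      rw [hsplit, hlamq]
      have h2 : 2*γ*(M^q)*K ≤ c1 := by rw [hc1_def]; linarith
      have h3 : (0:ℝ) < α/(16*c1) := by positivity
      have h4 : (2*γ*(M^q)*K) * (α/(16*c1)) ≤ c1 * (α/(16*c1)) :=
        mul_le_mul_of_nonneg_right h2 h3.le
      have h5 : c1 * (α/(16*c1)) = α/16 := by field_simp
      calc 2*γ*((lam * (α/(16*c1)) * M^q)*K) = lam * ((2*γ*(M^q)*K) * (α/(16*c1))) := by ring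
        _ ≤ lam * (α/16) := mul_le_mul_of_nonneg_left (by rw [← h5] at *; linarith) hlampos.le
        _ = α/16 * lam := by ring
    have : lam * r.F n w ≤ lam * (α/8) := by linarith
    exact le_of_mul_le_mul_left this hlampos
  -- |F_n (G_n)| control from below
  have hFG : ∀ n, N ≤ n → -(α/8) ≤ r.F n (r.G n) := by
    intro n hn
    have hn1 : 1 ≤ n := (hNfacts n hn).2
    have hG := hGmem n hn1
    have hm : (r.G n + lam • (-r.G n)) ∈ Submodule.span ℝ (r.φ '' Set.Icc 1 n) := by
      have heq : r.G n + lam • (-r.G n) = r.G n - lam • r.G n := by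
        rw [smul_neg]; abel
      rw [heq]
      exact Submodule.sub_mem _ hG (Submodule.smul_mem _ _ hG)
    have h1 := claim1 n hn (-r.G n) (by rw [norm_neg]; exact hGM n hn1) hm
    rw [map_neg] at h1
    linarith
  -- Claim 2: lower bound on the dictionary supremum
  have claim2 : ∀ n, N ≤ n → cA ≤ sSup ((fun g => r.F n g) '' D) := by
    intro n hn
    obtain ⟨⟨han, hδηn, hδn⟩, hn1⟩ := hNfacts n hn
    have hδn0 : 0 ≤ δ n := (hδ n).1
    have hvdec : r.fs n + r.G n + (v - f) = v := by rw [hfs n hn1]; abel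
    have h2 : r.F n (r.fs n + r.G n + (v - f)) =
        r.F n (r.fs n) + r.F n (r.G n) + r.F n (v - f) := by
      rw [map_add, map_add]
    rw [hvdec] at h2
    have h3 : -(α/8) ≤ r.F n (v - f) := by
      have ha := (abs_le.1 (hFle n (v - f))).1
      have hnv : ‖v - f‖ = ‖f - v‖ := norm_sub_rev _ _
      rw [hnv] at ha
      linarith
    have hFn : (1 - δ n) * ‖r.fs n‖ ≤ r.F n (r.fs n) := r.F_norming n
    have hδB : δ n * ‖r.fs n‖ ≤ α/16 := by
      have h4 : δ n * ‖r.fs n‖ ≤ δ n * B := mul_le_mul_of_nonneg_left (haB n) hδn0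
      have h5 : δ n * B ≤ (α/(16*B)) * B := mul_le_mul_of_nonneg_right hδn.le hBpos.le
      have h6 : (α/(16*B)) * B = α/16 := by field_simp
      linarith
    have hFG' := hFG n hn
    have hFv : 7*α/16 ≤ r.F n v := by
      have hexp : (1 - δ n) * ‖r.fs n‖ = ‖r.fs n‖ - δ n * ‖r.fs n‖ := by ring
      rw [hexp] at hFn
      rw [h2]
      linarith
    have hAs := hsupv n
    rw [hcA_def, div_le_iff₀ (by positivity : (0:ℝ) < 4*A)]
    nlinarith
  -- Claim 3: the one-step recursion
  have claim3 : ∀ n, N ≤ n → approxError f r.φ (n+1) ≤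
      approxError f r.φ n + (η n + δ n) * B - cA/2 * μ * t (n+1) ^ p := by
    intro n hn
    obtain ⟨⟨han, hδηn, hδn⟩, hn1⟩ := hNfacts n hn
    have hηn0 : 0 ≤ η n := hη n hn1
    have hδn0 : 0 ≤ δ n := (hδ n).1
    have hapos : 0 < ‖r.fs n‖ := by linarith
    have hτ0 : 0 ≤ t (n+1) := (ht (n+1) (by omega)).1
    set lb : ℝ := μ * t (n+1) ^ ((1:ℝ)/(q-1)) with hlb_def
    have hlb0 : 0 ≤ lb := mul_nonneg hμpos.le (Real.rpow_nonneg hτ0 _)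
    have hφn : ‖r.φ (n+1)‖ = 1 := hDnorm _ (r.φ_mem n)
    have hmem : r.G n + lb • r.φ (n+1) ∈ Submodule.span ℝ (r.φ '' Set.Icc 1 (n+1)) := by
      apply Submodule.add_mem
      · exact Submodule.span_mono
          (Set.image_mono (Set.Icc_subset_Icc_right (Nat.le_succ n))) (hGmem n hn1)
      · exact Submodule.smul_mem _ _
          (Submodule.subset_span ⟨n+1, Set.mem_Icc.2 ⟨by omega, le_refl _⟩, rfl⟩)
    have hE1 : approxError f r.φ (n+1) ≤ ‖r.fs n - lb • r.φ (n+1)‖ := by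
      have heq : r.fs n - lb • r.φ (n+1) = f - (r.G n + lb • r.φ (n+1)) := by
        rw [hfs n hn1, sub_sub]
      rw [heq]
      exact approxError_le f r.φ (n+1) hmem
    have hsmooth := smooth_bound q γ hq0 hγ hρ (r.fs n) (lb • r.φ (n+1)) hapos
    have hnormy : ‖lb • r.φ (n+1)‖ = lb := by
      rw [norm_smul, hφn, mul_one, Real.norm_eq_abs, abs_of_nonneg hlb0]
    have hFsum : r.F n (r.fs n) + lb * r.F n (r.φ (n+1)) ≤ ‖r.fs n + lb • r.φ (n+1)‖ := by
      have h1 := (abs_le.1 (hFle n (r.fs n + lb • r.φ (n+1)))).2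
      rw [map_add, map_smul] at h1
      simpa using h1
    have hFn : (1 - δ n) * ‖r.fs n‖ ≤ r.F n (r.fs n) := r.F_norming n
    have haEn : ‖r.fs n‖ - approxError f r.φ n ≤ η n * ‖r.fs n‖ := by
      have h1 := haE n hn1
      have h2 := hEa n hn1
      nlinarith [mul_nonneg hηn0 (sub_nonneg.2 h2)]
    -- rpow identities
    have hτp0 : 0 ≤ t (n+1) ^ p := Real.rpow_nonneg hτ0 p
    have hlbq : lb ^ q = μ ^ q * t (n+1) ^ p := by
      rw [hlb_def, Real.mul_rpow hμpos.le (Real.rpow_nonneg hτ0 _),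
        ← Real.rpow_mul hτ0, hp,
        show (1:ℝ)/(q-1) * q = q/(q-1) from one_div_mul_eq_div _ _]
    have hexp2 : p = (1:ℝ)/(q-1) + 1 := by
      rw [hp]; field_simp; ring
    have hpow1 : t (n+1) ^ p = t (n+1) ^ ((1:ℝ)/(q-1)) * t (n+1) := by
      have hne : (1:ℝ)/(q-1) + 1 ≠ 0 := by
        have : (0:ℝ) < 1/(q-1) := one_div_pos.2 hq1'
        linarith
      rw [hexp2, Real.rpow_add' hτ0 hne, Real.rpow_one]
    have hlbτ : lb * t (n+1) = μ * t (n+1) ^ p := by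
      rw [hlb_def, mul_assoc, ← hpow1]
    have hμsplit : μ ^ q = μ * μ ^ (q-1) := by
      rw [show q = 1 + (q-1) by ring, Real.rpow_add hμpos, Real.rpow_one]
      ring_nf
    have hfac : 2*γ*(μ^q)*K ≤ cA/2 * μ := by
      have h0 : (0:ℝ) < 4*γ*K+1 := by positivity
      have hr : (2*γ*K)/(4*γ*K+1) ≤ 1/2 := by
        rw [div_le_iff₀ h0]; linarith
      have heq : 2*γ*(μ^q)*K = (μ*cA)*((2*γ*K)/(4*γ*K+1)) := by
        rw [hμsplit, hμq]; ring
      calc 2*γ*(μ^q)*K = (μ*cA)*((2*γ*K)/(4*γ*K+1)) := heq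
        _ ≤ (μ*cA)*(1/2) := by
            apply mul_le_mul_of_nonneg_left hr
            positivity
        _ = cA/2*μ := by ring
    have hterm : 2*γ*‖lb • r.φ (n+1)‖^q*‖r.fs n‖^((1:ℝ)-q) ≤ cA/2*μ*t (n+1)^p := by
      have hx_q : ‖r.fs n‖^((1:ℝ)-q) ≤ K := by
        rw [hK_def]
        exact Real.rpow_le_rpow_of_nonpos (by positivity) han.le (by linarith)
      rw [hnormy]
      have h20 : (0:ℝ) ≤ 2*γ*lb^q :=
        mul_nonneg (by positivity) (Real.rpow_nonneg hlb0 q)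
      have h1 : 2*γ*lb^q*‖r.fs n‖^((1:ℝ)-q) ≤ 2*γ*lb^q*K := by
        have := mul_le_mul_of_nonneg_left hx_q h20
        linarith [this]
      have h2 : 2*γ*lb^q*K = (2*γ*(μ^q)*K)*(t (n+1)^p) := by rw [hlbq]; ring
      have h3 : (2*γ*(μ^q)*K)*(t (n+1)^p) ≤ (cA/2*μ)*(t (n+1)^p) :=
        mul_le_mul_of_nonneg_right hfac hτp0
      linarith [h1, h2, h3]
    have hlow : (1 - δ n)*‖r.fs n‖ + cA*(μ*t (n+1)^p) ≤ ‖r.fs n + lb • r.φ (n+1)‖ := by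
      have hgreedy := r.φ_greedy n
      have hsc := claim2 n hn
      have hτcA : t (n+1)*cA ≤ r.F n (r.φ (n+1)) :=
        le_trans (mul_le_mul_of_nonneg_left hsc hτ0) hgreedy
      have h4 : lb*(t (n+1)*cA) ≤ lb * r.F n (r.φ (n+1)) :=
        mul_le_mul_of_nonneg_left hτcA hlb0
      have h5 : lb*(t (n+1)*cA) = cA*(μ*t (n+1)^p) := by
        rw [show lb*(t (n+1)*cA) = (lb*t (n+1))*cA by ring, hlbτ]; ring
      linarith [hFsum, hFn]
    have hab : (η n + δ n)*‖r.fs n‖ ≤ (η n + δ n)*B :=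
      mul_le_mul_of_nonneg_left (haB n) (add_nonneg hηn0 hδn0)
    linarith [hE1, hsmooth, hlow, hterm, haEn, hab]
  -- summability of the error tail
  have hηshift : Summable (fun i => η (N + i)) := by
    have h2 := (summable_nat_add_iff (N-1)).2 hηsum
    exact h2.congr (fun i => by congr 1; omega)
  have hδshift : Summable (fun i => δ (N + i)) := by
    have h2 := (summable_nat_add_iff N).2 hδsum
    exact h2.congr (fun i => by congr 1; omega)
  have hTsummable : Summable (fun i => η (N + i) + δ (N + i)) := hηshift.add hδshift
  set T : ℝ := ∑' i, (η (N + i) + δ (N + i)) with hT_def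
  have hTnn : ∀ i, 0 ≤ η (N + i) + δ (N + i) :=
    fun i => add_nonneg (hη _ (by omega)) (hδ _).1
  have hpart : ∀ m, ∑ i ∈ Finset.range m, (η (N + i) + δ (N + i)) ≤ T :=
    fun m => hTsummable.sum_le_tsum _ (fun i _ => hTnn i)
  -- divergence of the weakness sums
  have httail : ¬ Summable (fun i => t (N + i + 1) ^ p) := by
    intro hs
    apply htsum
    refine (summable_nat_add_iff N).1 ?_
    exact hs.congr (fun i => by congr 2; omega)
  have htp0 : ∀ i, 0 ≤ t (N + i + 1) ^ p :=
    fun i => Real.rpow_nonneg (ht _ (by omega)).1 p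
  have hdiv : Tendsto (fun m => ∑ i ∈ Finset.range m, t (N + i + 1) ^ p) atTop atTop :=
    (not_summable_iff_tendsto_nat_atTop_of_nonneg htp0).1 httail
  -- iterate the recursion
  have hrec : ∀ m, approxError f r.φ (N + m) ≤ approxError f r.φ N +
      (∑ i ∈ Finset.range m, (η (N + i) + δ (N + i))) * B -
      cA/2 * μ * ∑ i ∈ Finset.range m, t (N + i + 1) ^ p := by
    intro m
    induction m with
    | zero => simp
    | succ m ih =>
      have hc := claim3 (N + m) (Nat.le_add_right _ _)
      rw [Finset.sum_range_succ, Finset.sum_range_succ,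
        show N + (m + 1) = (N + m) + 1 by omega]
      linarith [hc, ih]
  -- derive the contradiction
  have hcbpos : (0:ℝ) < cA/2*μ := by positivity
  obtain ⟨m, hm⟩ := (hdiv.eventually_ge_atTop
    ((approxError f r.φ N + T*B + 1)/(cA/2*μ))).exists
  have h1 : approxError f r.φ N + T*B + 1 ≤
      cA/2*μ * ∑ i ∈ Finset.range m, t (N + i + 1) ^ p := by
    rw [div_le_iff₀ hcbpos] at hm
    linarith
  have h2 := hrec m
  have h3 : (∑ i ∈ Finset.range m, (η (N + i) + δ (N + i))) * B ≤ T * B :=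
    mul_le_mul_of_nonneg_right (hpart m) hBpos.le
  have h4 := hE0 (N + m)
  linarith
end
end
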